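/- arXiv:2009.00654 — 7 statements merged into one kernel-verified Lean document; each statement's English description precedes it below -/
import Mathlib

section
/- The Diophantine equation k^2 = 4t^4 - 5t^2s^2 + s^4 has no solutions in positive integers t, s, k. -/
private lemma isCoprime_of_forall_prime {A B : ℤ}
    (h : ∀ p : ℤ, Prime p → p ∣ A → p ∣ B → False) : IsCoprime A B := by
  rw [Int.isCoprime_iff_gcd_eq_one]
  by_contra hg
  rcases Nat.exists_prime_and_dvd hg with ⟨p, hp, hpd⟩
  have h1 : (p : ℤ) ∣ A := (Int.natCast_dvd_natCast.mpr hpd).trans (Int.gcd_dvd_left _ _)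
  have h2 : (p : ℤ) ∣ B := (Int.natCast_dvd_natCast.mpr hpd).trans (Int.gcd_dvd_right _ _)
  exact h p (Nat.prime_iff_prime_int.mp hp) h1 h2

private lemma sq_split_pos {A B c : ℤ} (hA : 0 < A) (hcop : IsCoprime A B)
    (h : A * B = c ^ 2) : ∃ e : ℤ, 0 < e ∧ A = e ^ 2 := by
  obtain ⟨a0, ha0⟩ := Int.sq_of_isCoprime hcop h
  rcases ha0 with ha0 | ha0
  · refine ⟨|a0|, ?_, by rw [sq_abs]; exact ha0⟩
    exact abs_pos.mpr (by rintro rfl; simp at ha0; omega)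
  · exfalso; nlinarith [sq_nonneg a0]

private lemma pow4_split {A B c : ℤ} (hA : 0 < A) (hB : 0 < B) (hcop : IsCoprime A B)
    (h : A * B = c ^ 4) : ∃ e f : ℤ, 0 < e ∧ 0 < f ∧ A = e ^ 4 ∧ B = f ^ 4 := by
  have h2 : A * B = (c ^ 2) ^ 2 := by rw [← pow_mul]; exact h
  obtain ⟨a1, ha1p, ha1⟩ := sq_split_pos hA hcop h2
  obtain ⟨b1, hb1p, hb1⟩ := sq_split_pos hB hcop.symm (by rw [mul_comm]; exact h2)
  have hcop1 : IsCoprime a1 b1 := by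
    have h3 : IsCoprime (a1 ^ 2) (b1 ^ 2) := by rw [← ha1, ← hb1]; exact hcop
    exact (h3.of_isCoprime_of_dvd_left (dvd_pow_self a1 two_ne_zero)).of_isCoprime_of_dvd_right
      (dvd_pow_self b1 two_ne_zero)
  have hab : a1 * b1 = c ^ 2 := by
    have hsq : (a1 * b1) ^ 2 = (c ^ 2) ^ 2 := by rw [← h2, ha1, hb1]; ring
    have hfac : (a1 * b1 - c ^ 2) * (a1 * b1 + c ^ 2) = 0 := by linear_combination hsq
    rcases mul_eq_zero.mp hfac with h' | h'
    · linarith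
    · exfalso; nlinarith [mul_pos ha1p hb1p, sq_nonneg c]
  obtain ⟨e, hep, he⟩ := sq_split_pos ha1p hcop1 hab
  obtain ⟨f, hfp, hf⟩ := sq_split_pos hb1p hcop1.symm (by rw [mul_comm]; exact hab)
  exact ⟨e, f, hep, hfp, by rw [ha1, he]; ring, by rw [hb1, hf]; ring⟩

private lemma not_dvd_two {p z : ℤ} (hp : Prime p) (hpz : p ∣ z) (hz : Odd z) :
    ¬ p ∣ 2 := by
  intro h2
  have hn : p.natAbs ∣ 2 := by
    have := Int.natAbs_dvd_natAbs.mpr h2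
    simpa using this
  rcases (Nat.dvd_prime Nat.prime_two).mp hn with h1 | h1
  · exact hp.not_unit (Int.isUnit_iff_natAbs_eq.mpr h1)
  · have h2p : (2 : ℤ) ∣ p := by
      rcases Int.natAbs_eq p with h | h
      · rw [h, h1]; norm_num
      · rw [h, h1]; norm_num
    have h2z : (2 : ℤ) ∣ z := h2p.trans hpz
    have : Even z := ⟨z / 2, by omega⟩
    exact (Int.not_odd_iff_even.mpr this) hz

private lemma prime_dvd_three {p : ℤ} (hp : Prime p) (h3 : p ∣ 3) : (3 : ℤ) ∣ p := by
  have hn : p.natAbs ∣ 3 := by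
    have := Int.natAbs_dvd_natAbs.mpr h3
    simpa using this
  rcases (Nat.dvd_prime Nat.prime_three).mp hn with h1 | h1
  · exact absurd (Int.isUnit_iff_natAbs_eq.mpr h1) hp.not_unit
  · rcases Int.natAbs_eq p with h | h
    · rw [h, h1]; norm_num
    · rw [h, h1]; norm_num

private lemma dvd_of_dvd_four_mul_sq {p a : ℤ} (hp : Prime p) (hp2 : ¬ p ∣ 2)
    (h : p ∣ 4 * a ^ 2) : p ∣ a := by
  rcases hp.dvd_mul.mp h with h' | h'
  · exfalso
    apply hp2
    apply hp.dvd_of_dvd_pow (n := 2)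
    rw [show (2:ℤ) ^ 2 = 4 by norm_num]
    exact h'
  · exact hp.dvd_of_dvd_pow h'

private lemma zmod8_sumsq : ∀ i j b : ZMod 8, (2*i+1) ^ 2 + (2*j+1) ^ 2 ≠ 4 * b ^ 2 := by
  decide

set_option maxHeartbeats 1000000 in
private lemma key {x Y z : ℤ} (hx : 0 < x) (hY : 0 < Y) (hz : 0 < z)
    (hxodd : Odd x) (hcop : IsCoprime x (2 * Y))
    (heq : x ^ 4 + x ^ 2 * (2*Y) ^ 2 + (2*Y) ^ 4 = z ^ 2) :
    ∃ e f b : ℤ, 0 < e ∧ 0 < f ∧ 0 < b ∧ IsCoprime e f ∧ b < z ∧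
      e ^ 4 + e ^ 2 * f ^ 2 + f ^ 4 = b ^ 2 := by
  have heq' : z ^ 2 = (x ^ 2 + 2 * Y ^ 2) ^ 2 + 12 * Y ^ 4 := by linear_combination -heq
  have hXpos : 0 < x ^ 2 + 2 * Y ^ 2 := by positivity
  have hXz : x ^ 2 + 2 * Y ^ 2 < z := by nlinarith [pow_pos hY 4]
  have hzodd : Odd z := by
    have h1 : Odd (z ^ 2) := by
      rw [← heq]
      exact ((hxodd.pow).add_even ⟨2 * x ^ 2 * Y ^ 2, by ring⟩).add_even ⟨8 * Y ^ 4, by ring⟩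
    rcases Int.odd_pow.mp h1 with h | h
    · exact h
    · norm_num at h
  have hXodd : Odd (x ^ 2 + 2 * Y ^ 2) := (hxodd.pow).add_even ⟨Y ^ 2, by ring⟩
  obtain ⟨P, hP⟩ := hzodd.sub_odd hXodd
  have t1 : 2 * P = z - (x ^ 2 + 2 * Y ^ 2) := by linarith
  obtain ⟨Q, t2⟩ : ∃ Q : ℤ, 2 * Q = z + (x ^ 2 + 2 * Y ^ 2) :=
    ⟨P + (x ^ 2 + 2 * Y ^ 2), by linarith⟩
  have hPQ : P * Q = 3 * Y ^ 4 := by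
    have h4 : (4 : ℤ) * (P * Q) = 4 * (3 * Y ^ 4) := by
      have h5 : (2 * P) * (2 * Q) = 12 * Y ^ 4 := by rw [t1, t2]; linear_combination heq'
      linear_combination h5
    exact mul_left_cancel₀ (by norm_num) h4
  have hPpos : 0 < P := by linarith
  have hQpos : 0 < Q := by linarith
  have hPQz : P + Q = z := by linarith
  have hQPX : Q - P = x ^ 2 + 2 * Y ^ 2 := by linarith
  have hcopPQ : IsCoprime P Q := by
    apply isCoprime_of_forall_prime
    intro p hp h1 h2
    have hpz : p ∣ z := hPQz ▸ dvd_add h1 h2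
    have hpX : p ∣ x ^ 2 + 2 * Y ^ 2 := hQPX ▸ dvd_sub h2 h1
    have hp2 : ¬ p ∣ 2 := not_dvd_two hp hpz hzodd
    have hpPQ : p ∣ 3 * Y ^ 4 := hPQ ▸ h1.mul_right Q
    have hpY : p ∣ Y := by
      rcases hp.dvd_mul.mp hpPQ with h3 | hY4
      · exfalso
        have h3p := prime_dvd_three hp h3
        obtain ⟨P1, hP1⟩ := h3p.trans h1
        obtain ⟨Q1, hQ1⟩ := h3p.trans h2
        have h3Y : (3 : ℤ) ∣ Y := by
          apply Int.prime_three.dvd_of_dvd_pow (n := 4)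
          have h9 : 3 * (3 * (P1 * Q1)) = 3 * Y ^ 4 := by rw [← hPQ, hP1, hQ1]; ring
          exact ⟨P1 * Q1, (mul_left_cancel₀ (show (3:ℤ) ≠ 0 by norm_num) h9).symm⟩
        have h3x : (3 : ℤ) ∣ x := by
          apply Int.prime_three.dvd_of_dvd_pow (n := 2)
          have h2Y2 : (3 : ℤ) ∣ 2 * Y ^ 2 := (dvd_pow h3Y two_ne_zero).mul_left 2
          have h5 := dvd_sub (h3p.trans hpX) h2Y2
          rwa [show x ^ 2 + 2 * Y ^ 2 - 2 * Y ^ 2 = x ^ 2 by ring] at h5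
        exact Int.prime_three.not_unit (hcop.isUnit_of_dvd' h3x (h3Y.mul_left 2))
      · exact hp.dvd_of_dvd_pow hY4
    have hpx : p ∣ x := by
      apply hp.dvd_of_dvd_pow (n := 2)
      have h2Y2 : p ∣ 2 * Y ^ 2 := (dvd_pow hpY two_ne_zero).mul_left 2
      have h5 := dvd_sub hpX h2Y2
      rwa [show x ^ 2 + 2 * Y ^ 2 - 2 * Y ^ 2 = x ^ 2 by ring] at h5
    exact hp.not_unit (hcop.isUnit_of_dvd' hpx (hpY.mul_left 2))
  have h3PQ : (3 : ℤ) ∣ P ∨ (3 : ℤ) ∣ Q := by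
    refine Int.prime_three.dvd_mul.mp ?_
    rw [hPQ]; exact dvd_mul_right 3 _
  rcases h3PQ with h3P | h3Q
  · -- descent case : P = 3 a⁴, Q = b⁴
    obtain ⟨P1, hP1⟩ := h3P
    have hP1pos : 0 < P1 := by nlinarith
    have hPQ1 : P1 * Q = Y ^ 4 := by
      have h9 : 3 * (P1 * Q) = 3 * Y ^ 4 := by rw [← hPQ, hP1]; ring
      exact mul_left_cancel₀ (show (3:ℤ) ≠ 0 by norm_num) h9
    have hcop1 : IsCoprime P1 Q :=
      hcopPQ.of_isCoprime_of_dvd_left ⟨3, by rw [hP1]; ring⟩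
    obtain ⟨a, b, hap, hbp, ha4, hb4⟩ := pow4_split hP1pos hQpos hcop1 hPQ1
    have hYab : Y ^ 2 = a ^ 2 * b ^ 2 := by
      have hY4 : Y ^ 4 = a ^ 4 * b ^ 4 := by rw [← hPQ1, ha4, hb4]
      have hfac : (Y ^ 2 - a ^ 2 * b ^ 2) * (Y ^ 2 + a ^ 2 * b ^ 2) = 0 := by
        linear_combination hY4
      rcases mul_eq_zero.mp hfac with h' | h'
      · linarith
      · exfalso; nlinarith [pow_pos hap 2, pow_pos hbp 2, pow_pos hY 2]
    have hsub : b ^ 4 - 3 * a ^ 4 = x ^ 2 + 2 * Y ^ 2 := by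
      rw [← hb4, ← ha4, ← hP1]; exact hQPX
    have hx2 : (b ^ 2 + a ^ 2) * (b ^ 2 - 3 * a ^ 2) = x ^ 2 := by
      linear_combination hsub + 2 * hYab
    have hfc : IsCoprime (b ^ 2 + a ^ 2) (b ^ 2 - 3 * a ^ 2) := by
      apply isCoprime_of_forall_prime
      intro p hp h1 h2
      have hpx : p ∣ x := by
        apply hp.dvd_of_dvd_pow (n := 2)
        rw [← hx2]; exact h1.mul_right _
      have hp2 : ¬ p ∣ 2 := not_dvd_two hp hpx hxodd
      have hpa : p ∣ a := by
        apply dvd_of_dvd_four_mul_sq hp hp2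
        have h5 := dvd_sub h1 h2
        rwa [show b ^ 2 + a ^ 2 - (b ^ 2 - 3 * a ^ 2) = 4 * a ^ 2 by ring] at h5
      have hpY : p ∣ Y := by
        apply hp.dvd_of_dvd_pow (n := 2)
        rw [hYab]; exact (dvd_pow hpa two_ne_zero).mul_right _
      exact hp.not_unit (hcop.isUnit_of_dvd' hpx (hpY.mul_left 2))
    have hSpos : 0 < b ^ 2 + a ^ 2 := by positivity
    have hprod_pos : 0 < b ^ 2 - 3 * a ^ 2 := by
      by_contra hD
      push_neg at hD
      nlinarith [pow_pos hx 2, hSpos]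
    obtain ⟨c, hcp, hc⟩ := sq_split_pos (by positivity) hfc hx2
    obtain ⟨d, hdp, hd⟩ := sq_split_pos hprod_pos hfc.symm (by rw [mul_comm]; exact hx2)
    have hcd_odd : Odd c ∧ Odd d := by
      have h1 : (c * d) ^ 2 = x ^ 2 := by rw [mul_pow, ← hc, ← hd]; exact hx2
      have h2 : Odd ((c * d) ^ 2) := by rw [h1]; exact hxodd.pow
      have h3 : Odd (c * d) := by
        rcases Int.odd_pow.mp h2 with h | h
        · exact h
        · norm_num at h
      exact Int.odd_mul.mp h3
    obtain ⟨hcodd, hdodd⟩ := hcd_odd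
    have hcd4 : c ^ 2 - d ^ 2 = 4 * a ^ 2 := by linear_combination hd - hc
    have hdc : d < c := by nlinarith [pow_pos hap 2]
    obtain ⟨u, hu⟩ := hcodd.sub_odd hdodd
    obtain ⟨v, hv⟩ : ∃ v : ℤ, c + d = v + v := ⟨u + d, by linarith⟩
    have huv : u * v = a ^ 2 := by
      have h4 : (4:ℤ) * (u * v) = 4 * a ^ 2 := by
        have h5 : (u + u) * (v + v) = c ^ 2 - d ^ 2 := by rw [← hu, ← hv]; ring
        linear_combination h5 + hcd4
      exact mul_left_cancel₀ (by norm_num) h4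
    have hupos : 0 < u := by linarith
    have hvpos : 0 < v := by linarith
    have hcopuv : IsCoprime u v := by
      apply isCoprime_of_forall_prime
      intro p hp h1 h2
      have hpc : p ∣ c := by
        have h5 := dvd_add h1 h2
        rwa [show u + v = c by linarith] at h5
      have hpd : p ∣ d := by
        have h5 := dvd_sub h2 h1
        rwa [show v - u = d by linarith] at h5
      have hpx : p ∣ x := by
        apply hp.dvd_of_dvd_pow (n := 2)
        rw [← hx2, hc, hd]
        exact (dvd_pow hpc two_ne_zero).mul_right _
      have hp2 : ¬ p ∣ 2 := not_dvd_two hp hpx hxodd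
      have hpa : p ∣ a := by
        apply hp.dvd_of_dvd_pow (n := 2)
        rw [← huv]; exact h1.mul_right v
      have hpY : p ∣ Y := by
        apply hp.dvd_of_dvd_pow (n := 2)
        rw [hYab]; exact (dvd_pow hpa two_ne_zero).mul_right _
      exact hp.not_unit (hcop.isUnit_of_dvd' hpx (hpY.mul_left 2))
    obtain ⟨e, hep, he⟩ := sq_split_pos hupos hcopuv huv
    obtain ⟨f, hfp, hf⟩ := sq_split_pos hvpos hcopuv.symm (by rw [mul_comm]; exact huv)
    have hcopef : IsCoprime e f := by
      have h1 : IsCoprime (e ^ 2) (f ^ 2) := by rw [← he, ← hf]; exact hcopuv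
      exact (h1.of_isCoprime_of_dvd_left (dvd_pow_self e two_ne_zero)).of_isCoprime_of_dvd_right
        (dvd_pow_self f two_ne_zero)
    have hcef : c = e ^ 2 + f ^ 2 := by rw [← he, ← hf]; linarith
    have haef : a ^ 2 = e ^ 2 * f ^ 2 := by rw [← he, ← hf, huv]
    have hfin : e ^ 4 + e ^ 2 * f ^ 2 + f ^ 4 = b ^ 2 := by
      have hb2 : b ^ 2 = c ^ 2 - a ^ 2 := by linarith [hc]
      rw [hb2, hcef, haef]; ring
    have hbz : b < z := by
      have hQz : Q < z := by linarith
      have hb4z : b ^ 4 < z := by rwa [← hb4]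
      have hb1 : b ≤ b ^ 4 := le_self_pow₀ (by linarith) (by norm_num)
      linarith
    exact ⟨e, f, b, hep, hfp, hbp, hcopef, hbz, hfin⟩
  · -- dead case : P = a⁴, Q = 3 b⁴  → mod 8 contradiction
    exfalso
    obtain ⟨Q1, hQ1⟩ := h3Q
    have hQ1pos : 0 < Q1 := by nlinarith
    have hPQ1 : P * Q1 = Y ^ 4 := by
      have h9 : 3 * (P * Q1) = 3 * Y ^ 4 := by rw [← hPQ, hQ1]; ring
      exact mul_left_cancel₀ (show (3:ℤ) ≠ 0 by norm_num) h9
    have hcop1 : IsCoprime P Q1 :=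
      hcopPQ.of_isCoprime_of_dvd_right ⟨3, by rw [hQ1]; ring⟩
    obtain ⟨a, b, hap, hbp, ha4, hb4⟩ := pow4_split hPpos hQ1pos hcop1 hPQ1
    have hYab : Y ^ 2 = a ^ 2 * b ^ 2 := by
      have hY4 : Y ^ 4 = a ^ 4 * b ^ 4 := by rw [← hPQ1, ha4, hb4]
      have hfac : (Y ^ 2 - a ^ 2 * b ^ 2) * (Y ^ 2 + a ^ 2 * b ^ 2) = 0 := by
        linear_combination hY4
      rcases mul_eq_zero.mp hfac with h' | h'
      · linarith
      · exfalso; nlinarith [pow_pos hap 2, pow_pos hbp 2, pow_pos hY 2]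
    have hsub : 3 * b ^ 4 - a ^ 4 = x ^ 2 + 2 * Y ^ 2 := by
      rw [← hb4, ← ha4, ← hQ1]; exact hQPX
    have hx2 : (3 * b ^ 2 + a ^ 2) * (b ^ 2 - a ^ 2) = x ^ 2 := by
      linear_combination hsub + 2 * hYab
    have hfc : IsCoprime (3 * b ^ 2 + a ^ 2) (b ^ 2 - a ^ 2) := by
      apply isCoprime_of_forall_prime
      intro p hp h1 h2
      have hpx : p ∣ x := by
        apply hp.dvd_of_dvd_pow (n := 2)
        rw [← hx2]; exact h1.mul_right _
      have hp2 : ¬ p ∣ 2 := not_dvd_two hp hpx hxodd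
      have hpa : p ∣ a := by
        apply dvd_of_dvd_four_mul_sq hp hp2
        have h5 := dvd_sub h1 (h2.mul_left 3)
        rwa [show 3 * b ^ 2 + a ^ 2 - 3 * (b ^ 2 - a ^ 2) = 4 * a ^ 2 by ring] at h5
      have hpY : p ∣ Y := by
        apply hp.dvd_of_dvd_pow (n := 2)
        rw [hYab]; exact (dvd_pow hpa two_ne_zero).mul_right _
      exact hp.not_unit (hcop.isUnit_of_dvd' hpx (hpY.mul_left 2))
    have hSpos : 0 < 3 * b ^ 2 + a ^ 2 := by positivity
    have hprod_pos : 0 < b ^ 2 - a ^ 2 := by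
      by_contra hD
      push_neg at hD
      nlinarith [pow_pos hx 2, hSpos]
    obtain ⟨c, hcp, hc⟩ := sq_split_pos (by positivity) hfc hx2
    obtain ⟨d, hdp, hd⟩ := sq_split_pos hprod_pos hfc.symm (by rw [mul_comm]; exact hx2)
    have hcd_odd : Odd c ∧ Odd d := by
      have h1 : (c * d) ^ 2 = x ^ 2 := by rw [mul_pow, ← hc, ← hd]; exact hx2
      have h2 : Odd ((c * d) ^ 2) := by rw [h1]; exact hxodd.pow
      have h3 : Odd (c * d) := by
        rcases Int.odd_pow.mp h2 with h | h
        · exact h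
        · norm_num at h
      exact Int.odd_mul.mp h3
    obtain ⟨hcodd, hdodd⟩ := hcd_odd
    have hsum : c ^ 2 + d ^ 2 = 4 * b ^ 2 := by linear_combination - hc - hd
    obtain ⟨i, hi⟩ := hcodd
    obtain ⟨j, hj⟩ := hdodd
    rw [hi, hj] at hsum
    have h8 := congrArg (fun n : ℤ => (n : ZMod 8)) hsum
    push_cast at h8
    exact zmod8_sumsq _ _ _ h8

private lemma zmod8_oddodd : ∀ z i j : ZMod 8,
    z ^ 2 ≠ (2*i+1) ^ 4 + (2*i+1) ^ 2 * (2*j+1) ^ 2 + (2*j+1) ^ 4 := by decide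

private lemma lemE : ∀ N : ℕ, ∀ z x y : ℤ, z.natAbs = N → IsCoprime x y →
    0 < x → 0 < y → 0 < z → x ^ 4 + x ^ 2 * y ^ 2 + y ^ 4 = z ^ 2 → False := by
  intro N
  induction N using Nat.strong_induction_on with
  | _ N IH =>
    intro z x y hN hcop hx hy hz heq
    rcases Int.even_or_odd x with hxe | hxo
    · rcases Int.even_or_odd y with hye | hye
      · obtain ⟨x1, hx1⟩ := hxe
        obtain ⟨y1, hy1⟩ := hye
        have h2x : (2:ℤ) ∣ x := ⟨x1, by linarith⟩
        have h2y : (2:ℤ) ∣ y := ⟨y1, by linarith⟩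
        have := hcop.isUnit_of_dvd' h2x h2y
        rw [Int.isUnit_iff] at this
        rcases this with h | h <;> norm_num at h
      · -- x even, y odd : use key with roles swapped
        obtain ⟨Yx, hYx⟩ := hxe
        have hx2 : x = 2 * Yx := by linarith
        have hYpos : 0 < Yx := by linarith
        have hcop' : IsCoprime y (2 * Yx) := by rw [← hx2]; exact hcop.symm
        have heq' : y ^ 4 + y ^ 2 * (2*Yx) ^ 2 + (2*Yx) ^ 4 = z ^ 2 := by
          rw [← hx2]; linear_combination heq
        obtain ⟨e, f, b, hep, hfp, hbp, hcopef, hbz, hfin⟩ := key hy hYpos hz hye hcop' heq'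
        exact IH b.natAbs (hN ▸ Int.natAbs_lt_natAbs_of_nonneg_of_lt (le_of_lt hbp) hbz)
          b e f rfl hcopef hep hfp hbp hfin
    · rcases Int.even_or_odd y with hye | hye
      · -- y even : use key directly
        obtain ⟨Yy, hYy⟩ := hye
        have hy2 : y = 2 * Yy := by linarith
        have hYpos : 0 < Yy := by linarith
        have hcop' : IsCoprime x (2 * Yy) := by rw [← hy2]; exact hcop
        have heq' : x ^ 4 + x ^ 2 * (2*Yy) ^ 2 + (2*Yy) ^ 4 = z ^ 2 := by
          rw [← hy2]; linear_combination heq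
        obtain ⟨e, f, b, hep, hfp, hbp, hcopef, hbz, hfin⟩ := key hx hYpos hz hxo hcop' heq'
        exact IH b.natAbs (hN ▸ Int.natAbs_lt_natAbs_of_nonneg_of_lt (le_of_lt hbp) hbz)
          b e f rfl hcopef hep hfp hbp hfin
      · -- both odd : contradiction mod 8
        obtain ⟨i, hi⟩ := hxo
        obtain ⟨j, hj⟩ := hye
        rw [hi, hj] at heq
        have h8 := congrArg (fun n : ℤ => (n : ZMod 8)) heq
        push_cast at h8
        exact zmod8_oddodd _ _ _ h8.symm

private lemma zmod8_caseA1 : ∀ b t j : ZMod 8, b ^ 2 ≠ 4 * t ^ 2 - (2*j+1) ^ 2 := by decide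

private lemma zmod8_caseB3 : ∀ b t j : ZMod 8, 3 * b ^ 2 ≠ (2*j+1) ^ 2 - 4 * t ^ 2 := by decide

private lemma zmod8_caseA3 : ∀ b u j : ZMod 8, 3 * b ^ 2 ≠ 4 * (2*u) ^ 2 - (2*j+1) ^ 2 := by
  decide

private lemma zmod8_caseA3b : ∀ c i j : ZMod 8,
    3 * (2*c) ^ 2 ≠ 4 * (2*i+1) ^ 2 - (2*j+1) ^ 2 := by decide

set_option maxHeartbeats 1600000 in
private lemma mainlem : ∀ N : ℕ, ∀ t s k : ℤ, t.natAbs + s.natAbs ≤ N →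
    0 < t → 0 < s → 0 < k → k ^ 2 = 4 * t ^ 4 - 5 * t ^ 2 * s ^ 2 + s ^ 4 → False := by
  intro N
  induction N with
  | zero =>
    intro t s k h ht hs _ _
    have h1 : 0 < t.natAbs := Int.natAbs_pos.mpr (ne_of_gt ht)
    omega
  | succ N IH =>
    intro t s k hN ht hs hk heq
    rcases Int.even_or_odd s with hse | hso
    · -- s even : replace (t,s,k) by (s/2, t, k/2)
      obtain ⟨σ, hσ⟩ := hse
      have hs2 : s = 2 * σ := by linarith
      have hσpos : 0 < σ := by linarith
      have hkeven : Even (k ^ 2) :=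
        ⟨2 * t ^ 4 - 10 * t ^ 2 * σ ^ 2 + 8 * σ ^ 4, by rw [heq, hs2]; ring⟩
      have hke : Even k := by
        rcases Int.even_or_odd k with h | h
        · exact h
        · exfalso
          have : Odd (k ^ 2) := h.pow
          exact (Int.not_odd_iff_even.mpr hkeven) this
      obtain ⟨κ, hκ⟩ := hke
      have hk2 : k = 2 * κ := by linarith
      have hκpos : 0 < κ := by linarith
      rw [hs2, hk2] at heq
      have heq2 : κ ^ 2 = 4 * σ ^ 4 - 5 * σ ^ 2 * t ^ 2 + t ^ 4 := by
        have h4 : (4:ℤ) * κ ^ 2 = 4 * (4 * σ ^ 4 - 5 * σ ^ 2 * t ^ 2 + t ^ 4) := by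
          linear_combination heq
        exact mul_left_cancel₀ (by norm_num) h4
      have hmeas : σ.natAbs + t.natAbs ≤ N := by
        have h1 : s.natAbs = 2 * σ.natAbs := by
          rw [hs2, Int.natAbs_mul]; rfl
        have h2 : 1 ≤ σ.natAbs := Int.natAbs_pos.mpr (ne_of_gt hσpos)
        omega
      exact IH σ t κ hmeas hσpos ht hκpos heq2
    · -- s odd
      by_cases hg1 : Int.gcd t s = 1
      · -- coprime case
        have hcop : IsCoprime t s := Int.isCoprime_iff_gcd_eq_one.mpr hg1
        obtain ⟨j, hj⟩ := id hso
        rcases lt_trichotomy s t with hst | hst | hst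
        · -- case A : s < t
          have hfac : (t ^ 2 - s ^ 2) * (4 * t ^ 2 - s ^ 2) = k ^ 2 := by
            linear_combination - heq
          have hPpos : 0 < t ^ 2 - s ^ 2 := by nlinarith
          have hQpos : 0 < 4 * t ^ 2 - s ^ 2 := by nlinarith
          have hG3 : ((Int.gcd (t ^ 2 - s ^ 2) (4 * t ^ 2 - s ^ 2) : ℕ) : ℤ) ∣ 3 := by
            have d1 : ((Int.gcd (t ^ 2 - s ^ 2) (4 * t ^ 2 - s ^ 2) : ℕ) : ℤ) ∣ t ^ 2 - s ^ 2 :=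
              Int.gcd_dvd_left _ _
            have d2 : ((Int.gcd (t ^ 2 - s ^ 2) (4 * t ^ 2 - s ^ 2) : ℕ) : ℤ) ∣
                4 * t ^ 2 - s ^ 2 := Int.gcd_dvd_right _ _
            have dt : ((Int.gcd (t ^ 2 - s ^ 2) (4 * t ^ 2 - s ^ 2) : ℕ) : ℤ) ∣ 3 * t ^ 2 := by
              have h5 := dvd_sub d2 d1
              rwa [show 4 * t ^ 2 - s ^ 2 - (t ^ 2 - s ^ 2) = 3 * t ^ 2 by ring] at h5
            have ds : ((Int.gcd (t ^ 2 - s ^ 2) (4 * t ^ 2 - s ^ 2) : ℕ) : ℤ) ∣ 3 * s ^ 2 := by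
              have h5 := dvd_sub d2 (d1.mul_left 4)
              rwa [show 4 * t ^ 2 - s ^ 2 - 4 * (t ^ 2 - s ^ 2) = 3 * s ^ 2 by ring] at h5
            obtain ⟨α, β, hαβ⟩ := hcop.pow (m := 2) (n := 2)
            have h6 := dvd_add (dt.mul_left α) (ds.mul_left β)
            rwa [show α * (3 * t ^ 2) + β * (3 * s ^ 2) = 3 by linear_combination 3 * hαβ] at h6
          have hGcases : Int.gcd (t ^ 2 - s ^ 2) (4 * t ^ 2 - s ^ 2) = 1 ∨
              Int.gcd (t ^ 2 - s ^ 2) (4 * t ^ 2 - s ^ 2) = 3 := by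
            have := Int.natCast_dvd_natCast.mp (by exact_mod_cast hG3)
            exact (Nat.dvd_prime Nat.prime_three).mp this
          rcases hGcases with hG | hG
          · -- factors coprime : both squares, contradiction mod 8
            have hcopPQ : IsCoprime (t ^ 2 - s ^ 2) (4 * t ^ 2 - s ^ 2) :=
              Int.isCoprime_iff_gcd_eq_one.mpr hG
            obtain ⟨b, hbp, hb⟩ := sq_split_pos hQpos hcopPQ.symm (by rw [mul_comm]; exact hfac)
            rw [hj] at hb
            have h8 := congrArg (fun n : ℤ => (n : ZMod 8)) hb
            push_cast at h8
            exact zmod8_caseA1 b t j h8.symm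
          · -- gcd = 3
            obtain ⟨A, hA⟩ : (3:ℤ) ∣ t ^ 2 - s ^ 2 := by
              have d1 : ((Int.gcd (t ^ 2 - s ^ 2) (4 * t ^ 2 - s ^ 2) : ℕ) : ℤ) ∣ t ^ 2 - s ^ 2 :=
                Int.gcd_dvd_left _ _
              rwa [hG] at d1
            obtain ⟨B, hB⟩ : (3:ℤ) ∣ 4 * t ^ 2 - s ^ 2 := by
              have d2 : ((Int.gcd (t ^ 2 - s ^ 2) (4 * t ^ 2 - s ^ 2) : ℕ) : ℤ) ∣
                  4 * t ^ 2 - s ^ 2 := Int.gcd_dvd_right _ _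
              rwa [hG] at d2
            have hApos : 0 < A := by linarith
            have hBpos : 0 < B := by linarith
            have h9 : 9 * (A * B) = k ^ 2 := by rw [hA, hB] at hfac; linear_combination hfac
            have h3k : (3:ℤ) ∣ k := by
              apply Int.prime_three.dvd_of_dvd_pow (n := 2)
              exact ⟨3 * (A * B), by linarith⟩
            obtain ⟨κ, hκ⟩ := h3k
            have hAB : A * B = κ ^ 2 := by
              have h5 : (9:ℤ) * (A * B) = 9 * κ ^ 2 := by rw [h9, hκ]; ring
              exact mul_left_cancel₀ (by norm_num) h5
            have hcopAB : IsCoprime A B := by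
              rw [Int.isCoprime_iff_gcd_eq_one]
              have h6 : Int.gcd (3 * A) (3 * B) = 3 := by rw [← hA, ← hB]; exact hG
              rw [Int.gcd_mul_left, show (3:ℤ).natAbs = 3 from rfl] at h6
              omega
            obtain ⟨a, hap, ha⟩ := sq_split_pos hApos hcopAB hAB
            obtain ⟨b, hbp, hb⟩ := sq_split_pos hBpos hcopAB.symm (by rw [mul_comm]; exact hAB)
            -- b² - a² = t², b² - 4a² = s²
            have hba : b ^ 2 - a ^ 2 = t ^ 2 := by
              have h5 : (3:ℤ) * (b ^ 2 - a ^ 2) = 3 * t ^ 2 := by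
                linear_combination hA - hB + 3 * ha - 3 * hb
              exact mul_left_cancel₀ (by norm_num) h5
            have hbs : b ^ 2 - 4 * a ^ 2 = s ^ 2 := by
              have h5 : (3:ℤ) * (b ^ 2 - 4 * a ^ 2) = 3 * s ^ 2 := by
                linear_combination 4 * hA - hB + 12 * ha - 3 * hb
              exact mul_left_cancel₀ (by norm_num) h5
            -- t odd
            have hto : Odd t := by
              rcases Int.even_or_odd t with hte | hto
              · exfalso
                obtain ⟨u, hu⟩ := hte
                have htu : t = 2 * u := by linarith
                have h5 : 3 * b ^ 2 = 4 * (2 * u) ^ 2 - (2 * j + 1) ^ 2 := by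
                  rw [← htu, ← hj]; linear_combination -hB - 3*hb
                have h8 := congrArg (fun n : ℤ => (n : ZMod 8)) h5
                push_cast at h8
                exact zmod8_caseA3 b u j h8
              · exact hto
            -- b odd
            have hbo : Odd b := by
              rcases Int.even_or_odd b with hbe | hbo
              · exfalso
                obtain ⟨c, hc⟩ := hbe
                have hbc : b = 2 * c := by linarith
                obtain ⟨i, hi⟩ := hto
                have h5 : 3 * (2 * c) ^ 2 = 4 * (2 * i + 1) ^ 2 - (2 * j + 1) ^ 2 := by
                  rw [← hbc, ← hi, ← hj]; linear_combination -hB - 3*hb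
                have h8 := congrArg (fun n : ℤ => (n : ZMod 8)) h5
                push_cast at h8
                exact zmod8_caseA3b c i j h8
              · exact hbo
            have hb2s : b ^ 2 - s ^ 2 = 4 * a ^ 2 := by linear_combination hbs
            have hsb : s < b := by nlinarith [pow_pos hap 2]
            obtain ⟨u, hu⟩ := hbo.sub_odd hso
            obtain ⟨v, hv⟩ : ∃ v : ℤ, b + s = v + v := ⟨u + s, by linarith⟩
            have huv : u * v = a ^ 2 := by
              have h4 : (4:ℤ) * (u * v) = 4 * a ^ 2 := by
                have h5 : (u + u) * (v + v) = b ^ 2 - s ^ 2 := by rw [← hu, ← hv]; ring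
                linear_combination h5 + hb2s
              exact mul_left_cancel₀ (by norm_num) h4
            have hupos : 0 < u := by linarith
            have hvpos : 0 < v := by linarith
            have hcopuv : IsCoprime u v := by
              apply isCoprime_of_forall_prime
              intro p hp h1 h2
              have hpb : p ∣ b := by
                have h5 := dvd_add h1 h2
                rwa [show u + v = b by linarith] at h5
              have hps : p ∣ s := by
                have h5 := dvd_sub h2 h1
                rwa [show v - u = s by linarith] at h5
              have hpa : p ∣ a := by
                apply hp.dvd_of_dvd_pow (n := 2)
                rw [← huv]; exact h1.mul_right v
              have hpt : p ∣ t := by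
                apply hp.dvd_of_dvd_pow (n := 2)
                rw [← hba]
                exact dvd_sub (dvd_pow hpb two_ne_zero) (dvd_pow hpa two_ne_zero)
              exact hp.not_unit (hcop.isUnit_of_dvd' hpt hps)
            obtain ⟨m, hmp, hm⟩ := sq_split_pos hupos hcopuv huv
            obtain ⟨n, hnp, hn⟩ := sq_split_pos hvpos hcopuv.symm (by rw [mul_comm]; exact huv)
            have hcopmn : IsCoprime m n := by
              have h1 : IsCoprime (m ^ 2) (n ^ 2) := by rw [← hm, ← hn]; exact hcopuv
              exact (h1.of_isCoprime_of_dvd_left (dvd_pow_self m two_ne_zero)).of_isCoprime_of_dvd_right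
                (dvd_pow_self n two_ne_zero)
            have hbmn : b = m ^ 2 + n ^ 2 := by rw [← hm, ← hn]; linarith
            have hamn : a ^ 2 = m ^ 2 * n ^ 2 := by rw [← hm, ← hn, huv]
            have hfinal : m ^ 4 + m ^ 2 * n ^ 2 + n ^ 4 = t ^ 2 := by
              have h5 : t ^ 2 = (m ^ 2 + n ^ 2) ^ 2 - m ^ 2 * n ^ 2 := by
                rw [← hbmn, ← hamn]; linarith
              linear_combination - h5
            exact lemE t.natAbs t m n rfl hcopmn hmp hnp ht hfinal
        · -- s = t : k² = 0, impossible
          have h0 : k ^ 2 = 0 := by rw [← hst] at heq; linear_combination heq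
          nlinarith [pow_pos hk 2]
        · -- t < s
          rcases lt_trichotomy s (2 * t) with h2t | h2t | h2t
          · -- t < s < 2t : RHS negative
            have h1 : 0 < s ^ 2 - t ^ 2 := by nlinarith
            have h2 : 0 < 4 * t ^ 2 - s ^ 2 := by nlinarith
            nlinarith [pow_pos hk 2, mul_pos h1 h2]
          · -- s = 2t : k² = 0
            have h0 : k ^ 2 = 0 := by rw [h2t] at heq; linear_combination heq
            nlinarith [pow_pos hk 2]
          · -- case B : s > 2t
            have hfac : (s ^ 2 - t ^ 2) * (s ^ 2 - 4 * t ^ 2) = k ^ 2 := by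
              linear_combination - heq
            have hPpos : 0 < s ^ 2 - t ^ 2 := by nlinarith
            have hQpos : 0 < s ^ 2 - 4 * t ^ 2 := by nlinarith
            have hG3 : ((Int.gcd (s ^ 2 - t ^ 2) (s ^ 2 - 4 * t ^ 2) : ℕ) : ℤ) ∣ 3 := by
              have d1 : ((Int.gcd (s ^ 2 - t ^ 2) (s ^ 2 - 4 * t ^ 2) : ℕ) : ℤ) ∣
                  s ^ 2 - t ^ 2 := Int.gcd_dvd_left _ _
              have d2 : ((Int.gcd (s ^ 2 - t ^ 2) (s ^ 2 - 4 * t ^ 2) : ℕ) : ℤ) ∣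
                  s ^ 2 - 4 * t ^ 2 := Int.gcd_dvd_right _ _
              have dt : ((Int.gcd (s ^ 2 - t ^ 2) (s ^ 2 - 4 * t ^ 2) : ℕ) : ℤ) ∣ 3 * t ^ 2 := by
                have h5 := dvd_sub d1 d2
                rwa [show s ^ 2 - t ^ 2 - (s ^ 2 - 4 * t ^ 2) = 3 * t ^ 2 by ring] at h5
              have ds : ((Int.gcd (s ^ 2 - t ^ 2) (s ^ 2 - 4 * t ^ 2) : ℕ) : ℤ) ∣ 3 * s ^ 2 := by
                have h5 := dvd_sub (d1.mul_left 4) d2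
                rwa [show 4 * (s ^ 2 - t ^ 2) - (s ^ 2 - 4 * t ^ 2) = 3 * s ^ 2 by ring] at h5
              obtain ⟨α, β, hαβ⟩ := hcop.pow (m := 2) (n := 2)
              have h6 := dvd_add (dt.mul_left α) (ds.mul_left β)
              rwa [show α * (3 * t ^ 2) + β * (3 * s ^ 2) = 3 by linear_combination 3 * hαβ] at h6
            have hGcases : Int.gcd (s ^ 2 - t ^ 2) (s ^ 2 - 4 * t ^ 2) = 1 ∨
                Int.gcd (s ^ 2 - t ^ 2) (s ^ 2 - 4 * t ^ 2) = 3 := by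
              have := Int.natCast_dvd_natCast.mp (by exact_mod_cast hG3)
              exact (Nat.dvd_prime Nat.prime_three).mp this
            rcases hGcases with hG | hG
            · -- coprime factors : both squares, descend via lemE
              have hcopPQ : IsCoprime (s ^ 2 - t ^ 2) (s ^ 2 - 4 * t ^ 2) :=
                Int.isCoprime_iff_gcd_eq_one.mpr hG
              obtain ⟨a, hap, ha⟩ := sq_split_pos hPpos hcopPQ hfac
              obtain ⟨b, hbp, hb⟩ := sq_split_pos hQpos hcopPQ.symm (by rw [mul_comm]; exact hfac)
              -- b odd
              have hbo : Odd b := by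
                have h1 : Odd (b ^ 2) := by
                  rw [← hb]
                  exact (hso.pow).sub_even ⟨2 * t ^ 2, by ring⟩
                rcases Int.odd_pow.mp h1 with h | h
                · exact h
                · norm_num at h
              have hsb2 : s ^ 2 - b ^ 2 = 4 * t ^ 2 := by linear_combination hb
              have hbs : b < s := by nlinarith [pow_pos ht 2]
              obtain ⟨u, hu⟩ := hso.sub_odd hbo
              obtain ⟨v, hv⟩ : ∃ v : ℤ, s + b = v + v := ⟨u + b, by linarith⟩
              have huv : u * v = t ^ 2 := by
                have h4 : (4:ℤ) * (u * v) = 4 * t ^ 2 := by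
                  have h5 : (u + u) * (v + v) = s ^ 2 - b ^ 2 := by rw [← hu, ← hv]; ring
                  linear_combination h5 + hsb2
                exact mul_left_cancel₀ (by norm_num) h4
              have hupos : 0 < u := by linarith
              have hvpos : 0 < v := by linarith
              have hcopuv : IsCoprime u v := by
                apply isCoprime_of_forall_prime
                intro p hp h1 h2
                have hps : p ∣ s := by
                  have h5 := dvd_add h1 h2
                  rwa [show u + v = s by linarith] at h5
                have hpt : p ∣ t := by
                  apply hp.dvd_of_dvd_pow (n := 2)
                  rw [← huv]; exact h1.mul_right v
                exact hp.not_unit (hcop.isUnit_of_dvd' hpt hps)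
              obtain ⟨m, hmp, hm⟩ := sq_split_pos hupos hcopuv huv
              obtain ⟨n, hnp, hn⟩ := sq_split_pos hvpos hcopuv.symm (by rw [mul_comm]; exact huv)
              have hcopmn : IsCoprime m n := by
                have h1 : IsCoprime (m ^ 2) (n ^ 2) := by rw [← hm, ← hn]; exact hcopuv
                exact (h1.of_isCoprime_of_dvd_left (dvd_pow_self m two_ne_zero)).of_isCoprime_of_dvd_right
                  (dvd_pow_self n two_ne_zero)
              have hsmn : s = m ^ 2 + n ^ 2 := by rw [← hm, ← hn]; linarith
              have htmn : t ^ 2 = m ^ 2 * n ^ 2 := by rw [← hm, ← hn, huv]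
              have hfinal : m ^ 4 + m ^ 2 * n ^ 2 + n ^ 4 = a ^ 2 := by
                have h5 : a ^ 2 = (m ^ 2 + n ^ 2) ^ 2 - m ^ 2 * n ^ 2 := by
                  rw [← hsmn, ← htmn]; linarith
                linear_combination - h5
              exact lemE a.natAbs a m n rfl hcopmn hmp hnp hap hfinal
            · -- gcd = 3 : contradiction mod 8
              obtain ⟨A, hA⟩ : (3:ℤ) ∣ s ^ 2 - t ^ 2 := by
                have d1 : ((Int.gcd (s ^ 2 - t ^ 2) (s ^ 2 - 4 * t ^ 2) : ℕ) : ℤ) ∣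
                    s ^ 2 - t ^ 2 := Int.gcd_dvd_left _ _
                rwa [hG] at d1
              obtain ⟨B, hB⟩ : (3:ℤ) ∣ s ^ 2 - 4 * t ^ 2 := by
                have d2 : ((Int.gcd (s ^ 2 - t ^ 2) (s ^ 2 - 4 * t ^ 2) : ℕ) : ℤ) ∣
                    s ^ 2 - 4 * t ^ 2 := Int.gcd_dvd_right _ _
                rwa [hG] at d2
              have hApos : 0 < A := by linarith
              have hBpos : 0 < B := by linarith
              have h9 : 9 * (A * B) = k ^ 2 := by rw [hA, hB] at hfac; linear_combination hfac
              have h3k : (3:ℤ) ∣ k := by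
                apply Int.prime_three.dvd_of_dvd_pow (n := 2)
                exact ⟨3 * (A * B), by linarith⟩
              obtain ⟨κ, hκ⟩ := h3k
              have hAB : A * B = κ ^ 2 := by
                have h5 : (9:ℤ) * (A * B) = 9 * κ ^ 2 := by rw [h9, hκ]; ring
                exact mul_left_cancel₀ (by norm_num) h5
              have hcopAB : IsCoprime A B := by
                rw [Int.isCoprime_iff_gcd_eq_one]
                have h6 : Int.gcd (3 * A) (3 * B) = 3 := by rw [← hA, ← hB]; exact hG
                rw [Int.gcd_mul_left, show (3:ℤ).natAbs = 3 from rfl] at h6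
                omega
              obtain ⟨b, hbp, hb⟩ := sq_split_pos hBpos hcopAB.symm (by rw [mul_comm]; exact hAB)
              have h5 : 3 * b ^ 2 = (2 * j + 1) ^ 2 - 4 * t ^ 2 := by
                rw [← hj]; linear_combination -hB - 3*hb
              have h8 := congrArg (fun n : ℤ => (n : ZMod 8)) h5
              push_cast at h8
              exact zmod8_caseB3 b t j h8
      · -- gcd t s = d > 1 : divide through
        obtain ⟨g, hgdef⟩ : ∃ g : ℕ, Int.gcd t s = g := ⟨_, rfl⟩
        have hgne : g ≠ 0 := by
          rw [← hgdef]
          simp only [Ne, Int.gcd_eq_zero_iff]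
          rintro ⟨h1, -⟩
          omega
        have hg2 : 2 ≤ g := by
          rw [hgdef] at hg1
          omega
        obtain ⟨t1, ht1⟩ : ((g : ℕ) : ℤ) ∣ t := hgdef ▸ Int.gcd_dvd_left t s
        obtain ⟨s1, hs1⟩ : ((g : ℕ) : ℤ) ∣ s := hgdef ▸ Int.gcd_dvd_right t s
        have hgpos : (0:ℤ) < (g : ℤ) := by exact_mod_cast Nat.pos_of_ne_zero hgne
        have ht1pos : 0 < t1 := by
          rcases lt_trichotomy t1 0 with h | h | h
          · exfalso; nlinarith
          · exfalso; rw [h, mul_zero] at ht1; omega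
          · exact h
        have hs1pos : 0 < s1 := by
          rcases lt_trichotomy s1 0 with h | h | h
          · exfalso; nlinarith
          · exfalso; rw [h, mul_zero] at hs1; omega
          · exact h
        have hdvd : ((g : ℤ)) ^ 2 ∣ k := by
          rw [← Int.pow_dvd_pow_iff (two_ne_zero)]
          exact ⟨4 * t1 ^ 4 - 5 * t1 ^ 2 * s1 ^ 2 + s1 ^ 4, by
            rw [heq, ht1, hs1]; ring⟩
        obtain ⟨κ, hκ⟩ := hdvd
        have hκpos : 0 < κ := by nlinarith
        have heq2 : κ ^ 2 = 4 * t1 ^ 4 - 5 * t1 ^ 2 * s1 ^ 2 + s1 ^ 4 := by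
          have hg4 : ((g:ℤ)) ^ 4 ≠ 0 := by positivity
          have h5 : ((g:ℤ)) ^ 4 * κ ^ 2 =
              ((g:ℤ)) ^ 4 * (4 * t1 ^ 4 - 5 * t1 ^ 2 * s1 ^ 2 + s1 ^ 4) := by
            rw [ht1, hs1, hκ] at heq; linear_combination heq
          exact mul_left_cancel₀ hg4 h5
        have hmeas : t1.natAbs + s1.natAbs ≤ N := by
          have h1 : t.natAbs = g * t1.natAbs := by
            rw [ht1, Int.natAbs_mul, Int.natAbs_natCast]
          have h2 : s.natAbs = g * s1.natAbs := by
            rw [hs1, Int.natAbs_mul, Int.natAbs_natCast]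
          have h3 : 1 ≤ t1.natAbs := Int.natAbs_pos.mpr (ne_of_gt ht1pos)
          have h4 : 1 ≤ s1.natAbs := Int.natAbs_pos.mpr (ne_of_gt hs1pos)
          have h5 : 2 * t1.natAbs ≤ t.natAbs := by
            rw [h1]; exact Nat.mul_le_mul_right _ hg2
          have h6 : 2 * s1.natAbs ≤ s.natAbs := by
            rw [h2]; exact Nat.mul_le_mul_right _ hg2
          omega
        exact IH t1 s1 κ hmeas ht1pos hs1pos hκpos heq2

theorem no_solution_quartic :
    ¬ ∃ t s k : ℤ, 0 < t ∧ 0 < s ∧ 0 < k ∧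
      k ^ 2 = 4 * t ^ 4 - 5 * t ^ 2 * s ^ 2 + s ^ 4 := by
  rintro ⟨t, s, k, ht, hs, hk, heq⟩
  exact mainlem (t.natAbs + s.natAbs) t s k le_rfl ht hs hk heq
end

section
/- If (t, s, k) is a solution in positive integers of k^2 = 4t^4 - 5t^2s^2 + s^4, then (k, ts, |4t^4 - s^4|) is a solution of z^2 = x^4 + 10x^2y^2 + 9y^4. -/
theorem solution_transfer (t s k : ℤ) (ht : 0 < t) (hs : 0 < s) (hk : 0 < k)
    (h : k ^ 2 = 4 * t ^ 4 - 5 * t ^ 2 * s ^ 2 + s ^ 4) :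
    (|4 * t ^ 4 - s ^ 4|) ^ 2 = k ^ 4 + 10 * k ^ 2 * (t * s) ^ 2 + 9 * (t * s) ^ 4 := by
  rw [sq_abs]
  nlinarith [sq_nonneg k, sq_nonneg (t*s)]
end

section
/- The Diophantine equation z^2 = x^4 + x^2y^2 + y^4 has no solutions in positive integers x, y, z. -/
/-- The auxiliary system used for the infinite descent. -/
def SSys (x y m n : ℕ) : Prop :=
  0 < x ∧ 0 < y ∧ 0 < m ∧ 0 < n ∧
  x ^ 2 + y ^ 2 = m ^ 2 + n ^ 2 ∧ x * y = 2 * (m * n) ∧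
  Nat.Coprime x y ∧ Nat.Coprime m n

lemma odd_of_dvd_odd {d x : ℕ} (h : d ∣ x) (hx : Odd x) : Odd d := by
  rcases h with ⟨k, rfl⟩
  exact (Nat.odd_mul.mp hx).1

lemma zmod8_e1 : ∀ a b c : ZMod 8, (2*a+1)^2 ≠ (2*b+1)^2 + 4*(2*c+1)^2 := by decide
lemma zmod4_em1 : ∀ a b c : ZMod 4, (2*a+1)^2 + (2*b+1)^2 ≠ 4*c^2 := by decide
lemma zmod8_e3 : ∀ a b c : ZMod 8, (2*a+1)^2 ≠ 4*b^2 + 3*(2*c+1)^2 := by decide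
lemma zmod8_em3 : ∀ a b c : ZMod 8, 4*(2*a)^2 ≠ (2*b+1)^2 + 3*(2*c+1)^2 := by decide
lemma zmod4_oddodd : ∀ z a b : ZMod 4, z^2 ≠ (2*a+1)^4 + (2*a+1)^2*(2*b+1)^2 + (2*b+1)^4 := by
  decide

/-- From two primitive Pythagorean relations sharing a hypotenuse `a`, with legs `2t` and `t`,
produce a solution of the system `SSys` whose "sum of two squares" equals `a`. -/
lemma descend_T {a b c t : ℕ} (hb : Odd b) (hc : Odd c)
    (hbt : Nat.Coprime b t) (hct : Nat.Coprime c t)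
    (h1 : b ^ 2 + (2 * t) ^ 2 = a ^ 2) (h2 : c ^ 2 + t ^ 2 = a ^ 2)
    (ht : 0 < t) :
    ∃ α β γ δ : ℕ, SSys α β γ δ ∧ α ^ 2 + β ^ 2 = a := by
  have ha : 0 < a := by
    have hb1 : 0 < b := hb.pos
    by_contra h
    have : a = 0 := by omega
    subst this
    simp at h1
    omega
  have tri1 : PythagoreanTriple (b : ℤ) (2 * (t : ℤ)) a := by
    have h' := congrArg (Nat.cast : ℕ → ℤ) h1
    push_cast at h'
    show (b:ℤ) * b + (2*(t:ℤ)) * (2*(t:ℤ)) = (a:ℤ) * a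
    linear_combination h'
  have tri2 : PythagoreanTriple (c : ℤ) (t : ℤ) a := by
    have h' := congrArg (Nat.cast : ℕ → ℤ) h2
    push_cast at h'
    show (c:ℤ) * c + (t:ℤ) * t = (a:ℤ) * a
    linear_combination h'
  have hco1 : Int.gcd (b : ℤ) (2 * (t : ℤ)) = 1 := by
    have hn : Nat.Coprime b (2 * t) := Nat.Coprime.mul_right hb.coprime_two_right hbt
    have h2t : ((2 * t : ℕ) : ℤ) = (2:ℤ) * t := by push_cast; ring
    rw [← h2t]
    exact hn
  have hco2 : Int.gcd (c : ℤ) (t : ℤ) = 1 := by simpa using hct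
  have hbp : (b : ℤ) % 2 = 1 := Int.odd_iff.mp (by exact_mod_cast hb)
  have hcp : (c : ℤ) % 2 = 1 := Int.odd_iff.mp (by exact_mod_cast hc)
  have hap : (0 : ℤ) < a := by exact_mod_cast ha
  obtain ⟨M, N, hbMN, htMN, haMN, hgMN, -, hM0⟩ :=
    tri1.coprime_classification' hco1 hbp hap
  obtain ⟨G, D, hcGD, htGD, haGD, hgGD, -, hG0⟩ :=
    tri2.coprime_classification' hco2 hcp hap
  have htMN' : (t : ℤ) = M * N := by linarith
  have htZ : (0:ℤ) < t := by exact_mod_cast ht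
  have hMpos : 0 < M := by
    rcases hM0.lt_or_eq with h | h
    · exact h
    · exfalso; rw [← h] at htMN'; simp at htMN'; omega
  have hNpos : 0 < N := by
    by_contra h
    push_neg at h
    have := mul_nonpos_iff.mpr (Or.inr ⟨h, hMpos.le⟩)
    rw [mul_comm] at this
    linarith
  have htGD' : (t : ℤ) = 2 * (G * D) := by linarith
  have hGpos : 0 < G := by
    rcases hG0.lt_or_eq with h | h
    · exact h
    · exfalso; rw [← h] at htGD'; simp at htGD'; omega
  have hDpos : 0 < D := by
    by_contra h
    push_neg at h
    have := mul_nonpos_iff.mpr (Or.inr ⟨h, hGpos.le⟩)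
    rw [mul_comm] at this
    linarith
  have hMc : (M.natAbs : ℤ) = M := Int.natAbs_of_nonneg hMpos.le
  have hNc : (N.natAbs : ℤ) = N := Int.natAbs_of_nonneg hNpos.le
  have hGc : (G.natAbs : ℤ) = G := Int.natAbs_of_nonneg hGpos.le
  have hDc : (D.natAbs : ℤ) = D := Int.natAbs_of_nonneg hDpos.le
  refine ⟨M.natAbs, N.natAbs, G.natAbs, D.natAbs, ⟨?_, ?_, ?_, ?_, ?_, ?_, ?_, ?_⟩, ?_⟩
  · exact Int.natAbs_pos.mpr hMpos.ne'
  · exact Int.natAbs_pos.mpr hNpos.ne'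
  · exact Int.natAbs_pos.mpr hGpos.ne'
  · exact Int.natAbs_pos.mpr hDpos.ne'
  · have : (M.natAbs : ℤ) ^ 2 + (N.natAbs : ℤ) ^ 2 = (G.natAbs : ℤ) ^ 2 + (D.natAbs : ℤ) ^ 2 := by
      rw [hMc, hNc, hGc, hDc]; linarith
    exact_mod_cast this
  · have : (M.natAbs : ℤ) * (N.natAbs : ℤ) = 2 * ((G.natAbs : ℤ) * (D.natAbs : ℤ)) := by
      rw [hMc, hNc, hGc, hDc]; linarith
    exact_mod_cast this
  · exact hgMN
  · exact hgGD
  · have : (M.natAbs : ℤ) ^ 2 + (N.natAbs : ℤ) ^ 2 = (a : ℤ) := by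
      rw [hMc, hNc]; linarith
    exact_mod_cast this


lemma SSys_descend_core {x y m n : ℕ} (h : SSys x y m n) (hx : Odd x) :
    ∃ a b c d : ℕ, SSys a b c d ∧ a ^ 2 + b ^ 2 < x ^ 2 + y ^ 2 := by
  obtain ⟨hx0, hy0, hm0, hn0, hmain, hprod, hxy, hmn⟩ := h
  have hyev : Even y := by
    have hev : Even (x * y) := ⟨m * n, by omega⟩
    rcases Nat.even_mul.mp hev with h' | h'
    · exact absurd h' (by simpa [Nat.not_even_iff_odd] using hx)
    · exact h'
  obtain ⟨k, hk⟩ := hyev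
  have hyev : Even y := ⟨k, hk⟩
  have hk0 : 0 < k := by omega
  have hxk : x * k = m * n := by
    have h2 : 2 * (x * k) = 2 * (m * n) := by rw [← hprod, hk]; ring
    omega
  have hxkco : Nat.Coprime x k := Nat.Coprime.coprime_dvd_right ⟨2, by omega⟩ hxy
  set p := Nat.gcd x m with hp
  have hp0 : 0 < p := Nat.gcd_pos_of_pos_left m hx0
  have hpdx : p ∣ x := Nat.gcd_dvd_left x m
  have hpdm : p ∣ m := Nat.gcd_dvd_right x m
  set q := x / p with hqdef
  set r := m / p with hrdef
  have hx_pq : p * q = x := Nat.mul_div_cancel' hpdx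
  have hm_pr : p * r = m := Nat.mul_div_cancel' hpdm
  have c_qr : Nat.Coprime q r := Nat.coprime_div_gcd_div_gcd hp0
  have hq0 : 0 < q := by
    rcases Nat.eq_zero_or_pos q with h' | h'
    · exfalso; rw [h', mul_zero] at hx_pq; omega
    · exact h'
  have hr0 : 0 < r := by
    rcases Nat.eq_zero_or_pos r with h' | h'
    · exfalso; rw [h', mul_zero] at hm_pr; omega
    · exact h'
  have hqk_rn : q * k = r * n := by
    have h' : p * (q * k) = p * (r * n) := by
      rw [show p * (q * k) = p * q * k by ring, show p * (r * n) = p * r * n by ring,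
        hx_pq, hm_pr, hxk]
    exact Nat.eq_of_mul_eq_mul_left hp0 h'
  have hqdn : q ∣ n := Nat.Coprime.dvd_of_dvd_mul_left c_qr ⟨k, hqk_rn.symm⟩
  set s := n / q with hsdef
  have hn_qs : q * s = n := Nat.mul_div_cancel' hqdn
  have hk_rs : k = r * s := by
    have h' : q * k = q * (r * s) := by rw [hqk_rn, ← hn_qs]; ring
    exact Nat.eq_of_mul_eq_mul_left hq0 h'
  have hs0 : 0 < s := by
    rcases Nat.eq_zero_or_pos s with h' | h'
    · exfalso; rw [h', mul_zero] at hn_qs; omega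
    · exact h'
  have hqdx : q ∣ x := ⟨p, by rw [← hx_pq]; ring⟩
  have hrdk : r ∣ k := ⟨s, hk_rs⟩
  have hsdk : s ∣ k := ⟨r, by rw [hk_rs]; ring⟩
  have hrdm : r ∣ m := ⟨p, by rw [← hm_pr]; ring⟩
  have hsdn : s ∣ n := ⟨q, by rw [← hn_qs]; ring⟩
  have c_ps : Nat.Coprime p s :=
    Nat.Coprime.coprime_dvd_right hsdk (Nat.Coprime.coprime_dvd_left hpdx hxkco)
  have c_pr : Nat.Coprime p r :=
    Nat.Coprime.coprime_dvd_right hrdk (Nat.Coprime.coprime_dvd_left hpdx hxkco)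
  have c_qs : Nat.Coprime q s :=
    Nat.Coprime.coprime_dvd_right hsdk (Nat.Coprime.coprime_dvd_left hqdx hxkco)
  have c_rs : Nat.Coprime r s :=
    Nat.Coprime.coprime_dvd_right hsdn (Nat.Coprime.coprime_dvd_left hrdm hmn)
  have hp_odd : Odd p := odd_of_dvd_odd hpdx hx
  have hq_odd : Odd q := odd_of_dvd_odd hqdx hx
  obtain ⟨pc, hpc⟩ := hp_odd
  obtain ⟨qc, hqc⟩ := hq_odd
  have hp_odd : Odd p := ⟨pc, hpc⟩
  have hq_odd : Odd q := ⟨qc, hqc⟩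
  have hk_even : Even k := by
    have hsum_odd : Odd (m ^ 2 + n ^ 2) := by
      rw [← hmain]
      have hx2 : Odd (x ^ 2) := hx.pow
      have hy2 : Even (y ^ 2) := by rw [pow_two]; exact hyev.mul_right y
      exact hx2.add_even hy2
    have hmn_even : Even (m * n) := by
      by_contra hodd
      rcases Nat.odd_mul.mp (Nat.not_even_iff_odd.mp hodd) with ⟨hmo, hno⟩
      have : Even (m ^ 2 + n ^ 2) := (hmo.pow).add_odd (hno.pow)
      exact (Nat.not_even_iff_odd.mpr hsum_odd) this
    have hev : Even (x * k) := by rw [hxk]; exact hmn_even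
    rcases Nat.even_mul.mp hev with h' | h'
    · exact absurd h' (by simpa [Nat.not_even_iff_odd] using hx)
    · exact h'
  have hrs_even : Even (r * s) := by rw [← hk_rs]; exact hk_even
  have hy2k : y = 2 * (r * s) := by rw [hk, hk_rs]; ring
  have hNat : (p * q) ^ 2 + (2 * (r * s)) ^ 2 = (p * r) ^ 2 + (q * s) ^ 2 := by
    rw [hx_pq, hm_pr, hn_qs, ← hy2k]; exact hmain
  have hZ : ((p : ℤ) * q) ^ 2 + (2 * ((r : ℤ) * s)) ^ 2
      = ((p : ℤ) * r) ^ 2 + ((q : ℤ) * s) ^ 2 := by exact_mod_cast hNat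
  have hZmain : (p : ℤ) ^ 2 * ((q : ℤ) ^ 2 - (r : ℤ) ^ 2)
      = (s : ℤ) ^ 2 * ((q : ℤ) ^ 2 - 4 * (r : ℤ) ^ 2) := by linear_combination hZ
  have iPS : IsCoprime (s : ℤ) (p : ℤ) := Nat.isCoprime_iff_coprime.mpr c_ps.symm
  have hs2dvd : ((s : ℤ)) ^ 2 ∣ (q : ℤ) ^ 2 - (r : ℤ) ^ 2 :=
    (iPS.pow).dvd_of_dvd_mul_left ⟨(q : ℤ) ^ 2 - 4 * (r : ℤ) ^ 2, hZmain⟩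
  obtain ⟨e, he⟩ := hs2dvd
  have hsne : ((s : ℤ)) ^ 2 ≠ 0 := by positivity
  have he2 : (q : ℤ) ^ 2 - 4 * (r : ℤ) ^ 2 = (p : ℤ) ^ 2 * e := by
    have h' : (s : ℤ) ^ 2 * ((q : ℤ) ^ 2 - 4 * (r : ℤ) ^ 2)
        = (s : ℤ) ^ 2 * ((p : ℤ) ^ 2 * e) := by
      linear_combination (p : ℤ) ^ 2 * he - hZmain
    exact mul_left_cancel₀ hsne h'
  have h3q : 3 * (q : ℤ) ^ 2 = (4 * (s : ℤ) ^ 2 - (p : ℤ) ^ 2) * e := by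
    linear_combination 4 * he - he2
  have h3r : 3 * (r : ℤ) ^ 2 = ((s : ℤ) ^ 2 - (p : ℤ) ^ 2) * e := by
    linear_combination he - he2
  have iQR : IsCoprime ((q : ℤ) ^ 2) ((r : ℤ) ^ 2) := (Nat.isCoprime_iff_coprime.mpr c_qr).pow
  obtain ⟨u, v, huv⟩ := iQR
  have hedvd : e ∣ 3 :=
    ⟨u * (4 * (s : ℤ) ^ 2 - (p : ℤ) ^ 2) + v * ((s : ℤ) ^ 2 - (p : ℤ) ^ 2), by
      linear_combination u * h3q + v * h3r - 3 * huv⟩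
  have hecases : e = 1 ∨ e = -1 ∨ e = 3 ∨ e = -3 := by
    have h1 : e.natAbs ∣ 3 := by
      have h' := Int.natAbs_dvd_natAbs.mpr hedvd
      simpa using h'
    have h2 := (Nat.dvd_prime (by norm_num)).mp h1
    rcases Int.natAbs_eq e with h' | h' <;> omega
  rcases hecases with rfl | rfl | rfl | rfl
  · -- e = 1
    have hr_even : Even r := by
      by_contra hodd
      obtain ⟨rc, hrc⟩ := Nat.not_even_iff_odd.mp hodd
      have hNat1 : q ^ 2 = p ^ 2 + 4 * r ^ 2 := by
        have h' : (q : ℤ) ^ 2 = (p : ℤ) ^ 2 + 4 * (r : ℤ) ^ 2 := by linear_combination he2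
        exact_mod_cast h'
      rw [hqc, hpc, hrc] at hNat1
      have h8 := congrArg (Nat.cast : ℕ → ZMod 8) hNat1
      push_cast at h8
      exact zmod8_e1 (qc : ZMod 8) pc rc h8
    have hs_odd : Odd s := by
      rcases Nat.even_or_odd s with hse | hso
      · exfalso
        have hdd : 2 ∣ Nat.gcd r s := Nat.dvd_gcd hr_even.two_dvd hse.two_dvd
        exact absurd (c_rs ▸ hdd) (by norm_num)
      · exact hso
    have hT1 : p ^ 2 + (2 * r) ^ 2 = q ^ 2 := by
      have h' : (p : ℤ) ^ 2 + (2 * (r : ℤ)) ^ 2 = (q : ℤ) ^ 2 := by linear_combination - he2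
      exact_mod_cast h'
    have hT2 : s ^ 2 + r ^ 2 = q ^ 2 := by
      have h' : (s : ℤ) ^ 2 + (r : ℤ) ^ 2 = (q : ℤ) ^ 2 := by linear_combination - he
      exact_mod_cast h'
    obtain ⟨α, β, γ, δ, hS, hsum⟩ :=
      descend_T hp_odd hs_odd c_pr c_rs.symm hT1 hT2 hr0
    refine ⟨α, β, γ, δ, hS, ?_⟩
    have hqx : q ≤ x := Nat.le_of_dvd hx0 hqdx
    have hxx : x ≤ x ^ 2 := Nat.le_self_pow (by norm_num) x
    have hyy : 0 < y ^ 2 := pow_pos hy0 2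
    linarith [hsum]
  · -- e = -1
    exfalso
    have hNat1 : q ^ 2 + p ^ 2 = 4 * r ^ 2 := by
      have h' : (q : ℤ) ^ 2 + (p : ℤ) ^ 2 = 4 * (r : ℤ) ^ 2 := by linear_combination he2
      exact_mod_cast h'
    rw [hqc, hpc] at hNat1
    have h4 := congrArg (Nat.cast : ℕ → ZMod 4) hNat1
    push_cast at h4
    exact zmod4_em1 (qc : ZMod 4) pc r h4
  · -- e = 3
    exfalso
    have hNat1 : q ^ 2 = 4 * r ^ 2 + 3 * p ^ 2 := by
      have h' : (q : ℤ) ^ 2 = 4 * (r : ℤ) ^ 2 + 3 * (p : ℤ) ^ 2 := by linear_combination he2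
      exact_mod_cast h'
    rw [hqc, hpc] at hNat1
    have h8 := congrArg (Nat.cast : ℕ → ZMod 8) hNat1
    push_cast at h8
    exact zmod8_e3 (qc : ZMod 8) r pc h8
  · -- e = -3
    have hr_odd : Odd r := by
      rcases Nat.even_or_odd r with hre | hro
      · exfalso
        obtain ⟨rc, hrc⟩ := hre
        have hNat1 : 4 * r ^ 2 = q ^ 2 + 3 * p ^ 2 := by
          have h' : 4 * (r : ℤ) ^ 2 = (q : ℤ) ^ 2 + 3 * (p : ℤ) ^ 2 := by
            linear_combination - he2
          exact_mod_cast h'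
        rw [hqc, hpc, show r = 2 * rc by omega] at hNat1
        have h8 := congrArg (Nat.cast : ℕ → ZMod 8) hNat1
        push_cast at h8
        exact zmod8_em3 (rc : ZMod 8) qc pc h8
      · exact hro
    have hp2Z : (r : ℤ) ^ 2 + (s : ℤ) ^ 2 = (p : ℤ) ^ 2 := by
      have h3 : (3 : ℤ) * ((r : ℤ) ^ 2 + (s : ℤ) ^ 2) = 3 * (p : ℤ) ^ 2 := by
        linear_combination h3r
      exact mul_left_cancel₀ (by norm_num : (3 : ℤ) ≠ 0) h3
    have hq2Z : (q : ℤ) ^ 2 + (2 * (s : ℤ)) ^ 2 = (p : ℤ) ^ 2 := by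
      linear_combination hp2Z + he
    have hT1 : q ^ 2 + (2 * s) ^ 2 = p ^ 2 := by exact_mod_cast hq2Z
    have hT2 : r ^ 2 + s ^ 2 = p ^ 2 := by exact_mod_cast hp2Z
    obtain ⟨α, β, γ, δ, hS, hsum⟩ :=
      descend_T hq_odd hr_odd c_qs c_rs hT1 hT2 hs0
    refine ⟨α, β, γ, δ, hS, ?_⟩
    have hpx : p ≤ x := Nat.le_of_dvd hx0 hpdx
    have hxx : x ≤ x ^ 2 := Nat.le_self_pow (by norm_num) x
    have hyy : 0 < y ^ 2 := pow_pos hy0 2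
    linarith [hsum]



lemma SSys_descend {x y m n : ℕ} (h : SSys x y m n) :
    ∃ a b c d : ℕ, SSys a b c d ∧ a ^ 2 + b ^ 2 < x ^ 2 + y ^ 2 := by
  rcases Nat.even_or_odd x with hxe | hxo
  · obtain ⟨h1, h2, h3, h4, h5, h6, h7, h8⟩ := h
    have hyo : Odd y := by
      rcases Nat.even_or_odd y with hye | hyo
      · exfalso
        have hdd : 2 ∣ Nat.gcd x y := Nat.dvd_gcd hxe.two_dvd hye.two_dvd
        exact absurd (h7 ▸ hdd) (by norm_num)
      · exact hyo
    have hswap : SSys y x m n :=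
      ⟨h2, h1, h3, h4, by linarith, by rw [mul_comm]; exact h6, h7.symm, h8⟩
    obtain ⟨a, b, c, d, hS, hlt⟩ := SSys_descend_core hswap hyo
    exact ⟨a, b, c, d, hS, by linarith⟩
  · exact SSys_descend_core h hxo

lemma no_SSys (x y m n : ℕ) : ¬ SSys x y m n := by
  have H : ∀ M x y m n : ℕ, x ^ 2 + y ^ 2 ≤ M → ¬ SSys x y m n := by
    intro M
    induction M with
    | zero =>
      intro x y m n hle h
      have hx2 : 0 < x ^ 2 := pow_pos h.1 2
      linarith [Nat.zero_le (y ^ 2)]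
    | succ M ih =>
      intro x y m n hle h
      obtain ⟨a, b, c, d, hS, hlt⟩ := SSys_descend h
      exact ih a b c d (Nat.lt_succ_iff.mp (lt_of_lt_of_le hlt hle)) hS
  intro h
  exact H (x ^ 2 + y ^ 2) x y m n le_rfl h

lemma coprime_case :
    ∀ x y z : ℕ, Odd x → 0 < y → 0 < z → Nat.Coprime x y →
      z ^ 2 = x ^ 4 + x ^ 2 * y ^ 2 + y ^ 4 → False := by
  intro x y z hx hy0 hz0 hco h
  have hx0 : 0 < x := hx.pos
  have hyev : Even y := by
    rcases Nat.even_or_odd y with hye | hyo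
    · exact hye
    · exfalso
      obtain ⟨a, ha⟩ := hx
      obtain ⟨b, hb⟩ := hyo
      rw [ha, hb] at h
      have h4 := congrArg (Nat.cast : ℕ → ZMod 4) h
      push_cast at h4
      exact zmod4_oddodd (z : ZMod 4) a b h4
  have hz_odd : Odd z := by
    have hzsq : Odd (z ^ 2) := by
      rw [h]
      have h1 : Odd (x ^ 4) := hx.pow
      have hy2 : Even (y ^ 2) := by rw [pow_two]; exact hyev.mul_right y
      have h2 : Even (x ^ 2 * y ^ 2) := hy2.mul_left _
      have h3 : Even (y ^ 4) := by rw [show y ^ 4 = y ^ 2 * y ^ 2 by ring]; exact hy2.mul_left _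
      exact (h1.add_even h2).add_even h3
    rcases Nat.even_or_odd z with hze | hzo
    · exfalso
      have : Even (z ^ 2) := by rw [pow_two]; exact hze.mul_right z
      exact (Nat.not_even_iff_odd.mpr hzsq) this
    · exact hzo
  -- z is coprime to x and to y
  have key : ∀ a b : ℕ, z ^ 2 = a ^ 2 * (a ^ 2 + b ^ 2) + b ^ 4 → Nat.Coprime a b →
      Nat.Coprime z a := by
    intro a b heq hab
    have hd : Nat.gcd z a ^ 2 ∣ b ^ 4 := by
      have h1 : Nat.gcd z a ^ 2 ∣ z ^ 2 := pow_dvd_pow_of_dvd (Nat.gcd_dvd_left z a) 2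
      have h2 : Nat.gcd z a ^ 2 ∣ a ^ 2 * (a ^ 2 + b ^ 2) :=
        dvd_mul_of_dvd_left (pow_dvd_pow_of_dvd (Nat.gcd_dvd_right z a) 2) _
      exact (Nat.dvd_add_right h2).mp (heq ▸ h1)
    have hcop : Nat.Coprime (Nat.gcd z a ^ 2) (b ^ 4) :=
      Nat.Coprime.pow 2 4 (Nat.Coprime.coprime_dvd_left (Nat.gcd_dvd_right z a) hab)
    have h1 : Nat.gcd z a ^ 2 = 1 := Nat.Coprime.eq_one_of_dvd hcop hd
    have h2 : Nat.gcd z a ∣ 1 := h1 ▸ dvd_pow_self (Nat.gcd z a) two_ne_zero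
    exact Nat.dvd_one.mp h2
  have hzx : Nat.Coprime z x := key x y (by rw [h]; ring) hco
  have hzy : Nat.Coprime z y := key y x (by rw [h]; ring) hco.symm
  have hzxy : Nat.Coprime z (x * y) := Nat.Coprime.mul_right hzx hzy
  -- the Pythagorean triple  z² + (xy)² = (x²+y²)²
  have hPyth : z ^ 2 + (x * y) ^ 2 = (x ^ 2 + y ^ 2) ^ 2 := by rw [h]; ring
  have tri : PythagoreanTriple (z : ℤ) ((x : ℤ) * y) ((x : ℤ) ^ 2 + (y : ℤ) ^ 2) := by
    have h' := congrArg (Nat.cast : ℕ → ℤ) hPyth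
    push_cast at h'
    show (z : ℤ) * z + (x : ℤ) * y * ((x : ℤ) * y) = _ * _
    linear_combination h'
  have hco1 : Int.gcd (z : ℤ) ((x : ℤ) * y) = 1 := by
    have h2t : ((x * y : ℕ) : ℤ) = (x : ℤ) * y := by push_cast; ring
    rw [← h2t]
    exact hzxy
  have hzp : (z : ℤ) % 2 = 1 := Int.odd_iff.mp (by exact_mod_cast hz_odd)
  have hpos : (0 : ℤ) < (x : ℤ) ^ 2 + (y : ℤ) ^ 2 := by positivity
  obtain ⟨M, N, hzMN, hxyMN, hsMN, hgMN, -, hM0⟩ := tri.coprime_classification' hco1 hzp hpos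
  have hxyZ : (x : ℤ) * y = 2 * (M * N) := by linarith
  have hxy0 : (0 : ℤ) < (x : ℤ) * y := by
    have : (0 : ℕ) < x * y := Nat.mul_pos hx0 hy0
    exact_mod_cast this
  have hMpos : 0 < M := by
    rcases hM0.lt_or_eq with h' | h'
    · exact h'
    · exfalso; rw [← h'] at hxyZ; simp at hxyZ; omega
  have hNpos : 0 < N := by
    by_contra h'
    push_neg at h'
    have := mul_nonpos_iff.mpr (Or.inr ⟨h', hMpos.le⟩)
    rw [mul_comm] at this
    linarith
  have hMc : (M.natAbs : ℤ) = M := Int.natAbs_of_nonneg hMpos.le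
  have hNc : (N.natAbs : ℤ) = N := Int.natAbs_of_nonneg hNpos.le
  apply no_SSys x y M.natAbs N.natAbs
  refine ⟨hx0, hy0, Int.natAbs_pos.mpr hMpos.ne', Int.natAbs_pos.mpr hNpos.ne', ?_, ?_, hco, hgMN⟩
  · have : (x : ℤ) ^ 2 + (y : ℤ) ^ 2 = (M.natAbs : ℤ) ^ 2 + (N.natAbs : ℤ) ^ 2 := by
      rw [hMc, hNc]; linarith
    exact_mod_cast this
  · have : (x : ℤ) * y = 2 * ((M.natAbs : ℤ) * (N.natAbs : ℤ)) := by
      rw [hMc, hNc]; linarith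
    exact_mod_cast this

theorem no_solution_z2_eq_x4_x2y2_y4 :
    ¬ ∃ x y z : ℕ, 0 < x ∧ 0 < y ∧ 0 < z ∧
      z ^ 2 = x ^ 4 + x ^ 2 * y ^ 2 + y ^ 4 := by
  rintro ⟨x, y, z, hx0, hy0, hz0, h⟩
  -- reduce to the coprime case
  set d := Nat.gcd x y with hd
  have hd0 : 0 < d := Nat.gcd_pos_of_pos_left y hx0
  have hdx : d ∣ x := Nat.gcd_dvd_left x y
  have hdy : d ∣ y := Nat.gcd_dvd_right x y
  obtain ⟨a, ha⟩ := hdx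
  obtain ⟨b, hb⟩ := hdy
  have hab : Nat.Coprime a b := by
    have h1 : a = x / d := by rw [ha]; rw [Nat.mul_div_cancel_left a hd0]
    have h2 : b = y / d := by rw [hb]; rw [Nat.mul_div_cancel_left b hd0]
    rw [h1, h2]
    exact Nat.coprime_div_gcd_div_gcd hd0
  have ha0 : 0 < a := by
    rcases Nat.eq_zero_or_pos a with h' | h'
    · exfalso; rw [h', mul_zero] at ha; omega
    · exact h'
  have hb0 : 0 < b := by
    rcases Nat.eq_zero_or_pos b with h' | h'
    · exfalso; rw [h', mul_zero] at hb; omega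
    · exact h'
  have heq : z ^ 2 = d ^ 4 * (a ^ 4 + a ^ 2 * b ^ 2 + b ^ 4) := by
    rw [h, ha, hb]; ring
  have hd2z : d ^ 2 ∣ z := by
    have h4 : (d ^ 2) ^ 2 ∣ z ^ 2 := ⟨a ^ 4 + a ^ 2 * b ^ 2 + b ^ 4, by rw [heq]; ring⟩
    exact (Nat.pow_dvd_pow_iff (by norm_num)).mp h4
  obtain ⟨w, hw⟩ := hd2z
  have hw0 : 0 < w := by
    rcases Nat.eq_zero_or_pos w with h' | h'
    · exfalso; rw [h', mul_zero] at hw; omega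
    · exact h'
  have hweq : w ^ 2 = a ^ 4 + a ^ 2 * b ^ 2 + b ^ 4 := by
    have h' : d ^ 4 * w ^ 2 = d ^ 4 * (a ^ 4 + a ^ 2 * b ^ 2 + b ^ 4) := by
      rw [← heq, hw]; ring
    exact Nat.eq_of_mul_eq_mul_left (pow_pos hd0 4) h'
  -- one of a, b is odd; use symmetry
  rcases Nat.even_or_odd a with hae | hao
  · have hbo : Odd b := by
      rcases Nat.even_or_odd b with hbe | hbo
      · exfalso
        have hdd : 2 ∣ Nat.gcd a b := Nat.dvd_gcd hae.two_dvd hbe.two_dvd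
        exact absurd (hab ▸ hdd) (by norm_num)
      · exact hbo
    exact coprime_case b a w hbo ha0 hw0 hab.symm (by rw [hweq]; ring)
  · exact coprime_case a b w hao hb0 hw0 hab hweq
end

section
/- There is no isosceles triangle all of whose side lengths, median lengths, and area are rational. Equivalently: there do not exist positive rationals A, B (legs A, A and base B satisfying the triangle inequality 2A > B) such that the median lengths h = sqrt(A^2 - B^2/4) and l = sqrt(2B^2 + A^2)/2 are both rational. -/
/-- Two odd squares cannot sum to a multiple of 4 of a square. -/
lemma aux_parity {e t f : ℤ} (ht : Odd t) (hf : Odd f) (h : 4 * e ^ 2 = t ^ 2 + f ^ 2) :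
    False := by
  obtain ⟨k, hk⟩ := ht
  obtain ⟨j, hj⟩ := hf
  have h2 : (4 : ℤ) ∣ 2 := ⟨e ^ 2 - k ^ 2 - k - j ^ 2 - j, by subst hk hj; linarith [h, sq_nonneg k]⟩
  norm_num at h2

/-- a positive member of a coprime pair with square product is a square -/
lemma aux_sq {X Y c : ℤ} (h : IsCoprime X Y) (heq : X * Y = c ^ 2) (hX : 0 < X) :
    ∃ e : ℤ, X = e ^ 2 := by
  obtain ⟨e, he | he⟩ := Int.sq_of_isCoprime h heq
  · exact ⟨e, he⟩
  · exfalso; nlinarith [sq_nonneg e]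

lemma odd_of_dvd_odd_s5 {a b : ℤ} (h : a ∣ b) (hb : Odd b) : Odd a := by
  rcases Int.even_or_odd a with ha | ha
  · exfalso
    obtain ⟨k, hk⟩ := h
    exact (Int.not_odd_iff_even.mpr (hk ▸ ha.mul_right k)) hb
  · exact ha

lemma coprime_two_of_odd {a : ℤ} (h : Odd a) : IsCoprime a 2 := by
  obtain ⟨k, hk⟩ := h
  exact ⟨1, -k, by subst hk; ring⟩



set_option maxHeartbeats 1000000 in
/-- Core of the classical fact: if `(m²+mn+n²)(m²-mn+n²)` is a perfect square with
`m, n` coprime positive of opposite parity (`m` odd), then we can manufacture a smaller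
instance of the quartic equation `(t²-s²)(t²-4s²) = c²`. -/
lemma T1core {m n q : ℤ} (hco : IsCoprime m n) (hm : 0 < m) (hn : 0 < n)
    (hom : Odd m) (hen : Even n)
    (heq : (m ^ 2 + m * n + n ^ 2) * (m ^ 2 - m * n + n ^ 2) = q ^ 2) :
    ∃ t s c : ℤ, 0 < t ∧ Odd t ∧ IsCoprime t s ∧ 0 < s ∧ c ≠ 0 ∧ 2 * s ≤ m * n ∧
      (t ^ 2 - s ^ 2) * (t ^ 2 - 4 * s ^ 2) = c ^ 2 := by
  obtain ⟨j, hj⟩ := hen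
  have hj' : n = 2 * j := by linarith
  have hjpos : 0 < j := by linarith
  -- coprimality of the two factors
  have hAm : IsCoprime (m ^ 2 + m * n + n ^ 2) m := by
    have h1 : IsCoprime (n ^ 2) m := (hco.symm).pow_left
    have h2 := h1.add_mul_left_left (m + n)
    have : n ^ 2 + m * (m + n) = m ^ 2 + m * n + n ^ 2 := by ring
    rwa [this] at h2
  have hAn : IsCoprime (m ^ 2 + m * n + n ^ 2) n := by
    have h1 : IsCoprime (m ^ 2) n := hco.pow_left
    have h2 := h1.add_mul_left_left (m + n)
    have : m ^ 2 + n * (m + n) = m ^ 2 + m * n + n ^ 2 := by ring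
    rwa [this] at h2
  have hAodd : Odd (m ^ 2 + m * n + n ^ 2) := by
    obtain ⟨i, hi⟩ := hom
    exact ⟨2 * i ^ 2 + 2 * i + 2 * i * j + j + 2 * j ^ 2, by rw [hi, hj']; ring⟩
  have hA2 : IsCoprime (m ^ 2 + m * n + n ^ 2) 2 := coprime_two_of_odd hAodd
  have hAB : IsCoprime (m ^ 2 + m * n + n ^ 2) (m ^ 2 - m * n + n ^ 2) := by
    have h1 : IsCoprime (m ^ 2 + m * n + n ^ 2) (2 * (m * n)) :=
      hA2.mul_right (hAm.mul_right hAn)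
    have h2 := h1.neg_right.add_mul_left_right 1
    have : -(2 * (m * n)) + (m ^ 2 + m * n + n ^ 2) * 1 = m ^ 2 - m * n + n ^ 2 := by ring
    rwa [this] at h2
  have hApos : 0 < m ^ 2 + m * n + n ^ 2 := by
    have h1 := mul_pos hm hn
    linarith [sq_nonneg m, sq_nonneg n]
  have hBpos : 0 < m ^ 2 - m * n + n ^ 2 := by
    have h1 := mul_pos hm hn
    have h2 : (m - n) ^ 2 = m ^ 2 - 2 * (m * n) + n ^ 2 := by ring
    linarith [sq_nonneg (m - n)]
  -- both factors are squares
  obtain ⟨a0, ha0⟩ := aux_sq hAB heq hApos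
  obtain ⟨b0, hb0⟩ := aux_sq hAB.symm (by linear_combination heq : (m ^ 2 - m * n + n ^ 2) * (m ^ 2 + m * n + n ^ 2) = q ^ 2) hBpos
  set a := |a0| with ha_def
  set b := |b0| with hb_def
  have ha : m ^ 2 + m * n + n ^ 2 = a ^ 2 := by rw [ha_def, sq_abs]; exact ha0
  have hb : m ^ 2 - m * n + n ^ 2 = b ^ 2 := by rw [hb_def, sq_abs]; exact hb0
  have hapos : 0 < a := by
    rcases (abs_nonneg a0).lt_or_eq with h | h
    · exact h
    · exfalso; rw [ha_def, ← h] at ha; simp at ha; linarith [hApos, ha]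
  have hbpos : 0 < b := by
    rcases (abs_nonneg b0).lt_or_eq with h | h
    · exact h
    · exfalso; rw [hb_def, ← h] at hb; simp at hb; linarith [hBpos, hb]
  have haodd : Odd a := by
    rcases Int.even_or_odd a with he | ho
    · exfalso
      obtain ⟨r, hr⟩ := he
      exact (Int.not_odd_iff_even.mpr ⟨2 * r ^ 2, by rw [ha, hr]; ring⟩) hAodd
    · exact ho
  have hbodd : Odd b := by
    rcases Int.even_or_odd b with he | ho
    · exfalso
      obtain ⟨r, hr⟩ := he
      have hBodd : Odd (m ^ 2 - m * n + n ^ 2) := by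
        obtain ⟨i, hi⟩ := hom
        exact ⟨2 * i ^ 2 + 2 * i - 2 * i * j - j + 2 * j ^ 2, by rw [hi, hj']; ring⟩
      exact (Int.not_odd_iff_even.mpr ⟨2 * r ^ 2, by rw [hb, hr]; ring⟩) hBodd
    · exact ho
  have hab : b < a := by
    have h0 := mul_pos hm hn
    have h1 : b ^ 2 < a ^ 2 := by linarith [ha, hb]
    exact lt_of_pow_lt_pow_left₀ 2 (le_of_lt hapos) h1
  -- P, Q
  obtain ⟨α, hα⟩ := haodd
  obtain ⟨β, hβ⟩ := hbodd
  set P := α + β + 1 with hP_def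
  set Q := α - β with hQ_def
  have hP2 : 2 * P = a + b := by rw [hP_def, hα, hβ]; ring
  have hQ2 : 2 * Q = a - b := by rw [hQ_def, hα, hβ]; ring
  have hPpos : 0 < P := by linarith
  have hQpos : 0 < Q := by linarith
  have hPQsum : P ^ 2 + Q ^ 2 = m ^ 2 + n ^ 2 := by
    have h4 : 4 * (P ^ 2 + Q ^ 2) = 4 * (m ^ 2 + n ^ 2) := by
      linear_combination (2 * P + (a + b)) * hP2 + (2 * Q + (a - b)) * hQ2 - 2 * ha - 2 * hb
    linarith
  have hPQprod : m * j = P * Q := by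
    have h4 : 4 * (m * j) = 4 * (P * Q) := by
      linear_combination (-2 * Q) * hP2 + (-(a + b)) * hQ2 + ha - hb + (-2 * m) * hj'
    linarith
  have hPQa : P + Q = a := by linarith
  have hPQb : P - Q = b := by linarith
  -- coprime P Q
  have hab_cop : IsCoprime a b := by
    have h1 : IsCoprime (a ^ 2) (b ^ 2) := by rw [← ha, ← hb]; exact hAB
    have h2 := IsCoprime.of_isCoprime_of_dvd_left h1 (dvd_pow_self a two_ne_zero)
    exact IsCoprime.of_isCoprime_of_dvd_right h2 (dvd_pow_self b two_ne_zero)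
  have hPQcop : IsCoprime P Q := by
    obtain ⟨u, v, huv⟩ := hab_cop
    exact ⟨u + v, u - v, by linear_combination u * hPQa + v * hPQb + huv⟩
  -- split m along P * Q
  obtain ⟨g0, h0, hg0, hh0, hm0⟩ := exists_dvd_and_dvd_of_dvd_mul (⟨j, hPQprod.symm⟩ : m ∣ P * Q)
  set g := |g0| with hg_def
  set hh := |h0| with hh_def
  have hgh : g * hh = m := by rw [hg_def, hh_def, ← abs_mul, ← hm0, abs_of_pos hm]
  have hgP : g ∣ P := (abs_dvd _ _).mpr hg0
  have hhQ : hh ∣ Q := (abs_dvd _ _).mpr hh0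
  have hgpos : 0 < g := by
    rcases (abs_nonneg g0).lt_or_eq with h | h
    · exact h
    · exfalso; rw [hg_def.trans h.symm, zero_mul] at hgh; omega
  have hhpos : 0 < hh := by
    rcases (abs_nonneg h0).lt_or_eq with h | h
    · exact h
    · exfalso; rw [hh_def.trans h.symm, mul_zero] at hgh; omega
  obtain ⟨p₁, hp₁⟩ := hgP
  obtain ⟨q₁, hq₁⟩ := hhQ
  have hp₁pos : 0 < p₁ := by
    rcases lt_trichotomy p₁ 0 with h' | h' | h'
    · exfalso; rw [hp₁] at hPpos; linarith [mul_neg_of_pos_of_neg hgpos h']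
    · exfalso; rw [hp₁, h', mul_zero] at hPpos; exact lt_irrefl _ hPpos
    · exact h'
  have hq₁pos : 0 < q₁ := by
    rcases lt_trichotomy q₁ 0 with h' | h' | h'
    · exfalso; rw [hq₁] at hQpos; linarith [mul_neg_of_pos_of_neg hhpos h']
    · exfalso; rw [hq₁, h', mul_zero] at hQpos; exact lt_irrefl _ hQpos
    · exact h'
  have hjeq : j = p₁ * q₁ := by
    have hmne : m ≠ 0 := ne_of_gt hm
    have : m * j = m * (p₁ * q₁) := by rw [hPQprod, hp₁, hq₁, ← hgh]; ring
    exact mul_left_cancel₀ hmne this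
  -- the key equation
  have hkey : g ^ 2 * (hh ^ 2 - p₁ ^ 2) = q₁ ^ 2 * (hh ^ 2 - 4 * p₁ ^ 2) := by
    have hsub : (g * hh) ^ 2 + 4 * (p₁ * q₁) ^ 2 = (g * p₁) ^ 2 + (hh * q₁) ^ 2 := by
      rw [hgh, ← hjeq, ← hp₁, ← hq₁]
      have : m ^ 2 + 4 * j ^ 2 = P ^ 2 + Q ^ 2 := by rw [hPQsum, hj']; ring
      linear_combination this
    linear_combination hsub
  have hgq₁ : IsCoprime g q₁ := by
    have h1 := IsCoprime.of_isCoprime_of_dvd_left hPQcop ⟨p₁, hp₁⟩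
    exact IsCoprime.of_isCoprime_of_dvd_right h1 ⟨hh, by rw [hq₁]; ring⟩
  have hdvd : q₁ ^ 2 ∣ hh ^ 2 - p₁ ^ 2 := by
    have h1 : IsCoprime (q₁ ^ 2) (g ^ 2) := (hgq₁.symm).pow
    exact h1.dvd_of_dvd_mul_left ⟨hh ^ 2 - 4 * p₁ ^ 2, hkey⟩
  obtain ⟨M, hM⟩ := hdvd
  have hM2 : hh ^ 2 - 4 * p₁ ^ 2 = g ^ 2 * M := by
    have hq₁ne : q₁ ^ 2 ≠ 0 := pow_ne_zero _ (ne_of_gt hq₁pos)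
    apply mul_left_cancel₀ hq₁ne
    linear_combination (-1) * hkey + g ^ 2 * hM
  have hMne : M ≠ 0 := by
    rintro rfl
    simp only [mul_zero] at hM hM2
    have hp2 : p₁ ^ 2 = 0 := by linarith [hM, hM2]
    have := pow_eq_zero_iff (n := 2) (by norm_num) |>.mp hp2
    omega
  have hhodd : Odd hh := odd_of_dvd_odd_s5 ⟨g, by rw [← hgh]; ring⟩ hom
  have hhp₁cop : IsCoprime hh p₁ := by
    have h1 := IsCoprime.of_isCoprime_of_dvd_left hPQcop.symm ⟨q₁, hq₁⟩
    exact IsCoprime.of_isCoprime_of_dvd_right h1 ⟨g, by rw [hp₁]; ring⟩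
  refine ⟨hh, p₁, g * q₁ * M, hhpos, hhodd, hhp₁cop, hp₁pos, ?_, ?_, ?_⟩
  · intro hzero
    rcases mul_eq_zero.mp hzero with h' | h'
    · rcases mul_eq_zero.mp h' with h'' | h'' <;> omega
    · exact hMne h'
  · have h1 : p₁ ≤ P := by
      have h0 := mul_le_mul_of_nonneg_right (by linarith : (1:ℤ) ≤ g) hp₁pos.le
      rw [one_mul] at h0; rw [hp₁]; exact h0
    have h2 : P ≤ P * Q := le_mul_of_one_le_right hPpos.le hQpos
    calc 2 * p₁ ≤ 2 * (P * Q) := by linarith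
    _ = m * n := by rw [← hPQprod, hj']; ring
  · rw [hM, hM2]; ring




lemma T1step' {m n q : ℤ} (hco : IsCoprime m n) (hm : 0 < m) (hn : 0 < n)
    (hpar : Odd m ∧ Even n ∨ Even m ∧ Odd n)
    (heq : (m ^ 2 + m * n + n ^ 2) * (m ^ 2 - m * n + n ^ 2) = q ^ 2) :
    ∃ t s c : ℤ, 0 < t ∧ Odd t ∧ IsCoprime t s ∧ 0 < s ∧ c ≠ 0 ∧ 2 * s ≤ m * n ∧
      (t ^ 2 - s ^ 2) * (t ^ 2 - 4 * s ^ 2) = c ^ 2 := by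
  rcases hpar with ⟨h1, h2⟩ | ⟨h1, h2⟩
  · exact T1core hco hm hn h1 h2 heq
  · obtain ⟨t, s, c, H1, H2, H3, H4, H5, H6, H7⟩ :=
      T1core hco.symm hn hm h2 h1 (q := q) (by linear_combination heq)
    refine ⟨t, s, c, H1, H2, H3, H4, H5, ?_, H7⟩
    rw [mul_comm n m] at H6; exact H6

lemma T1step {m n q : ℤ} (hco : IsCoprime m n) (hmn : 0 < m * n)
    (hpar : m % 2 = 0 ∧ n % 2 = 1 ∨ m % 2 = 1 ∧ n % 2 = 0)
    (heq : (m ^ 2 + m * n + n ^ 2) * (m ^ 2 - m * n + n ^ 2) = q ^ 2) :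
    ∃ t s c : ℤ, 0 < t ∧ Odd t ∧ IsCoprime t s ∧ 0 < s ∧ c ≠ 0 ∧ 2 * s ≤ m * n ∧
      (t ^ 2 - s ^ 2) * (t ^ 2 - 4 * s ^ 2) = c ^ 2 := by
  have hpar' : Odd m ∧ Even n ∨ Even m ∧ Odd n := by
    rcases hpar with ⟨h1, h2⟩ | ⟨h1, h2⟩
    · exact Or.inr ⟨Int.even_iff.mpr h1, Int.odd_iff.mpr h2⟩
    · exact Or.inl ⟨Int.odd_iff.mpr h1, Int.even_iff.mpr h2⟩
  rcases lt_trichotomy m 0 with hm | hm | hm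
  · have hn : n < 0 := by
      rcases lt_trichotomy n 0 with h | h | h
      · exact h
      · exfalso; rw [h, mul_zero] at hmn; exact lt_irrefl _ hmn
      · exfalso; linarith [mul_neg_of_neg_of_pos hm h]
    have hco' : IsCoprime (-m) (-n) := hco.neg_left.neg_right
    have hpar'' : Odd (-m) ∧ Even (-n) ∨ Even (-m) ∧ Odd (-n) := by
      rcases hpar' with ⟨h1, h2⟩ | ⟨h1, h2⟩
      · exact Or.inl ⟨h1.neg, h2.neg⟩
      · exact Or.inr ⟨h1.neg, h2.neg⟩
    obtain ⟨t, s, c, H1, H2, H3, H4, H5, H6, H7⟩ :=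
      T1step' hco' (by linarith) (by linarith) hpar'' (q := q) (by linear_combination heq)
    exact ⟨t, s, c, H1, H2, H3, H4, H5, by linarith [H6, (by ring : (-m) * (-n) = m * n)], H7⟩
  · exfalso; rw [hm, zero_mul] at hmn; exact lt_irrefl _ hmn
  · have hn : 0 < n := by
      rcases lt_trichotomy n 0 with h | h | h
      · exfalso; linarith [mul_neg_of_pos_of_neg hm h]
      · exfalso; rw [h, mul_zero] at hmn; exact lt_irrefl _ hmn
      · exact h
    exact T1step' hco hm hn hpar' heq










set_option maxHeartbeats 1000000 in
/-- The quartic equation `(t²-s²)(t²-4s²) = c²` has no solutions with `t` odd,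
`s` positive, `t, s` coprime and `c ≠ 0`. -/
lemma no_E2 : ∀ (N : ℕ) (s t c : ℤ), s.natAbs = N → 0 < s → 0 < t → Odd t →
    IsCoprime t s → c ≠ 0 → (t ^ 2 - s ^ 2) * (t ^ 2 - 4 * s ^ 2) = c ^ 2 → False := by
  intro N
  induction N using Nat.strong_induction_on with
  | _ N ih =>
  intro s t c hN hs ht htodd hco hc heq
  have hc2 : 0 < c ^ 2 := lt_of_le_of_ne (sq_nonneg c) (Ne.symm (pow_ne_zero 2 hc))
  obtain ⟨u, v, huv⟩ : IsCoprime (t ^ 2) (s ^ 2) := hco.pow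
  obtain ⟨k, hk⟩ := htodd
  have hYodd : Odd (t ^ 2 - 4 * s ^ 2) :=
    ⟨2 * k ^ 2 + 2 * k - 2 * s ^ 2, by rw [hk]; ring⟩
  have hXYne : t ^ 2 - 4 * s ^ 2 ≠ 0 := by
    intro h0
    rw [h0, mul_zero] at heq
    exact hc (pow_eq_zero_iff (n := 2) (by norm_num) |>.mp heq.symm)
  rcases lt_or_gt_of_ne hXYne with hY | hY
  · -- Case II : t² < 4s²  (forces t² < s²)
    have hX : t ^ 2 - s ^ 2 < 0 := by
      by_contra hcon
      push_neg at hcon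
      have hnp : (t ^ 2 - s ^ 2) * (t ^ 2 - 4 * s ^ 2) ≤ 0 :=
        mul_nonpos_iff.mpr (Or.inl ⟨hcon, hY.le⟩)
      rw [heq] at hnp; linarith
    have hX2 : 0 < s ^ 2 - t ^ 2 := by linarith
    have hY2 : 0 < 4 * s ^ 2 - t ^ 2 := by linarith
    have hY2odd : Odd (4 * s ^ 2 - t ^ 2) :=
      ⟨2 * s ^ 2 - 2 * k ^ 2 - 2 * k - 1, by rw [hk]; ring⟩
    have heq2 : (s ^ 2 - t ^ 2) * (4 * s ^ 2 - t ^ 2) = c ^ 2 := by linear_combination heq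
    by_cases h3 : (3 : ℤ) ∣ (s ^ 2 - t ^ 2)
    · -- descent branch
      obtain ⟨X', hX'⟩ := h3
      have hY' : 4 * s ^ 2 - t ^ 2 = 3 * (X' + s ^ 2) := by linarith
      have e1 : (X' + s ^ 2) - X' = s ^ 2 := by ring
      have e2 : (X' + s ^ 2) - 4 * X' = t ^ 2 := by linarith
      have h3c : (3 : ℤ) ∣ c := by
        refine Int.prime_three.dvd_of_dvd_pow (n := 2) ⟨3 * (X' * (X' + s ^ 2)), ?_⟩
        rw [← heq2, hX', hY']; ring
      obtain ⟨c', hc'⟩ := h3c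
      have heq' : X' * (X' + s ^ 2) = c' ^ 2 := by
        apply mul_left_cancel₀ (by norm_num : (9 : ℤ) ≠ 0)
        rw [hX', hY', hc'] at heq2; linear_combination heq2
      have hcop : IsCoprime X' (X' + s ^ 2) :=
        ⟨-4 * u - v, u + v, by linear_combination u * e2 + v * e1 + huv⟩
      have hX'pos : 0 < X' := by linarith
      have hXs : 0 < X' + s ^ 2 := by linarith
      obtain ⟨e, he⟩ := aux_sq hcop heq' hX'pos
      obtain ⟨f, hf⟩ := aux_sq (c := c') hcop.symm (by linear_combination heq') hXs
      have hfodd : Odd f := by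
        rcases Int.even_or_odd f with hev | hod
        · exfalso
          obtain ⟨r, hr⟩ := hev
          rw [hY', hf, hr] at hY2odd
          exact (Int.not_odd_iff_even.mpr ⟨6 * r ^ 2, by ring⟩) hY2odd
        · exact hod
      have hene : e ≠ 0 := by
        intro h0; rw [h0] at he; simp at he; omega
      set e' := |e| with he'_def
      set f' := |f| with hf'_def
      have he'sq : e' ^ 2 = e ^ 2 := sq_abs e
      have hf'sq : f' ^ 2 = f ^ 2 := sq_abs f
      have he'pos : 0 < e' := abs_pos.mpr hene
      have hf'odd : Odd f' := by
        rcases abs_choice f with h | h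
        · rw [hf'_def, h]; exact hfodd
        · rw [hf'_def, h]; exact hfodd.neg
      -- Pythagorean triple t² + (2e')² = f'²
      have htri : PythagoreanTriple t (2 * e') f' := by
        show t * t + (2 * e') * (2 * e') = f' * f'
        have h1 : f ^ 2 - 4 * e ^ 2 = t ^ 2 := by
          rw [← he, ← hf]; linear_combination e2
        linear_combination (-1) * hf'sq + 4 * he'sq + (-1) * h1
      have hts : IsCoprime (t ^ 2) (e ^ 2) := by
        have e3 : s ^ 2 = 3 * e ^ 2 + t ^ 2 := by
          rw [← he]; linarith
        exact ⟨u + v, 3 * v, by linear_combination huv - v * e3⟩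
      have hte : IsCoprime t e' := by
        have h1 := IsCoprime.of_isCoprime_of_dvd_left hts (dvd_pow_self t two_ne_zero)
        have h2 := IsCoprime.of_isCoprime_of_dvd_right h1 (dvd_pow_self e two_ne_zero)
        rcases abs_choice e with h | h
        · rw [he'_def, h]; exact h2
        · rw [he'_def, h]; exact h2.neg_right
      have hgcd : Int.gcd t (2 * e') = 1 :=
        Int.isCoprime_iff_gcd_eq_one.mp ((coprime_two_of_odd ⟨k, hk⟩).mul_right hte)
      obtain ⟨m1, n1, hleg, hhyp, hmnco, hparity⟩ :=
        PythagoreanTriple.coprime_classification.mp ⟨htri, hgcd⟩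
      rcases hleg with ⟨ht1, he1⟩ | ⟨ht1, he1⟩
      swap
      · exact (Int.not_odd_iff_even.mpr ⟨m1 * n1, by linarith⟩) ⟨k, hk⟩
      have he'eq : e' = m1 * n1 := by linarith
      have hfne : f ≠ 0 := by
        intro h0; rw [h0] at hf; simp at hf; linarith
      have hf'pos : 0 < f' := by rw [hf'_def]; exact abs_pos.mpr hfne
      have hf'eq : f' = m1 ^ 2 + n1 ^ 2 := by
        rcases hhyp with h | h
        · exact h
        · exfalso
          linarith [sq_nonneg m1, sq_nonneg n1, h, hf'pos]
      have hprodpos : 0 < m1 * n1 := he'eq ▸ he'pos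
      have heqT : (m1 ^ 2 + m1 * n1 + n1 ^ 2) * (m1 ^ 2 - m1 * n1 + n1 ^ 2) = s ^ 2 := by
        have hsq : s ^ 2 = f' ^ 2 - e' ^ 2 := by
          rw [he'sq, hf'sq, ← he, ← hf]; ring
        rw [hf'eq, he'eq] at hsq; linear_combination (-1) * hsq
      obtain ⟨t', s', c', H1, H2, H3, H4, H5, H6, H7⟩ :=
        T1step (Int.isCoprime_iff_gcd_eq_one.mpr hmnco) hprodpos hparity heqT
      have he's : e' < s := by
        have ht2 : 0 < t ^ 2 := by positivity
        have h1 : e' ^ 2 < s ^ 2 := by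
          rw [he'sq, ← he]; linarith
        exact lt_of_pow_lt_pow_left₀ 2 hs.le h1
      have hs'lt : s' < s := by rw [← he'eq] at H6; linarith
      exact ih s'.natAbs (by omega) s' t' c' rfl H4 H1 H2 H3 H5 H7
    · -- contradiction branch
      have hcomb : (-4 * u - v) * (s ^ 2 - t ^ 2) + (u + v) * (4 * s ^ 2 - t ^ 2) = 3 := by
        linear_combination 3 * huv
      have hGd : ((Int.gcd (s ^ 2 - t ^ 2) (4 * s ^ 2 - t ^ 2) : ℤ)) ∣ 3 := by
        rw [← hcomb]
        exact dvd_add ((Int.gcd_dvd_left _ _).mul_left _) ((Int.gcd_dvd_right _ _).mul_left _)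
      have hG3 : Int.gcd (s ^ 2 - t ^ 2) (4 * s ^ 2 - t ^ 2) ∣ 3 := by exact_mod_cast hGd
      have hG1 : Int.gcd (s ^ 2 - t ^ 2) (4 * s ^ 2 - t ^ 2) = 1 := by
        rcases (Nat.prime_three.eq_one_or_self_of_dvd _ hG3) with h | h
        · exact h
        · exfalso
          apply h3
          have := Int.gcd_dvd_left (a := s ^ 2 - t ^ 2) (b := 4 * s ^ 2 - t ^ 2)
          rw [h] at this; exact_mod_cast this
      have hcop : IsCoprime (s ^ 2 - t ^ 2) (4 * s ^ 2 - t ^ 2) :=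
        Int.isCoprime_iff_gcd_eq_one.mpr hG1
      obtain ⟨f, hf⟩ := aux_sq (c := c) hcop.symm (by linear_combination heq2) hY2
      have hfodd : Odd f := by
        rcases Int.even_or_odd f with hev | hod
        · exfalso
          obtain ⟨r, hr⟩ := hev
          rw [hf, hr] at hY2odd
          exact (Int.not_odd_iff_even.mpr ⟨2 * r ^ 2, by ring⟩) hY2odd
        · exact hod
      exact aux_parity (e := s) ⟨k, hk⟩ hfodd (by linarith)
  · -- Case I : t² > 4s²
    have hX : 0 < t ^ 2 - s ^ 2 := by
      have hss : 0 < s ^ 2 := by positivity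
      linarith
    by_cases h3 : (3 : ℤ) ∣ (t ^ 2 - s ^ 2)
    · -- contradiction branch
      obtain ⟨X', hX'⟩ := h3
      have hY' : t ^ 2 - 4 * s ^ 2 = 3 * (X' - s ^ 2) := by linarith
      have e1 : 4 * X' - (X' - s ^ 2) = t ^ 2 := by linarith
      have e2 : X' - (X' - s ^ 2) = s ^ 2 := by ring
      have h3c : (3 : ℤ) ∣ c := by
        refine Int.prime_three.dvd_of_dvd_pow (n := 2) ⟨3 * (X' * (X' - s ^ 2)), ?_⟩
        rw [← heq, hX', hY']; ring
      obtain ⟨c', hc'⟩ := h3c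
      have heq' : X' * (X' - s ^ 2) = c' ^ 2 := by
        apply mul_left_cancel₀ (by norm_num : (9 : ℤ) ≠ 0)
        rw [hX', hY', hc'] at heq; linear_combination heq
      have hcop : IsCoprime X' (X' - s ^ 2) :=
        ⟨4 * u + v, -u - v, by linear_combination u * e1 + v * e2 + huv⟩
      have hX'pos : 0 < X' := by linarith
      have hXs : 0 < X' - s ^ 2 := by linarith
      obtain ⟨e, he⟩ := aux_sq hcop heq' hX'pos
      obtain ⟨f, hf⟩ := aux_sq (c := c') hcop.symm (by linear_combination heq') hXs
      have hfodd : Odd f := by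
        rcases Int.even_or_odd f with hev | hod
        · exfalso
          obtain ⟨r, hr⟩ := hev
          rw [hY', hf, hr] at hYodd
          exact (Int.not_odd_iff_even.mpr ⟨6 * r ^ 2, by ring⟩) hYodd
        · exact hod
      have e4 : 4 * e ^ 2 = t ^ 2 + f ^ 2 := by linear_combination e1 - 4 * he + hf
      exact aux_parity (e := e) ⟨k, hk⟩ hfodd e4
    · -- descent branch
      have hcomb : (4 * u + v) * (t ^ 2 - s ^ 2) + (-u - v) * (t ^ 2 - 4 * s ^ 2) = 3 := by
        linear_combination 3 * huv
      have hGd : ((Int.gcd (t ^ 2 - s ^ 2) (t ^ 2 - 4 * s ^ 2) : ℤ)) ∣ 3 := by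
        rw [← hcomb]
        exact dvd_add ((Int.gcd_dvd_left _ _).mul_left _) ((Int.gcd_dvd_right _ _).mul_left _)
      have hG3 : Int.gcd (t ^ 2 - s ^ 2) (t ^ 2 - 4 * s ^ 2) ∣ 3 := by exact_mod_cast hGd
      have hG1 : Int.gcd (t ^ 2 - s ^ 2) (t ^ 2 - 4 * s ^ 2) = 1 := by
        rcases (Nat.prime_three.eq_one_or_self_of_dvd _ hG3) with h | h
        · exact h
        · exfalso
          apply h3
          have := Int.gcd_dvd_left (a := t ^ 2 - s ^ 2) (b := t ^ 2 - 4 * s ^ 2)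
          rw [h] at this; exact_mod_cast this
      have hcop : IsCoprime (t ^ 2 - s ^ 2) (t ^ 2 - 4 * s ^ 2) :=
        Int.isCoprime_iff_gcd_eq_one.mpr hG1
      obtain ⟨e, he⟩ := aux_sq hcop heq hX
      obtain ⟨f, hf⟩ := aux_sq (c := c) hcop.symm (by linear_combination heq) hY
      have hfodd : Odd f := by
        rcases Int.even_or_odd f with hev | hod
        · exfalso
          obtain ⟨r, hr⟩ := hev
          rw [hf, hr] at hYodd
          exact (Int.not_odd_iff_even.mpr ⟨2 * r ^ 2, by ring⟩) hYodd
        · exact hod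
      set f' := |f| with hf'_def
      have hf'sq : f' ^ 2 = f ^ 2 := sq_abs f
      have hf'odd : Odd f' := by
        rcases abs_choice f with h | h
        · rw [hf'_def, h]; exact hfodd
        · rw [hf'_def, h]; exact hfodd.neg
      have htri : PythagoreanTriple f' (2 * s) t := by
        show f' * f' + (2 * s) * (2 * s) = t * t
        linear_combination hf'sq - hf
      have hfs2 : IsCoprime (f ^ 2) (s ^ 2) := ⟨u, 4 * u + v, by linear_combination (-u) * hf + huv⟩
      have hf's : IsCoprime f' s := by
        have h1 := IsCoprime.of_isCoprime_of_dvd_left hfs2 (dvd_pow_self f two_ne_zero)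
        have h2 := IsCoprime.of_isCoprime_of_dvd_right h1 (dvd_pow_self s two_ne_zero)
        rcases abs_choice f with h | h
        · rw [hf'_def, h]; exact h2
        · rw [hf'_def, h]; exact h2.neg_left
      have hgcd : Int.gcd f' (2 * s) = 1 :=
        Int.isCoprime_iff_gcd_eq_one.mp ((coprime_two_of_odd hf'odd).mul_right hf's)
      obtain ⟨m1, n1, hleg, hhyp, hmnco, hparity⟩ :=
        PythagoreanTriple.coprime_classification.mp ⟨htri, hgcd⟩
      rcases hleg with ⟨hf1, hs1⟩ | ⟨hf1, hs1⟩
      swap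
      · exact (Int.not_odd_iff_even.mpr ⟨m1 * n1, by linarith⟩) hf'odd
      have hs_eq : s = m1 * n1 := by linarith
      have ht_eq : t = m1 ^ 2 + n1 ^ 2 := by
        rcases hhyp with h | h
        · exact h
        · exfalso; linarith [sq_nonneg m1, sq_nonneg n1, h, ht]
      have hprodpos : 0 < m1 * n1 := hs_eq ▸ hs
      have heqT : (m1 ^ 2 + m1 * n1 + n1 ^ 2) * (m1 ^ 2 - m1 * n1 + n1 ^ 2) = e ^ 2 := by
        rw [ht_eq, hs_eq] at he
        linear_combination he
      obtain ⟨t', s', c', H1, H2, H3, H4, H5, H6, H7⟩ :=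
        T1step (Int.isCoprime_iff_gcd_eq_one.mpr hmnco) hprodpos hparity heqT
      have hs'lt : s' < s := by rw [← hs_eq] at H6; linarith
      exact ih s'.natAbs (by omega) s' t' c' rfl H4 H1 H2 H3 H5 H7










set_option maxHeartbeats 1000000 in
theorem no_perfect_isosceles_triangle :
    ¬ ∃ A B h l : ℚ, 0 < A ∧ 0 < B ∧ B < 2 * A ∧ 0 ≤ h ∧ 0 ≤ l ∧
      h ^ 2 = A ^ 2 - B ^ 2 / 4 ∧ 4 * l ^ 2 = 2 * B ^ 2 + A ^ 2 := by
  rintro ⟨A, B, h, l, hA, hB, hBA, hh0, hl0, hh, hl⟩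
  -- clear denominators
  set N : ℚ := (A.den : ℚ) * (B.den : ℚ) * (h.den : ℚ) * (l.den : ℚ) with hN_def
  have hd1 : (0:ℚ) < (A.den : ℚ) := by exact_mod_cast A.pos
  have hd2 : (0:ℚ) < (B.den : ℚ) := by exact_mod_cast B.pos
  have hd3 : (0:ℚ) < (h.den : ℚ) := by exact_mod_cast h.pos
  have hd4 : (0:ℚ) < (l.den : ℚ) := by exact_mod_cast l.pos
  have hNpos : 0 < N := by rw [hN_def]; exact mul_pos (mul_pos (mul_pos hd1 hd2) hd3) hd4
  set α : ℤ := A.num * ((B.den : ℤ) * (h.den : ℤ) * (l.den : ℤ)) with hα_def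
  set β : ℤ := B.num * ((A.den : ℤ) * (h.den : ℤ) * (l.den : ℤ)) with hβ_def
  set η : ℤ := h.num * ((A.den : ℤ) * (B.den : ℤ) * (l.den : ℤ)) with hη_def
  set lam : ℤ := l.num * ((A.den : ℤ) * (B.den : ℤ) * (h.den : ℤ)) with hlam_def
  have hαq : ((α : ℤ) : ℚ) = A * N := by
    rw [hα_def, hN_def]; push_cast
    rw [show A * ((A.den:ℚ) * (B.den:ℚ) * (h.den:ℚ) * (l.den:ℚ)) =
      (A * (A.den:ℚ)) * ((B.den:ℚ) * (h.den:ℚ) * (l.den:ℚ)) from by ring, Rat.mul_den_eq_num]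
  have hβq : ((β : ℤ) : ℚ) = B * N := by
    rw [hβ_def, hN_def]; push_cast
    rw [show B * ((A.den:ℚ) * (B.den:ℚ) * (h.den:ℚ) * (l.den:ℚ)) =
      (B * (B.den:ℚ)) * ((A.den:ℚ) * (h.den:ℚ) * (l.den:ℚ)) from by ring, Rat.mul_den_eq_num]
  have hηq : ((η : ℤ) : ℚ) = h * N := by
    rw [hη_def, hN_def]; push_cast
    rw [show h * ((A.den:ℚ) * (B.den:ℚ) * (h.den:ℚ) * (l.den:ℚ)) =
      (h * (h.den:ℚ)) * ((A.den:ℚ) * (B.den:ℚ) * (l.den:ℚ)) from by ring, Rat.mul_den_eq_num]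
  have hlamq : ((lam : ℤ) : ℚ) = l * N := by
    rw [hlam_def, hN_def]; push_cast
    rw [show l * ((A.den:ℚ) * (B.den:ℚ) * (h.den:ℚ) * (l.den:ℚ)) =
      (l * (l.den:ℚ)) * ((A.den:ℚ) * (B.den:ℚ) * (h.den:ℚ)) from by ring, Rat.mul_den_eq_num]
  -- integer equations
  have eq1 : 4 * η ^ 2 = 4 * α ^ 2 - β ^ 2 := by
    have hq : ((4 * η ^ 2 : ℤ) : ℚ) = ((4 * α ^ 2 - β ^ 2 : ℤ) : ℚ) := by
      push_cast
      rw [hηq, hαq, hβq]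
      linear_combination (4 * N ^ 2) * hh
    exact_mod_cast hq
  have eq2 : 4 * lam ^ 2 = 2 * β ^ 2 + α ^ 2 := by
    have hq : ((4 * lam ^ 2 : ℤ) : ℚ) = ((2 * β ^ 2 + α ^ 2 : ℤ) : ℚ) := by
      push_cast
      rw [hlamq, hαq, hβq]
      linear_combination (N ^ 2) * hl
    exact_mod_cast hq
  have hαpos : 0 < α := by
    have : (0:ℚ) < (α : ℚ) := by rw [hαq]; exact mul_pos hA hNpos
    exact_mod_cast this
  have hβpos : 0 < β := by
    have : (0:ℚ) < (β : ℚ) := by rw [hβq]; exact mul_pos hB hNpos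
    exact_mod_cast this
  have hβα : β < 2 * α := by
    have : (β : ℚ) < ((2 * α : ℤ) : ℚ) := by
      push_cast
      rw [hβq, hαq]
      have := mul_lt_mul_of_pos_right hBA hNpos
      linarith
    exact_mod_cast this
  have hηne : η ≠ 0 := by
    have hh2 : 0 < h ^ 2 := by
      have h1 : (0:ℚ) < (2 * A - B) * (2 * A + B) :=
        mul_pos (by linarith) (by linarith)
      have h2 : (2 * A - B) * (2 * A + B) = 4 * A ^ 2 - B ^ 2 := by ring
      rw [hh]; linarith
    have hhne : h ≠ 0 := by
      intro h0; rw [h0] at hh2; simp at hh2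
    intro h0
    have : (η : ℚ) = 0 := by exact_mod_cast congrArg (Int.cast : ℤ → ℚ) h0
    rw [hηq] at this
    exact (mul_ne_zero hhne (ne_of_gt hNpos)) this
  -- divide by the gcd
  set G : ℕ := Int.gcd α β with hG_def
  have hGpos : 0 < G := Int.gcd_pos_iff.mpr (Or.inl (ne_of_gt hαpos))
  set g : ℤ := (G : ℤ) with hg_def
  have hgpos : 0 < g := by rw [hg_def]; exact_mod_cast hGpos
  have hgne : g ≠ 0 := ne_of_gt hgpos
  have hgα : g ∣ α := Int.gcd_dvd_left α β
  have hgβ : g ∣ β := Int.gcd_dvd_right α β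
  set a : ℤ := α / g with ha_def
  set b : ℤ := β / g with hb_def
  have ha : g * a = α := Int.mul_ediv_cancel' hgα
  have hbg : g * b = β := Int.mul_ediv_cancel' hgβ
  have hab_gcd : Int.gcd a b = 1 := Int.gcd_div_gcd_div_gcd hGpos
  have habc : IsCoprime a b := Int.isCoprime_iff_gcd_eq_one.mpr hab_gcd
  have hapos : 0 < a := by
    rcases lt_trichotomy a 0 with h' | h' | h'
    · exfalso; have := mul_neg_of_pos_of_neg hgpos h'; rw [ha] at this; linarith
    · exfalso; rw [h', mul_zero] at ha; rw [← ha] at hαpos; exact lt_irrefl _ hαpos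
    · exact h'
  have hbpos : 0 < b := by
    rcases lt_trichotomy b 0 with h' | h' | h'
    · exfalso; have := mul_neg_of_pos_of_neg hgpos h'; rw [hbg] at this; linarith
    · exfalso; rw [h', mul_zero] at hbg; rw [← hbg] at hβpos; exact lt_irrefl _ hβpos
    · exact h'
  have hba : b < 2 * a := by
    have h2 : g * b < g * (2 * a) := by
      rw [hbg, show g * (2 * a) = 2 * (g * a) from by ring, ha]; exact hβα
    exact lt_of_mul_lt_mul_left h2 hgpos.le
  -- extract c₀ with c₀² = 4a² - b²
  have hdvd1 : g ^ 2 ∣ (2 * η) ^ 2 :=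
    ⟨4 * a ^ 2 - b ^ 2, by linear_combination eq1 - 4 * (g * a + α) * ha + (g * b + β) * hbg⟩
  have hgc : g ∣ 2 * η := (Int.pow_dvd_pow_iff two_ne_zero).mp hdvd1
  obtain ⟨c₀, hc₀⟩ := hgc
  have hc₀eq : c₀ ^ 2 = 4 * a ^ 2 - b ^ 2 := by
    apply mul_left_cancel₀ (pow_ne_zero 2 hgne)
    linear_combination (-(2 * η + g * c₀)) * hc₀ + eq1 - 4 * (g * a + α) * ha + (g * b + β) * hbg
  have hdvd2 : g ^ 2 ∣ (2 * lam) ^ 2 :=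
    ⟨2 * b ^ 2 + a ^ 2, by linear_combination eq2 - 2 * (g * b + β) * hbg - (g * a + α) * ha⟩
  have hge : g ∣ 2 * lam := (Int.pow_dvd_pow_iff two_ne_zero).mp hdvd2
  obtain ⟨e₀, he₀⟩ := hge
  have he₀eq : e₀ ^ 2 = 2 * b ^ 2 + a ^ 2 := by
    apply mul_left_cancel₀ (pow_ne_zero 2 hgne)
    linear_combination (-(2 * lam + g * e₀)) * he₀ + eq2 - 2 * (g * b + β) * hbg - (g * a + α) * ha
  have hc₀ne : c₀ ≠ 0 := by
    intro h0
    rw [h0, mul_zero] at hc₀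
    omega
  -- b must be even
  have hbev : Even b := by
    rcases Int.even_or_odd b with hev | hod
    · exact hev
    · exfalso
      obtain ⟨j, hjj⟩ := hod
      have hc₀odd : Odd c₀ := by
        rcases Int.even_or_odd c₀ with he' | ho'
        · exfalso
          obtain ⟨r, hr⟩ := he'
          have h41 : (4:ℤ) ∣ 1 := ⟨a ^ 2 - r ^ 2 - j ^ 2 - j, by
            have := hc₀eq; rw [hr, hjj] at this; linear_combination this⟩
          norm_num at h41
        · exact ho'
      exact aux_parity (e := a) hc₀odd ⟨j, hjj⟩ (by linarith [hc₀eq])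
  obtain ⟨b₁, hb₁⟩ := hbev
  have hb2 : b = 2 * b₁ := by linarith
  have hb₁pos : 0 < b₁ := by linarith
  have haodd : Odd a := by
    rcases Int.even_or_odd a with hev | hod
    · exfalso
      have h2a : (2:ℤ) ∣ a := hev.two_dvd
      have h2b : (2:ℤ) ∣ b := ⟨b₁, hb2⟩
      have := Int.dvd_gcd h2a h2b
      rw [hab_gcd] at this
      norm_num at this
    · exact hod
  have hc₀ev : Even c₀ := by
    rcases Int.even_or_odd c₀ with hev | hod
    · exact hev
    · exfalso
      obtain ⟨r, hr⟩ := hod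
      have h41 : (4:ℤ) ∣ 1 := ⟨a ^ 2 - b₁ ^ 2 - r ^ 2 - r, by
        have := hc₀eq; rw [hr, hb2] at this; linear_combination this⟩
      norm_num at h41
  obtain ⟨c₁, hc₁c⟩ := hc₀ev
  have hc₁c2 : c₀ = 2 * c₁ := by linarith
  have hc₁eq : c₁ ^ 2 = a ^ 2 - b₁ ^ 2 := by
    have := hc₀eq; rw [hc₁c2, hb2] at this; linarith
  have hc₁ne : c₁ ≠ 0 := by intro h0; rw [h0] at hc₁c2; simp at hc₁c2; exact hc₀ne hc₁c2
  -- e' = |e₀|, e'² = a² + 8 b₁²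
  set e' : ℤ := |e₀| with he'_def
  have he'sq : e' ^ 2 = a ^ 2 + 8 * b₁ ^ 2 := by
    rw [he'_def, sq_abs, he₀eq, hb2]; ring
  have he'a : a < e' := by
    have h1 : a ^ 2 < e' ^ 2 := by
      have : 0 < b₁ ^ 2 := by positivity
      linarith [he'sq]
    exact lt_of_pow_lt_pow_left₀ 2 (abs_nonneg e₀) h1
  have he'odd : Odd e' := by
    obtain ⟨i, hi⟩ := haodd
    rcases Int.even_or_odd e' with hev | hod
    · exfalso
      obtain ⟨r, hr⟩ := hev
      have h41 : (4:ℤ) ∣ 1 := ⟨r ^ 2 - i ^ 2 - i - 2 * b₁ ^ 2, by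
        have := he'sq; rw [hr, hi] at this; linear_combination (-1) * this⟩
      norm_num at h41
    · exact hod
  obtain ⟨i, hi⟩ := haodd
  obtain ⟨w, hw⟩ := he'odd
  set m₀ : ℤ := w - i with hm₀_def
  set n₀ : ℤ := w + i + 1 with hn₀_def
  have hEA : 2 * m₀ = e' - a := by rw [hm₀_def, hw, hi]; ring
  have hEA2 : 2 * n₀ = e' + a := by rw [hn₀_def, hw, hi]; ring
  have hm₀pos : 0 < m₀ := by linarith
  have hn₀pos : 0 < n₀ := by linarith
  have hm₀n₀ : m₀ * n₀ = 2 * b₁ ^ 2 := by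
    have h4 : 4 * (m₀ * n₀) = e' ^ 2 - a ^ 2 := by
      linear_combination (2 * n₀) * hEA + (e' - a) * hEA2
    linarith [he'sq]
  -- coprimality of m₀, n₀
  have hab₁ : IsCoprime a b₁ := by
    obtain ⟨u, v, huv⟩ := habc
    exact ⟨u, 2 * v, by linear_combination huv - v * hb2⟩
  have hae' : IsCoprime a e' := by
    have h8 : IsCoprime a 8 := by
      have := (coprime_two_of_odd ⟨i, hi⟩).pow_right (n := 3)
      rwa [show (2:ℤ)^3 = 8 from by norm_num] at this
    have hb₁sq : IsCoprime a (b₁ ^ 2) := hab₁.pow_right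
    have h1 : IsCoprime a (8 * b₁ ^ 2) := h8.mul_right hb₁sq
    have h2 := h1.add_mul_left_right a
    rw [show 8 * b₁ ^ 2 + a * a = a ^ 2 + 8 * b₁ ^ 2 from by ring, ← he'sq] at h2
    exact IsCoprime.of_isCoprime_of_dvd_right h2 (dvd_pow_self e' two_ne_zero)
  have hm₀n₀cop : IsCoprime m₀ n₀ := by
    obtain ⟨u, v, huv⟩ := hae'
    have hna : n₀ - m₀ = a := by linarith
    have hne : n₀ + m₀ = e' := by linarith
    exact ⟨v - u, u + v, by linear_combination u * hna + v * hne + huv⟩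
  -- split on parity of m₀
  rcases Int.even_or_odd m₀ with hm₀ev | hm₀od
  · -- m₀ even : m₀ = 2 s², n₀ = t²
    obtain ⟨m₁, hm₁⟩ := hm₀ev
    have hm₁2 : m₀ = 2 * m₁ := by linarith
    have hm₁pos : 0 < m₁ := by linarith
    have hsplit : m₁ * n₀ = b₁ ^ 2 := by
      have h2 : 2 * (m₁ * n₀) = 2 * b₁ ^ 2 := by
        linear_combination hm₀n₀ - n₀ * hm₁2
      linarith
    have hm₁n₀cop : IsCoprime m₁ n₀ :=
      IsCoprime.of_isCoprime_of_dvd_left hm₀n₀cop ⟨2, by linarith⟩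
    obtain ⟨s₀, hs₀⟩ := aux_sq (c := b₁) hm₁n₀cop hsplit hm₁pos
    obtain ⟨t₀, ht₀⟩ := aux_sq (c := b₁) hm₁n₀cop.symm (by linear_combination hsplit) hn₀pos
    set s : ℤ := |s₀| with hs_def
    set t : ℤ := |t₀| with ht_def
    have hssq : s ^ 2 = m₁ := by rw [hs_def, sq_abs]; exact hs₀.symm
    have htsq : t ^ 2 = n₀ := by rw [ht_def, sq_abs]; exact ht₀.symm
    have hspos : 0 < s := by
      rw [hs_def]; apply abs_pos.mpr; intro h0; rw [h0] at hs₀; simp at hs₀; omega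
    have htpos : 0 < t := by
      rw [ht_def]; apply abs_pos.mpr; intro h0; rw [h0] at ht₀; simp at ht₀; omega
    have hn₀odd : Odd n₀ := ⟨w - m₁, by linarith⟩
    have htodd : Odd t := by
      rcases Int.even_or_odd t with hev | hod
      · exfalso
        obtain ⟨r, hr⟩ := hev
        rw [← htsq, hr] at hn₀odd
        exact (Int.not_odd_iff_even.mpr ⟨2 * r ^ 2, by ring⟩) hn₀odd
      · exact hod
    have hst : s * t = b₁ := by
      have hsq2 : (s * t) ^ 2 = b₁ ^ 2 := by
        rw [mul_pow, hssq, htsq]; exact hsplit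
      have h0 : (b₁ - s * t) * (b₁ + s * t) = 0 := by linear_combination (-1) * hsq2
      rcases mul_eq_zero.mp h0 with h' | h'
      · linarith
      · exfalso; linarith [mul_pos hspos htpos]
    have hco_ts : IsCoprime t s := by
      have h1 : IsCoprime (t ^ 2) (s ^ 2) := by rw [htsq, hssq]; exact hm₁n₀cop.symm
      have h2 := IsCoprime.of_isCoprime_of_dvd_left h1 (dvd_pow_self t two_ne_zero)
      exact IsCoprime.of_isCoprime_of_dvd_right h2 (dvd_pow_self s two_ne_zero)
    have ha_eq : a = t ^ 2 - 2 * s ^ 2 := by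
      rw [htsq, hssq]; linarith
    have heqE2 : (t ^ 2 - s ^ 2) * (t ^ 2 - 4 * s ^ 2) = c₁ ^ 2 := by
      rw [ha_eq, ← hst] at hc₁eq
      linear_combination (-1) * hc₁eq
    exact no_E2 s.natAbs s t c₁ rfl hspos htpos htodd hco_ts hc₁ne heqE2
  · -- m₀ odd : n₀ even, n₀ = 2 s², m₀ = t²
    have hn₀ev : Even n₀ := by
      obtain ⟨r, hr⟩ := hm₀od
      exact ⟨w - r, by linarith⟩
    obtain ⟨n₁, hn₁⟩ := hn₀ev
    have hn₁2 : n₀ = 2 * n₁ := by linarith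
    have hn₁pos : 0 < n₁ := by linarith
    have hsplit : m₀ * n₁ = b₁ ^ 2 := by
      have h2 : 2 * (m₀ * n₁) = 2 * b₁ ^ 2 := by
        linear_combination hm₀n₀ - m₀ * hn₁2
      linarith
    have hm₀n₁cop : IsCoprime m₀ n₁ := by
      have := IsCoprime.of_isCoprime_of_dvd_right hm₀n₀cop ⟨2, by linarith⟩
      exact this
    obtain ⟨t₀, ht₀⟩ := aux_sq (c := b₁) hm₀n₁cop hsplit hm₀pos
    obtain ⟨s₀, hs₀⟩ := aux_sq (c := b₁) hm₀n₁cop.symm (by linear_combination hsplit) hn₁pos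
    set s : ℤ := |s₀| with hs_def
    set t : ℤ := |t₀| with ht_def
    have hssq : s ^ 2 = n₁ := by rw [hs_def, sq_abs]; exact hs₀.symm
    have htsq : t ^ 2 = m₀ := by rw [ht_def, sq_abs]; exact ht₀.symm
    have hspos : 0 < s := by
      rw [hs_def]; apply abs_pos.mpr; intro h0; rw [h0] at hs₀; simp at hs₀; omega
    have htpos : 0 < t := by
      rw [ht_def]; apply abs_pos.mpr; intro h0; rw [h0] at ht₀; simp at ht₀; omega
    have htodd : Odd t := by
      rcases Int.even_or_odd t with hev | hod
      · exfalso
        obtain ⟨r, hr⟩ := hev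
        rw [← htsq, hr] at hm₀od
        exact (Int.not_odd_iff_even.mpr ⟨2 * r ^ 2, by ring⟩) hm₀od
      · exact hod
    have hst : s * t = b₁ := by
      have hsq2 : (s * t) ^ 2 = b₁ ^ 2 := by
        rw [mul_pow, hssq, htsq]; linear_combination hsplit
      have h0 : (b₁ - s * t) * (b₁ + s * t) = 0 := by linear_combination (-1) * hsq2
      rcases mul_eq_zero.mp h0 with h' | h'
      · linarith
      · exfalso; linarith [mul_pos hspos htpos]
    have hco_ts : IsCoprime t s := by
      have h1 : IsCoprime (t ^ 2) (s ^ 2) := by rw [htsq, hssq]; exact hm₀n₁cop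
      have h2 := IsCoprime.of_isCoprime_of_dvd_left h1 (dvd_pow_self t two_ne_zero)
      exact IsCoprime.of_isCoprime_of_dvd_right h2 (dvd_pow_self s two_ne_zero)
    have ha_eq : a = 2 * s ^ 2 - t ^ 2 := by
      rw [htsq, hssq]; linarith
    have heqE2 : (t ^ 2 - s ^ 2) * (t ^ 2 - 4 * s ^ 2) = c₁ ^ 2 := by
      rw [ha_eq, ← hst] at hc₁eq
      linear_combination (-1) * hc₁eq
    exact no_E2 s.natAbs s t c₁ rfl hspos htpos htodd hco_ts hc₁ne heqE2
end

section
/- If a, b, c, d are positive integers with gcd(a, b) = 1, gcd(c, d) = 1, and (a^2 + 4b^2)c^2 = (a^2 + 3b^2)d^2, then a^2 + 4b^2 = d^2 and a^2 + 3b^2 = c^2. -/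
theorem split_equation (a b c d : ℕ) (ha : 0 < a) (hb : 0 < b) (hc : 0 < c) (hd : 0 < d)
    (hab : Nat.Coprime a b) (hcd : Nat.Coprime c d)
    (h : (a ^ 2 + 4 * b ^ 2) * c ^ 2 = (a ^ 2 + 3 * b ^ 2) * d ^ 2) :
    a ^ 2 + 4 * b ^ 2 = d ^ 2 ∧ a ^ 2 + 3 * b ^ 2 = c ^ 2 := by
  set A := a ^ 2 + 4 * b ^ 2 with hA
  set B := a ^ 2 + 3 * b ^ 2 with hB
  have hab2 : Nat.Coprime (a ^ 2) (b ^ 2) := hab.pow 2 2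
  have hg : Nat.Coprime A B := by
    have hdA : Nat.gcd A B ∣ A := Nat.gcd_dvd_left A B
    have hdB : Nat.gcd A B ∣ B := Nat.gcd_dvd_right A B
    have hb2 : Nat.gcd A B ∣ b ^ 2 := by
      have h1 : Nat.gcd A B ∣ A - B := Nat.dvd_sub hdA hdB
      have h2 : A - B = b ^ 2 := by omega
      rwa [h2] at h1
    have ha2 : Nat.gcd A B ∣ a ^ 2 := by
      have h1 : Nat.gcd A B ∣ B - 3 * b ^ 2 := Nat.dvd_sub hdB (hb2.mul_left 3)
      have h2 : B - 3 * b ^ 2 = a ^ 2 := by omega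
      rwa [h2] at h1
    exact Nat.eq_one_of_dvd_coprimes hab2 ha2 hb2
  have hcd2 : Nat.Coprime (c ^ 2) (d ^ 2) := hcd.pow 2 2
  have hAd : A ∣ d ^ 2 := by
    have : A ∣ B * d ^ 2 := ⟨c ^ 2, h.symm⟩
    exact (Nat.Coprime.dvd_of_dvd_mul_left hg this)
  have hdA : d ^ 2 ∣ A := by
    have : d ^ 2 ∣ A * c ^ 2 := ⟨B, by linarith [h]⟩
    exact (Nat.Coprime.dvd_of_dvd_mul_right hcd2.symm this)
  have hBc : B ∣ c ^ 2 := by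
    have : B ∣ A * c ^ 2 := ⟨d ^ 2, h⟩
    exact (Nat.Coprime.dvd_of_dvd_mul_left hg.symm this)
  have hcB : c ^ 2 ∣ B := by
    have : c ^ 2 ∣ B * d ^ 2 := ⟨A, by linarith [h]⟩
    exact (Nat.Coprime.dvd_of_dvd_mul_right hcd2 this)
  exact ⟨Nat.dvd_antisymm hAd hdA, Nat.dvd_antisymm hBc hcB⟩
end

section
/- The equation c^2 = a^2 + 3b^2 has no solution in positive integers a, b, c with gcd(a, b) = 1, a odd, b odd, together with d^2 = a^2 + 4b^2 for some positive integer d; i.e., there are no positive integers a, b, c, d with gcd(a,b)=1 such that a^2 + 3b^2 = c^2 and a^2 + 4b^2 = d^2. -/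
private lemma sqmod8 (x : ℤ) :
    (x % 2 = 1 ∧ x ^ 2 % 8 = 1) ∨ (x % 2 = 0 ∧ (x ^ 2 % 8 = 0 ∨ x ^ 2 % 8 = 4)) := by
  have h8 : ∀ m c : ℤ, (c + 8 * m) % 8 = c % 8 := fun m c => by
    exact Int.add_mul_emod_self_left c 8 m
  rcases Int.even_or_odd x with ⟨k, hk⟩ | ⟨k, hk⟩
  · rcases Int.even_or_odd k with ⟨t, ht⟩ | ⟨t, ht⟩
    · refine Or.inr ⟨by omega, Or.inl ?_⟩
      rw [show x ^ 2 = 0 + 8 * (2 * t ^ 2) by subst hk; subst ht; ring, h8]; norm_num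
    · refine Or.inr ⟨by omega, Or.inr ?_⟩
      rw [show x ^ 2 = 4 + 8 * (2 * t ^ 2 + 2 * t) by subst hk; subst ht; ring, h8]; norm_num
  · rcases Int.even_or_odd k with ⟨t, ht⟩ | ⟨t, ht⟩
    · refine Or.inl ⟨by omega, ?_⟩
      rw [show x ^ 2 = 1 + 8 * (2 * t ^ 2 + t) by subst hk; subst ht; ring, h8]; norm_num
    · refine Or.inl ⟨by omega, ?_⟩
      rw [show x ^ 2 = 1 + 8 * (2 * t ^ 2 + 3 * t + 1) by subst hk; subst ht; ring, h8]; norm_num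

private lemma bezout_half {k l : ℤ} (h : IsCoprime (l - k) (l + k)) : IsCoprime k l := by
  obtain ⟨u, v, huv⟩ := h
  exact ⟨v - u, u + v, by linear_combination huv⟩

private lemma coprime_two_of_odd_s12 {E : ℤ} (h : E % 2 = 1) : IsCoprime (2 : ℤ) E := by
  obtain ⟨k, hk⟩ : ∃ k, E = 2 * k + 1 := ⟨E / 2, by omega⟩
  exact ⟨-k, 1, by linear_combination hk⟩

private lemma coprime_three_of_not_dvd {x : ℤ} (h : ¬ (3:ℤ) ∣ x) : IsCoprime (3:ℤ) x := by
  have h3 : x % 3 = 1 ∨ x % 3 = 2 := by omega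
  rcases h3 with h3 | h3
  · obtain ⟨k, hk⟩ : ∃ k, x = 3 * k + 1 := ⟨x / 3, by omega⟩
    exact ⟨-k, 1, by linear_combination hk⟩
  · obtain ⟨k, hk⟩ : ∃ k, x = 3 * k + 2 := ⟨x / 3, by omega⟩
    exact ⟨-(2 * k + 1), 2, by linear_combination 2 * hk⟩

private lemma sq_sq {x y B : ℤ} (hx : 0 < x) (hy : 0 < y) (hco : IsCoprime x y)
    (heq : x * y = B ^ 2) :
    ∃ x0 y0 : ℤ, 0 < x0 ∧ 0 < y0 ∧ IsCoprime x0 y0 ∧ x = x0 ^ 2 ∧ y = y0 ^ 2 := by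
  obtain ⟨x0, hx0⟩ := Int.sq_of_isCoprime hco heq
  obtain ⟨y0, hy0⟩ := Int.sq_of_isCoprime (c := B) hco.symm (by rw [mul_comm]; exact heq)
  rcases hx0 with hx0 | hx0
  swap; · nlinarith [sq_nonneg x0]
  rcases hy0 with hy0 | hy0
  swap; · nlinarith [sq_nonneg y0]
  have hxne : x0 ≠ 0 := by rintro rfl; rw [hx0] at hx; norm_num at hx
  have hyne : y0 ≠ 0 := by rintro rfl; rw [hy0] at hy; norm_num at hy
  refine ⟨|x0|, |y0|, abs_pos.mpr hxne, abs_pos.mpr hyne, ?_,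
    by rw [sq_abs]; exact hx0, by rw [sq_abs]; exact hy0⟩
  have : IsCoprime (x0 ^ 2) (y0 ^ 2) := by rw [← hx0, ← hy0]; exact hco
  rw [← sq_abs x0, ← sq_abs y0] at this
  exact (this.of_isCoprime_of_dvd_left (dvd_pow_self _ two_ne_zero)).of_isCoprime_of_dvd_right
    (dvd_pow_self _ two_ne_zero)

private lemma kill1 (U V G H : ℤ) (hV : V % 8 = 1) (hU : U % 8 = 0 ∨ U % 8 = 1 ∨ U % 8 = 4)
    (hG : G % 8 = 0 ∨ G % 8 = 1 ∨ G % 8 = 4) (hH : H % 8 = 0 ∨ H % 8 = 1 ∨ H % 8 = 4)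
    (e1 : 3 * G = V - U) (e2 : 3 * H = V - 4 * U) : False := by omega

private lemma kill2 (U V G H : ℤ) (hV : V % 8 = 1) (hU : U % 8 = 0 ∨ U % 8 = 1 ∨ U % 8 = 4)
    (hG : G % 8 = 0 ∨ G % 8 = 1 ∨ G % 8 = 4) (hH : H % 8 = 0 ∨ H % 8 = 1 ∨ H % 8 = 4)
    (e1 : G = U - V) (e2 : H = 4 * U - V) : False := by omega

private lemma stepC {u v s : ℤ} (hu0 : 0 < u) (hv0 : 0 < v) (hs0 : 0 < s)
    (huv : IsCoprime u v) (hv1 : v % 2 = 1)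
    (GH : (v ^ 2 - u ^ 2) * (v ^ 2 - 4 * u ^ 2) = s ^ 2) :
    ∃ A B C D : ℤ, 0 < A ∧ 0 < B ∧ 0 < C ∧ 0 < D ∧ IsCoprime A B ∧
      A ^ 2 + 3 * B ^ 2 = C ^ 2 ∧ A ^ 2 + 4 * B ^ 2 = D ^ 2 ∧ D ^ 2 < 2 * u ^ 2 + v ^ 2 := by
  have hV8 : v ^ 2 % 8 = 1 := by
    rcases sqmod8 v with ⟨_, h'⟩ | ⟨h', _⟩
    · exact h'
    · omega
  have hU8 : u ^ 2 % 8 = 0 ∨ u ^ 2 % 8 = 1 ∨ u ^ 2 % 8 = 4 := by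
    rcases sqmod8 u with ⟨_, h'⟩ | ⟨_, h'⟩ <;> omega
  have cu2G : IsCoprime (u ^ 2) (v ^ 2 - u ^ 2) := by
    have hh := (huv.pow (m := 2) (n := 2)).add_mul_left_right (-1)
    rwa [show v ^ 2 + u ^ 2 * (-1) = v ^ 2 - u ^ 2 by ring] at hh
  have hvv : 0 < v ^ 2 := by positivity
  have huu : 0 < u ^ 2 := by positivity
  by_cases h3G : (3:ℤ) ∣ (v ^ 2 - u ^ 2)
  · -- 3 divides v^2 - u^2
    obtain ⟨G1, hG1⟩ := h3G
    have h3s : (3:ℤ) ∣ s := by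
      refine Int.prime_three.dvd_of_dvd_pow (n := 2) ⟨G1 * (v ^ 2 - 4 * u ^ 2), ?_⟩
      linear_combination - GH + (v ^ 2 - 4 * u ^ 2) * hG1
    obtain ⟨s1, hs1⟩ := h3s
    have hGH1 : G1 * (G1 - u ^ 2) = s1 ^ 2 :=
      mul_left_cancel₀ (by norm_num : (9:ℤ) ≠ 0)
        (by linear_combination GH + (s + 3 * s1) * hs1
              - (v ^ 2 - u ^ 2 + 3 * G1 - 3 * u ^ 2) * hG1)
    have hs1ne : s1 ≠ 0 := by rintro rfl; simp at hs1; omega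
    have hs1sq : 0 < s1 ^ 2 := by rcases lt_or_gt_of_ne hs1ne with h' | h' <;> nlinarith only [h']
    have cG1u : IsCoprime G1 (u ^ 2) :=
      cu2G.symm.of_isCoprime_of_dvd_left ⟨3, by linarith only [hG1]⟩
    have cG1H1 : IsCoprime G1 (G1 - u ^ 2) := by
      have hh := cG1u.neg_right.add_mul_left_right 1
      rwa [show -u ^ 2 + G1 * 1 = G1 - u ^ 2 by ring] at hh
    obtain ⟨g0, hg0⟩ := Int.sq_of_isCoprime cG1H1 hGH1
    obtain ⟨h0, hh0⟩ := Int.sq_of_isCoprime (c := s1) cG1H1.symm (by rw [mul_comm]; exact hGH1)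
    rcases hg0 with hg0 | hg0 <;> rcases hh0 with hh0 | hh0
    · -- both positive: mod 8 kill
      have hg8 : g0 ^ 2 % 8 = 0 ∨ g0 ^ 2 % 8 = 1 ∨ g0 ^ 2 % 8 = 4 := by
        rcases sqmod8 g0 with ⟨_, h'⟩ | ⟨_, h'⟩ <;> omega
      have hh8 : h0 ^ 2 % 8 = 0 ∨ h0 ^ 2 % 8 = 1 ∨ h0 ^ 2 % 8 = 4 := by
        rcases sqmod8 h0 with ⟨_, h'⟩ | ⟨_, h'⟩ <;> omega
      exact (kill1 (u ^ 2) (v ^ 2) (g0 ^ 2) (h0 ^ 2) hV8 hU8 hg8 hh8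
        (by linear_combination - hG1 - 3 * hg0)
        (by linear_combination - hG1 - 3 * hh0)).elim
    · -- mixed sign
      have hx : s1 ^ 2 = -(g0 * h0) ^ 2 := by
        linear_combination - hGH1 + (G1 - u ^ 2) * hg0 + g0 ^ 2 * hh0
      exact absurd hx (by intro hx'; linarith only [hx', hs1sq, sq_nonneg (g0 * h0)])
    · -- mixed sign
      have hx : s1 ^ 2 = -(g0 * h0) ^ 2 := by
        linear_combination - hGH1 + (G1 - u ^ 2) * hg0 - g0 ^ 2 * hh0
      exact absurd hx (by intro hx'; linarith only [hx', hs1sq, sq_nonneg (g0 * h0)])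
    · -- both negative: descent!
      have hg0ne : g0 ≠ 0 := by
        intro h0z
        apply hs1ne
        have hz : G1 = 0 := by rw [h0z] at hg0; simpa using hg0
        have : s1 ^ 2 = 0 := by rw [← hGH1, hz]; ring
        exact pow_eq_zero_iff (two_ne_zero) |>.mp this
      have hh0ne : h0 ≠ 0 := by
        intro h0z
        apply hs1ne
        have hz : G1 - u ^ 2 = 0 := by rw [h0z] at hh0; simpa using hh0
        have : s1 ^ 2 = 0 := by rw [← hGH1, hz]; ring
        exact pow_eq_zero_iff (two_ne_zero) |>.mp this
      obtain ⟨g, hgpos, hgsq⟩ : ∃ g : ℤ, 0 < g ∧ g ^ 2 = g0 ^ 2 :=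
        ⟨|g0|, abs_pos.mpr hg0ne, sq_abs g0⟩
      obtain ⟨w, hwpos, hwsq⟩ : ∃ w : ℤ, 0 < w ∧ w ^ 2 = h0 ^ 2 :=
        ⟨|h0|, abs_pos.mpr hh0ne, sq_abs h0⟩
      have E1 : v ^ 2 + 3 * g ^ 2 = u ^ 2 := by
        linear_combination hG1 + 3 * hg0 + 3 * hgsq
      have E2 : v ^ 2 + 4 * g ^ 2 = w ^ 2 :=
        mul_left_cancel₀ (by norm_num : (3:ℤ) ≠ 0)
          (by linear_combination 3 * hG1 + 12 * hg0 - 3 * hh0 + 12 * hgsq - 3 * hwsq)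
      have cvg : IsCoprime v g := by
        have c1 : IsCoprime v (u ^ 2) := huv.symm.pow_right
        rw [← E1] at c1
        have c2 := c1.add_mul_left_right (-v)
        rw [show v ^ 2 + 3 * g ^ 2 + v * (-v) = 3 * g ^ 2 by ring] at c2
        exact c2.of_isCoprime_of_dvd_right
          ((dvd_pow_self g two_ne_zero).trans (dvd_mul_left (g ^ 2) 3))
      exact ⟨v, g, u, w, hv0, hgpos, hu0, hwpos, cvg, E1, E2,
        by linarith only [E1, E2, hvv, sq_nonneg g]⟩
  · -- 3 does not divide v^2 - u^2
    have cG3 : IsCoprime (v ^ 2 - u ^ 2) 3 := (coprime_three_of_not_dvd h3G).symm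
    have cGH : IsCoprime (v ^ 2 - u ^ 2) (v ^ 2 - 4 * u ^ 2) := by
      have hh1 := (cG3.mul_right cu2G.symm).neg_right.add_mul_left_right 1
      rwa [show -(3 * u ^ 2) + (v ^ 2 - u ^ 2) * 1 = v ^ 2 - 4 * u ^ 2 by ring] at hh1
    have hsne : s ≠ 0 := hs0.ne'
    have hssq : 0 < s ^ 2 := by positivity
    obtain ⟨g0, hg0⟩ := Int.sq_of_isCoprime cGH GH
    obtain ⟨h0, hh0⟩ := Int.sq_of_isCoprime (c := s) cGH.symm (by rw [mul_comm]; exact GH)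
    rcases hg0 with hg0 | hg0 <;> rcases hh0 with hh0 | hh0
    · -- both positive: descent!
      have hg0ne : g0 ≠ 0 := by
        intro h0z
        apply hsne
        have hz : v ^ 2 - u ^ 2 = 0 := by rw [h0z] at hg0; simpa using hg0
        have : s ^ 2 = 0 := by rw [← GH, hz]; ring
        exact pow_eq_zero_iff (two_ne_zero) |>.mp this
      have hh0ne : h0 ≠ 0 := by
        intro h0z
        apply hsne
        have hz : v ^ 2 - 4 * u ^ 2 = 0 := by rw [h0z] at hh0; simpa using hh0
        have : s ^ 2 = 0 := by rw [← GH, hz]; ring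
        exact pow_eq_zero_iff (two_ne_zero) |>.mp this
      obtain ⟨g, hgpos, hgsq⟩ : ∃ g : ℤ, 0 < g ∧ g ^ 2 = g0 ^ 2 :=
        ⟨|g0|, abs_pos.mpr hg0ne, sq_abs g0⟩
      obtain ⟨w, hwpos, hwsq⟩ : ∃ w : ℤ, 0 < w ∧ w ^ 2 = h0 ^ 2 :=
        ⟨|h0|, abs_pos.mpr hh0ne, sq_abs h0⟩
      have E1 : w ^ 2 + 3 * u ^ 2 = g ^ 2 := by
        linear_combination hg0 - hh0 - hgsq + hwsq
      have E2 : w ^ 2 + 4 * u ^ 2 = v ^ 2 := by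
        linear_combination - hh0 + hwsq
      have cwu : IsCoprime w u := by
        have c1 : IsCoprime u (v ^ 2) := huv.pow_right
        have c2 := c1.add_mul_left_right (-(4 * u))
        rw [show v ^ 2 + u * (-(4 * u)) = v ^ 2 - 4 * u ^ 2 by ring, hh0, ← hwsq] at c2
        exact (c2.of_isCoprime_of_dvd_right (dvd_pow_self w two_ne_zero)).symm
      exact ⟨w, u, g, v, hwpos, hu0, hgpos, hv0, cwu, E1, E2,
        by nlinarith only [hu0]⟩
    · -- mixed sign
      have hx : s ^ 2 = -(g0 * h0) ^ 2 := by
        linear_combination - GH + (v ^ 2 - 4 * u ^ 2) * hg0 + g0 ^ 2 * hh0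
      exact absurd hx (by intro hx'; linarith only [hx', hssq, sq_nonneg (g0 * h0)])
    · -- mixed sign
      have hx : s ^ 2 = -(g0 * h0) ^ 2 := by
        linear_combination - GH + (v ^ 2 - 4 * u ^ 2) * hg0 - g0 ^ 2 * hh0
      exact absurd hx (by intro hx'; linarith only [hx', hssq, sq_nonneg (g0 * h0)])
    · -- both negative: mod 8 kill
      have hg8 : g0 ^ 2 % 8 = 0 ∨ g0 ^ 2 % 8 = 1 ∨ g0 ^ 2 % 8 = 4 := by
        rcases sqmod8 g0 with ⟨_, h'⟩ | ⟨_, h'⟩ <;> omega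
      have hh8 : h0 ^ 2 % 8 = 0 ∨ h0 ^ 2 % 8 = 1 ∨ h0 ^ 2 % 8 = 4 := by
        rcases sqmod8 h0 with ⟨_, h'⟩ | ⟨_, h'⟩ <;> omega
      exact (kill2 (u ^ 2) (v ^ 2) (g0 ^ 2) (h0 ^ 2) hV8 hU8 hg8 hh8
        (by linear_combination hg0) (by linear_combination hh0)).elim

set_option maxHeartbeats 2000000 in
private lemma descent : ∀ n : ℕ, ∀ a b c d : ℤ, 0 < a → 0 < b → 0 < c → 0 < d →
    IsCoprime a b → a ^ 2 + 3 * b ^ 2 = c ^ 2 → a ^ 2 + 4 * b ^ 2 = d ^ 2 →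
    d.natAbs = n → False := by
  intro n
  induction n using Nat.strong_induction_on with
  | _ n IH =>
  intro a b c d ha hb hc hd hab h1 h2 hdn
  have pa := sqmod8 a
  have pb := sqmod8 b
  have pc := sqmod8 c
  have pd := sqmod8 d
  -- not both even
  have habne : ¬ (a % 2 = 0 ∧ b % 2 = 0) := by
    rintro ⟨ea, eb⟩
    obtain ⟨u, v, huv⟩ := hab
    obtain ⟨a', rfl⟩ : ∃ a', a = 2 * a' := ⟨a / 2, by omega⟩
    obtain ⟨b', rfl⟩ : ∃ b', b = 2 * b' := ⟨b / 2, by omega⟩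
    have : (2:ℤ) ∣ 1 := ⟨u * a' + v * b', by linear_combination - huv⟩
    norm_num at this
  -- a is odd
  have ha1 : a % 2 = 1 := by
    by_contra hcon
    have ha0 : a % 2 = 0 := by omega
    have hb1 : b % 2 = 1 := by
      rcases pb with ⟨h', _⟩ | ⟨h', _⟩
      · exact h'
      · exact absurd ⟨ha0, h'⟩ habne
    have hA : a ^ 2 % 8 = 0 ∨ a ^ 2 % 8 = 4 := by
      rcases pa with ⟨h', _⟩ | ⟨_, h'⟩; · omega
      · exact h'
    have hB : b ^ 2 % 8 = 1 := by
      rcases pb with ⟨_, h'⟩ | ⟨h', _⟩; · exact h'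
      · omega
    have hC : c ^ 2 % 8 = 0 ∨ c ^ 2 % 8 = 1 ∨ c ^ 2 % 8 = 4 := by
      rcases pc with ⟨_, h'⟩ | ⟨_, h'⟩ <;> omega
    exact (by omega : ∀ A B C : ℤ, A + 3 * B = C → (A % 8 = 0 ∨ A % 8 = 4) → B % 8 = 1 →
      (C % 8 = 0 ∨ C % 8 = 1 ∨ C % 8 = 4) → False) _ _ _ h1 hA hB hC
  -- b is even
  have hb0 : b % 2 = 0 := by
    by_contra hcon
    have hb1 : b % 2 = 1 := by omega
    have hA : a ^ 2 % 8 = 1 := by rcases pa with ⟨_, h'⟩ | ⟨h', _⟩; · exact h'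
                                  · omega
    have hB : b ^ 2 % 8 = 1 := by rcases pb with ⟨_, h'⟩ | ⟨h', _⟩; · exact h'
                                  · omega
    have hD : d ^ 2 % 8 = 0 ∨ d ^ 2 % 8 = 1 ∨ d ^ 2 % 8 = 4 := by
      rcases pd with ⟨_, h'⟩ | ⟨_, h'⟩ <;> omega
    exact (by omega : ∀ A B D : ℤ, A + 4 * B = D → A % 8 = 1 → B % 8 = 1 →
      (D % 8 = 0 ∨ D % 8 = 1 ∨ D % 8 = 4) → False) _ _ _ h2 hA hB hD
  -- c is odd
  have hc1 : c % 2 = 1 := by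
    by_contra hcon
    have hA : a ^ 2 % 8 = 1 := by rcases pa with ⟨_, h'⟩ | ⟨h', _⟩; · exact h'
                                  · omega
    have hB : b ^ 2 % 8 = 0 ∨ b ^ 2 % 8 = 4 := by
      rcases pb with ⟨h', _⟩ | ⟨_, h'⟩; · omega
      · exact h'
    have hC : c ^ 2 % 8 = 0 ∨ c ^ 2 % 8 = 4 := by
      rcases pc with ⟨h', _⟩ | ⟨_, h'⟩; · omega
      · exact h'
    exact (by omega : ∀ A B C : ℤ, A + 3 * B = C → A % 8 = 1 → (B % 8 = 0 ∨ B % 8 = 4) →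
      (C % 8 = 0 ∨ C % 8 = 4) → False) _ _ _ h1 hA hB hC
  -- b = 2B
  obtain ⟨B, rfl⟩ : ∃ B, b = 2 * B := ⟨b / 2, by omega⟩
  have hB : 0 < B := by linarith
  -- 3 does not divide a
  have not3a : ¬ (3:ℤ) ∣ a := by
    rintro ⟨a3, ha3⟩
    have h3c : (3:ℤ) ∣ c := by
      refine Int.prime_three.dvd_of_dvd_pow (n := 2) ⟨3 * a3 ^ 2 + (2 * B) ^ 2, ?_⟩
      linear_combination - h1 + (a + 3 * a3) * ha3
    obtain ⟨c3, hc3⟩ := h3c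
    have h12 : 12 * B ^ 2 = 9 * (c3 ^ 2 - a3 ^ 2) := by
      linear_combination h1 + (c + 3 * c3) * hc3 - (a + 3 * a3) * ha3
    have h4B : 4 * B ^ 2 = 3 * (c3 ^ 2 - a3 ^ 2) := by linarith
    have h3B2 : (3:ℤ) ∣ B ^ 2 := by
      rcases Int.prime_three.dvd_mul.mp (⟨c3 ^ 2 - a3 ^ 2, h4B⟩ : (3:ℤ) ∣ 4 * B ^ 2) with h | h
      · norm_num at h
      · exact h
    have h3B : (3:ℤ) ∣ 2 * B := (Int.prime_three.dvd_of_dvd_pow (n := 2) h3B2).mul_left 2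
    have : IsUnit (3:ℤ) := hab.isUnit_of_dvd' ⟨a3, ha3⟩ h3B
    rw [Int.isUnit_iff] at this
    omega
  -- IsCoprime a c
  have hac : IsCoprime a c := by
    have h1' : IsCoprime a (3 * (2 * B) ^ 2) :=
      ((coprime_three_of_not_dvd not3a).symm).mul_right hab.pow_right
    have h2' := h1'.add_mul_left_right a
    rw [show 3 * (2 * B) ^ 2 + a * a = c ^ 2 by linear_combination h1] at h2'
    exact h2'.of_isCoprime_of_dvd_right (dvd_pow_self c two_ne_zero)
  -- p, q
  obtain ⟨p, hp⟩ : ∃ p, c + a = 2 * p := ⟨(c + a) / 2, by omega⟩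
  obtain ⟨q, hq⟩ : ∃ q, c - a = 2 * q := ⟨(c - a) / 2, by omega⟩
  have hca : a < c := by nlinarith
  have hp0 : 0 < p := by omega
  have hq0 : 0 < q := by omega
  have hpq : p * q = 3 * B ^ 2 := by
    have key : (2 * p) * (2 * q) = c ^ 2 - a ^ 2 := by rw [← hp, ← hq]; ring
    linarith [key, h1]
  have hpqcop : IsCoprime p q := by
    have e1 : p - q = a := by omega
    have e2 : p + q = c := by omega
    exact (bezout_half (by rw [e1, e2]; exact hac)).symm
  -- extract r, s
  obtain ⟨r, s, hr0, hs0, hrs, hB2, haw⟩ :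
      ∃ r s : ℤ, 0 < r ∧ 0 < s ∧ IsCoprime r s ∧ B ^ 2 = r ^ 2 * s ^ 2 ∧
        a ^ 2 = (s ^ 2 - 3 * r ^ 2) ^ 2 := by
    have h3pq : (3:ℤ) ∣ p * q := ⟨B ^ 2, hpq⟩
    rcases Int.prime_three.dvd_mul.mp h3pq with h3 | h3
    · obtain ⟨p1, hp1⟩ := h3
      have hpeq : p1 * q = B ^ 2 :=
        mul_left_cancel₀ (by norm_num : (3:ℤ) ≠ 0) (by linear_combination hpq - q * hp1)
      have hp10 : 0 < p1 := by nlinarith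
      have hcop1 : IsCoprime p1 q := hpqcop.of_isCoprime_of_dvd_left ⟨3, by linarith⟩
      obtain ⟨r, s, hr0', hs0', hcop', hr, hs⟩ := sq_sq hp10 hq0 hcop1 hpeq
      refine ⟨r, s, hr0', hs0', hcop', by rw [← hpeq, hr, hs]; try ring, ?_⟩
      have haeq : a = 3 * r ^ 2 - s ^ 2 := by
        have : p - q = a := by omega
        rw [← this, hp1, hr, hs]; try ring
      linear_combination (a + 3 * r ^ 2 - s ^ 2) * haeq
    · obtain ⟨q1, hq1⟩ := h3
      have hqeq : p * q1 = B ^ 2 :=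
        mul_left_cancel₀ (by norm_num : (3:ℤ) ≠ 0) (by linear_combination hpq - p * hq1)
      have hq10 : 0 < q1 := by nlinarith
      have hcop1 : IsCoprime p q1 := hpqcop.of_isCoprime_of_dvd_right ⟨3, by linarith⟩
      obtain ⟨s, r, hs0', hr0', hcop', hs, hr⟩ := sq_sq hp0 hq10 hcop1 hqeq
      refine ⟨r, s, hr0', hs0', hcop'.symm, by rw [← hqeq, hr, hs]; try ring, ?_⟩
      have haeq : a = s ^ 2 - 3 * r ^ 2 := by
        have : p - q = a := by omega
        rw [← this, hq1, hr, hs]; try ring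
      linear_combination (a + s ^ 2 - 3 * r ^ 2) * haeq
  -- w := s^2-3r^2 is odd, hence E := s^2+r^2 odd
  have hA1 : a ^ 2 % 8 = 1 := by
    rcases pa with ⟨_, h'⟩ | ⟨h', _⟩
    · exact h'
    · omega
  have hw1 : (s ^ 2 - 3 * r ^ 2) % 2 = 1 := by
    rcases sqmod8 (s ^ 2 - 3 * r ^ 2) with ⟨h', _⟩ | ⟨_, h'⟩
    · exact h'
    · rw [← haw] at h'; omega
  have hEodd : (s ^ 2 + r ^ 2) % 2 = 1 :=
    (by omega : ∀ S R : ℤ, (S - 3 * R) % 2 = 1 → (S + R) % 2 = 1) (s ^ 2) (r ^ 2) hw1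
  have hEF : (s ^ 2 + r ^ 2) * (s ^ 2 + 9 * r ^ 2) = d ^ 2 := by
    linear_combination h2 - haw - 16 * hB2
  have hE0 : 0 < s ^ 2 + r ^ 2 := by positivity
  have hF0 : 0 < s ^ 2 + 9 * r ^ 2 := by positivity
  have hEcop : IsCoprime (s ^ 2 + r ^ 2) (s ^ 2 + 9 * r ^ 2) := by
    have c2 : IsCoprime (s ^ 2 + r ^ 2) 8 := by
      have h2E := (coprime_two_of_odd_s12 hEodd).symm
      rw [show (8:ℤ) = 2 ^ 3 by norm_num]
      exact h2E.pow_right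
    have cr : IsCoprime (s ^ 2 + r ^ 2) (r ^ 2) := by
      have hh := (hrs.pow (m := 2) (n := 2)).add_mul_left_right 1
      rw [show s ^ 2 + r ^ 2 * 1 = s ^ 2 + r ^ 2 by ring] at hh
      exact hh.symm
    have hh := (c2.mul_right cr).add_mul_left_right 1
    rwa [show 8 * r ^ 2 + (s ^ 2 + r ^ 2) * 1 = s ^ 2 + 9 * r ^ 2 by ring] at hh
  obtain ⟨e, f, he_pos, hf_pos, hef_cop2, he, hf⟩ := sq_sq hE0 hF0 hEcop hEF
  have hef_cop : IsCoprime e f := by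
    have hh : IsCoprime (e ^ 2) (f ^ 2) := by rw [← he, ← hf]; exact hEcop
    exact (hh.of_isCoprime_of_dvd_left (dvd_pow_self _ two_ne_zero)).of_isCoprime_of_dvd_right
      (dvd_pow_self _ two_ne_zero)
  have hd2 : d ^ 2 = e ^ 2 * f ^ 2 := by rw [← he, ← hf]; exact hEF.symm
  have he1 : e % 2 = 1 := by
    have hE2 : e ^ 2 % 2 = 1 := by rw [← he]; omega
    rcases sqmod8 e with ⟨h', _⟩ | ⟨_, h'⟩
    · exact h'
    · omega
  have hFodd : (s ^ 2 + 9 * r ^ 2) % 2 = 1 :=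
    (by omega : ∀ S R : ℤ, (S + R) % 2 = 1 → (S + 9 * R) % 2 = 1) (s ^ 2) (r ^ 2) hEodd
  have hf1 : f % 2 = 1 := by
    have hF2 : f ^ 2 % 2 = 1 := by rw [← hf]; omega
    rcases sqmod8 f with ⟨h', _⟩ | ⟨_, h'⟩
    · exact h'
    · omega
  have hrr : 0 < r ^ 2 := by positivity
  have hef : e < f := by
    have h' : e ^ 2 < f ^ 2 := by
      rw [← he, ← hf]; linarith only [hrr]
    nlinarith only [h', hf_pos, he_pos]
  have hfd : f ≤ d := by
    have he1' : (1 : ℤ) ≤ e := by omega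
    have h1e2 : (1 : ℤ) ≤ e ^ 2 := by nlinarith only [he1']
    have hsq : f ^ 2 ≤ d ^ 2 := by
      have := le_mul_of_one_le_left (sq_nonneg f) h1e2
      linarith only [hd2, this]
    nlinarith only [hsq, hf_pos, hd]
  -- k, l
  obtain ⟨k, hk⟩ : ∃ k, f - e = 2 * k := ⟨(f - e) / 2, by omega⟩
  obtain ⟨l, hl⟩ : ∃ l, f + e = 2 * l := ⟨(f + e) / 2, by omega⟩
  have hk0 : 0 < k := by omega
  have hl0 : 0 < l := by omega
  have hkl : k * l = 2 * r ^ 2 := by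
    have key : (2 * k) * (2 * l) = f ^ 2 - e ^ 2 := by rw [← hk, ← hl]; ring
    have key2 : f ^ 2 - e ^ 2 = 8 * r ^ 2 := by rw [← he, ← hf]; ring
    linarith only [key, key2]
  have hklcop : IsCoprime k l := by
    apply bezout_half
    rw [show l - k = e by omega, show l + k = f by omega]
    exact hef_cop
  obtain ⟨u, v, hu0, hv0, huv, hr2, hf2, he2⟩ :
      ∃ u v : ℤ, 0 < u ∧ 0 < v ∧ IsCoprime u v ∧ r ^ 2 = u ^ 2 * v ^ 2 ∧
        f = 2 * u ^ 2 + v ^ 2 ∧ e ^ 2 = (v ^ 2 - 2 * u ^ 2) ^ 2 := by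
    rcases (by omega : k % 2 = 0 ∨ l % 2 = 0) with hke | hle
    · obtain ⟨k1, hk1⟩ : ∃ k1, k = 2 * k1 := ⟨k / 2, by omega⟩
      have hk10 : 0 < k1 := by omega
      have hk1l : k1 * l = r ^ 2 :=
        mul_left_cancel₀ (by norm_num : (2:ℤ) ≠ 0) (by linear_combination hkl - l * hk1)
      have hck1 : IsCoprime k1 l := hklcop.of_isCoprime_of_dvd_left ⟨2, by linarith⟩
      obtain ⟨u, v, hu0', hv0', huv', hu, hv⟩ := sq_sq hk10 hl0 hck1 hk1l
      refine ⟨u, v, hu0', hv0', huv', by rw [← hk1l, hu, hv],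
        by linarith only [hk, hl, hk1, hu, hv], ?_⟩
      have hee : e = v ^ 2 - 2 * u ^ 2 := by linarith only [hk, hl, hk1, hu, hv]
      linear_combination (e + v ^ 2 - 2 * u ^ 2) * hee
    · obtain ⟨l1, hl1⟩ : ∃ l1, l = 2 * l1 := ⟨l / 2, by omega⟩
      have hl10 : 0 < l1 := by omega
      have hkl1 : k * l1 = r ^ 2 :=
        mul_left_cancel₀ (by norm_num : (2:ℤ) ≠ 0) (by linear_combination hkl - k * hl1)
      have hck1 : IsCoprime k l1 := hklcop.of_isCoprime_of_dvd_right ⟨2, by linarith⟩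
      obtain ⟨v, u, hv0', hu0', hvu', hv, hu⟩ := sq_sq hk0 hl10 hck1 hkl1
      refine ⟨u, v, hu0', hv0', hvu'.symm, by rw [← hkl1, hu, hv]; ring,
        by linarith only [hk, hl, hl1, hu, hv], ?_⟩
      have hee : e = 2 * u ^ 2 - v ^ 2 := by linarith only [hk, hl, hl1, hu, hv]
      linear_combination (e + 2 * u ^ 2 - v ^ 2) * hee
  have hv1 : v % 2 = 1 := by
    have hV2 : v ^ 2 % 2 = 1 :=
      (by omega : ∀ F U V : ℤ, F = 2 * U + V → F % 2 = 1 → V % 2 = 1) f (u ^ 2) (v ^ 2) hf2 hf1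
    rcases sqmod8 v with ⟨h', _⟩ | ⟨_, h'⟩
    · exact h'
    · omega
  have hV8 : v ^ 2 % 8 = 1 := by
    rcases sqmod8 v with ⟨_, h'⟩ | ⟨h', _⟩
    · exact h'
    · omega
  have hU8 : u ^ 2 % 8 = 0 ∨ u ^ 2 % 8 = 1 ∨ u ^ 2 % 8 = 4 := by
    rcases sqmod8 u with ⟨_, h'⟩ | ⟨_, h'⟩ <;> omega
  have GH : (v ^ 2 - u ^ 2) * (v ^ 2 - 4 * u ^ 2) = s ^ 2 := by
    linear_combination - he - he2 + hr2
  obtain ⟨A, B1, C, D, hA0, hB0, hC0, hD0, hAB, hE1, hE2, hDlt⟩ :=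
    stepC hu0 hv0 hs0 huv hv1 GH
  have hDf : D ^ 2 < f := by linarith only [hDlt, hf2]
  have hDd : D < d := by
    have hD1 : (1:ℤ) ≤ D := hD0
    nlinarith only [hDf, hfd, hD1]
  exact IH D.natAbs (by omega) A B1 C D hA0 hB0 hC0 hD0 hAB hE1 hE2 rfl

theorem no_simultaneous_squares :
    ¬ ∃ a b c d : ℕ, 0 < a ∧ 0 < b ∧ 0 < c ∧ 0 < d ∧ Nat.Coprime a b ∧
      a ^ 2 + 3 * b ^ 2 = c ^ 2 ∧ a ^ 2 + 4 * b ^ 2 = d ^ 2 := by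
  rintro ⟨a, b, c, d, ha, hb, hc, hd, hab, h1, h2⟩
  exact descent (d : ℤ).natAbs a b c d (by exact_mod_cast ha) (by exact_mod_cast hb)
    (by exact_mod_cast hc) (by exact_mod_cast hd)
    (Nat.isCoprime_iff_coprime.mpr hab)
    (by exact_mod_cast h1) (by exact_mod_cast h2) rfl
end

section
/- There do not exist coprime positive integers m, n and a positive integer h such that h^2 = m^4 - 5m^2n^2 + 4n^4 with m^2 > 2n^2 and h > 0. -/
lemma sqe (a : ℤ) (n : ℤ) : a^2 % n = (a % n) * (a % n) % n := by
  rw [pow_two, Int.mul_emod]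

lemma sq_mod2 (a : ℤ) : a^2 % 2 = a % 2 := by
  have h2 : a % 2 = 0 ∨ a % 2 = 1 := by omega
  rw [sqe a 2]
  rcases h2 with h|h <;> rw [h] <;> decide

lemma sq_mod4 (a : ℤ) : a^2 % 4 = 0 ∨ a^2 % 4 = 1 := by
  have h4 : a % 4 = 0 ∨ a % 4 = 1 ∨ a % 4 = 2 ∨ a % 4 = 3 := by omega
  rw [sqe a 4]
  rcases h4 with h|h|h|h <;> rw [h] <;> decide

lemma sq_mod8 (a : ℤ) : a^2 % 8 = 0 ∨ a^2 % 8 = 1 ∨ a^2 % 8 = 4 := by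
  have h8 : a % 8 = 0 ∨ a % 8 = 1 ∨ a % 8 = 2 ∨ a % 8 = 3 ∨ a % 8 = 4 ∨ a % 8 = 5 ∨ a % 8 = 6 ∨ a % 8 = 7 := by omega
  rw [sqe a 8]
  rcases h8 with h|h|h|h|h|h|h|h <;> rw [h] <;> decide

lemma odd_sq_mod8 (a : ℤ) (h : a % 2 = 1) : a^2 % 8 = 1 := by
  have h8 : a % 8 = 1 ∨ a % 8 = 3 ∨ a % 8 = 5 ∨ a % 8 = 7 := by omega
  rw [sqe a 8]
  rcases h8 with h|h|h|h <;> rw [h] <;> decide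

lemma odd_sq_mod4 (a : ℤ) (h : a % 2 = 1) : a^2 % 4 = 1 := by
  have := odd_sq_mod8 a h; omega

lemma even_sq_mod4 (a : ℤ) (h : a % 2 = 0) : a^2 % 4 = 0 := by
  have h4 : a % 4 = 0 ∨ a % 4 = 2 := by omega
  rw [sqe a 4]
  rcases h4 with h|h <;> rw [h] <;> decide

lemma one_le_sq {a : ℤ} (h : 0 < a) : 1 ≤ a^2 := by nlinarith

lemma sq_le_sq'' {a b : ℤ} (ha : 0 ≤ a) (h : a ≤ b) : a^2 ≤ b^2 := by nlinarith

lemma mul_ge_one' {a b : ℤ} (ha : 1 ≤ a) (hb : 1 ≤ b) : 1 ≤ a*b := by nlinarith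

lemma one_le_sq' {a : ℤ} (h : a ≠ 0) : 1 ≤ a^2 := by
  rcases lt_or_gt_of_ne h with h|h <;> nlinarith

lemma abs_le_sq (a : ℤ) : |a| ≤ a^2 := by
  rcases abs_cases a with ⟨h1,h2⟩|⟨h1,h2⟩ <;> rcases lt_trichotomy a 0 with h|h|h <;> nlinarith

lemma abs_emod_two (a : ℤ) : |a| % 2 = a % 2 := by
  rcases abs_cases a with ⟨h,_⟩|⟨h,_⟩ <;> omega

lemma abs_lt_aux {p q m : ℤ} (hm : m = p^2 + q^2) (hq : q ≠ 0) : |p| < m := by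
  have h1 : 1 ≤ q^2 := one_le_sq' hq
  have h2 := abs_le_sq p
  nlinarith [sq_nonneg p]

lemma abs_lt_aux2 {p q m1 : ℤ} (h : m1^2 = p^4+p^2*q^2+q^4) (hp : p ≠ 0) (hq : q ≠ 0)
    (hm1 : 0 < m1) : |p| < 2*m1 := by
  have hp2 : 1 ≤ p^2 := one_le_sq' hp
  have hq2 : 1 ≤ q^2 := one_le_sq' hq
  have hpq : 1 ≤ p^2*q^2 := by nlinarith
  have h1 : (p^2)^2 < m1^2 := by nlinarith
  have h2 : p^2 < m1 := by nlinarith [sq_nonneg p]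
  have h3 := abs_le_sq p
  linarith

lemma orient {p q w m : ℤ} (hcop : Int.gcd p q = 1)
    (hpar : p % 2 = 0 ∧ q % 2 = 1 ∨ p % 2 = 1 ∧ q % 2 = 0) (hp : p ≠ 0) (hq : q ≠ 0)
    (hquart : p^4 + p^2*q^2 + q^4 = w^2) (hbp : |p| < m) (hbq : |q| < m) :
    ∃ x y w' : ℤ, 0 < x ∧ 0 < y ∧ x % 2 = 1 ∧ y % 2 = 0 ∧ IsCoprime x y ∧
      x^4 + x^2*y^2 + y^4 = w'^2 ∧ x < m ∧ y < m := by
  have habs : ∀ a b : ℤ, |a|^4 + |a|^2*|b|^2 + |b|^4 = a^4 + a^2*b^2 + b^4 := by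
    intro a b
    rw [show (|a|)^4 = ((|a|)^2)^2 from by ring, show (|b|)^4 = ((|b|)^2)^2 from by ring,
      sq_abs, sq_abs]
    ring
  rcases hpar with ⟨hpe, hqo⟩ | ⟨hpo, hqe⟩
  · refine ⟨|q|, |p|, w, abs_pos.mpr hq, abs_pos.mpr hp, ?_, ?_, ?_, ?_, hbq, hbp⟩
    · rw [abs_emod_two]; exact hqo
    · rw [abs_emod_two]; exact hpe
    · rw [Int.isCoprime_iff_gcd_eq_one]
      have e : Int.gcd |q| |p| = Int.gcd p q := by
        simp [Int.gcd, Int.natAbs_abs, Nat.gcd_comm]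
      rw [e]; exact hcop
    · rw [habs]; linear_combination hquart
  · refine ⟨|p|, |q|, w, abs_pos.mpr hp, abs_pos.mpr hq, ?_, ?_, ?_, ?_, hbp, hbq⟩
    · rw [abs_emod_two]; exact hpo
    · rw [abs_emod_two]; exact hqe
    · rw [Int.isCoprime_iff_gcd_eq_one]
      have e : Int.gcd |p| |q| = Int.gcd p q := by
        simp [Int.gcd, Int.natAbs_abs]
      rw [e]; exact hcop
    · rw [habs]; linear_combination hquart

lemma descent_step (x y w : ℤ) (hx : 0 < x) (hy : 0 < y) (hxo : x % 2 = 1) (hye : y % 2 = 0)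
    (hcop : IsCoprime x y) (heq : x^4 + x^2*y^2 + y^4 = w^2) :
    ∃ m n h : ℤ, 0 < m ∧ 0 < n ∧ 0 < h ∧ IsCoprime m n ∧ 2 * n ^ 2 < m ^ 2 ∧
      h ^ 2 = m ^ 4 - 5 * m ^ 2 * n ^ 2 + 4 * n ^ 4 ∧ m ≤ max x y := by
  have hS : (0:ℤ) < x^2+x*y+y^2 := by nlinarith
  have hT : (0:ℤ) < x^2-x*y+y^2 := by nlinarith
  have hxy2 : (x*y) % 2 = 0 := by rw [Int.mul_emod, hxo, hye]; decide
  have hSo : (x^2+x*y+y^2) % 2 = 1 := by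
    have h1 := sq_mod2 x; have h2 := sq_mod2 y; omega
  have hTo : (x^2-x*y+y^2) % 2 = 1 := by
    have h1 := sq_mod2 x; have h2 := sq_mod2 y; omega
  have c2S : IsCoprime (2:ℤ) (x^2+x*y+y^2) := by
    refine (Int.prime_two.coprime_iff_not_dvd).mpr ?_
    rintro ⟨r, hr⟩; omega
  have cSx : IsCoprime (x^2+x*y+y^2) x := by
    have := ((hcop.symm.mul_left hcop.symm).add_mul_left_left (x+y))
    rwa [show y*y+x*(x+y) = x^2+x*y+y^2 by ring] at this
  have cSy : IsCoprime (x^2+x*y+y^2) y := by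
    have := ((hcop.mul_left hcop).add_mul_left_left (x+y))
    rwa [show x*x+y*(x+y) = x^2+x*y+y^2 by ring] at this
  have cS2xy : IsCoprime (x^2+x*y+y^2) (2*(x*y)) :=
    c2S.symm.mul_right (cSx.mul_right cSy)
  have cST : IsCoprime (x^2+x*y+y^2) (x^2-x*y+y^2) := by
    have := (cS2xy.neg_right).add_mul_left_right 1
    rwa [show -(2*(x*y)) + (x^2+x*y+y^2)*1 = x^2 - x*y + y^2 by ring] at this
  have hST : (x^2+x*y+y^2) * (x^2-x*y+y^2) = w^2 := by linear_combination heq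
  obtain ⟨s0, hs0⟩ := Int.sq_of_isCoprime cST hST
  obtain ⟨t0, ht0⟩ := Int.sq_of_isCoprime cST.symm (by linear_combination heq :
    (x^2-x*y+y^2) * (x^2+x*y+y^2) = w^2)
  have hs0' : x^2+x*y+y^2 = s0^2 := by
    rcases hs0 with h|h
    · exact h
    · exfalso; have := sq_nonneg s0; linarith
  have ht0' : x^2-x*y+y^2 = t0^2 := by
    rcases ht0 with h|h
    · exact h
    · exfalso; have := sq_nonneg t0; linarith
  set s := |s0| with hsdef
  set t := |t0| with htdef
  have hss : x^2+x*y+y^2 = s^2 := by rw [hs0', hsdef, sq_abs]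
  have hts : x^2-x*y+y^2 = t^2 := by rw [ht0', htdef, sq_abs]
  have hspos : 0 < s := by
    refine abs_pos.mpr fun h0 => ?_
    rw [h0] at hs0'; norm_num at hs0'; linarith
  have htpos : 0 < t := by
    refine abs_pos.mpr fun h0 => ?_
    rw [h0] at ht0'; norm_num at ht0'; linarith
  have hso : s % 2 = 1 := by
    have h1 := sq_mod2 s; have h2 : s^2 % 2 = 1 := hss ▸ hSo; omega
  have hto : t % 2 = 1 := by
    have h1 := sq_mod2 t; have h2 : t^2 % 2 = 1 := hts ▸ hTo; omega
  have hst_cop : IsCoprime s t := by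
    have cST' : IsCoprime (s^2) (t^2) := by rwa [hss, hts] at cST
    exact (IsCoprime.pow_left_iff two_pos).mp ((IsCoprime.pow_right_iff two_pos).mp cST')
  have htlts : t < s := by
    have e : s^2 - t^2 = 2*(x*y) := by rw [← hss, ← hts]; ring
    have hxy : 0 < x*y := mul_pos hx hy
    by_contra hle
    push_neg at hle
    have h1 : s^2 ≤ t^2 := sq_le_sq'' hspos.le hle
    linarith
  obtain ⟨a, ha⟩ : ∃ a, s + t = 2*a := ⟨(s+t)/2, by omega⟩
  obtain ⟨b, hb⟩ : ∃ b, s - t = 2*b := ⟨(s-t)/2, by omega⟩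
  have hapos : 0 < a := by omega
  have hbpos : 0 < b := by omega
  have es : s = a + b := by omega
  have et : t = a - b := by omega
  have hab_eq : a^2 + b^2 = x^2 + y^2 := by
    have e1 : s^2 + t^2 = 2*x^2 + 2*y^2 := by rw [← hss, ← hts]; ring
    rw [es, et] at e1
    have e1' : 2*(a^2 + b^2) = 2*(x^2 + y^2) := by linear_combination e1
    linarith
  obtain ⟨c, hc⟩ : ∃ c, y = 2*c := ⟨y/2, by omega⟩
  have hcpos : 0 < c := by omega
  have hab2 : a * b = x * c := by
    have e2 : s^2 - t^2 = 2*(x*y) := by rw [← hss, ← hts]; ring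
    rw [es, et, hc] at e2
    have e2' : 4*(a*b) = 4*(x*c) := by linear_combination e2
    linarith
  have cab : IsCoprime a b := by
    obtain ⟨e, f, hef⟩ := hst_cop
    rw [es, et] at hef
    exact ⟨e+f, e-f, by linear_combination hef⟩
  have cxc : IsCoprime x c := by
    have := hcop; rw [hc] at this; exact this.of_mul_right_right
  obtain ⟨X1, Y1, hX1x, hY1c, haXY⟩ := exists_dvd_and_dvd_of_dvd_mul ⟨b, hab2.symm⟩
  have hX1nz : X1 ≠ 0 := by rintro rfl; rw [zero_mul] at haXY; omega
  have hY1nz : Y1 ≠ 0 := by rintro rfl; rw [mul_zero] at haXY; omega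
  set x1 := |X1| with hx1def
  set y1 := |Y1| with hy1def
  have hx1pos : 0 < x1 := abs_pos.mpr hX1nz
  have hy1pos : 0 < y1 := abs_pos.mpr hY1nz
  have ha' : a = x1 * y1 := by
    rw [hx1def, hy1def, ← abs_mul, ← haXY, abs_of_pos hapos]
  have hx1x : x1 ∣ x := (abs_dvd _ _).mpr hX1x
  have hy1c : y1 ∣ c := (abs_dvd _ _).mpr hY1c
  obtain ⟨x2, hx2⟩ := hx1x
  obtain ⟨y2, hy2⟩ := hy1c
  have hx2pos : 0 < x2 := by
    have h0 : 0 < x1 * x2 := hx.trans_eq hx2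
    rcases mul_pos_iff.mp h0 with ⟨_, h⟩ | ⟨h, _⟩
    · exact h
    · linarith
  have hy2pos : 0 < y2 := by
    have h0 : 0 < y1 * y2 := hcpos.trans_eq hy2
    rcases mul_pos_iff.mp h0 with ⟨_, h⟩ | ⟨h, _⟩
    · exact h
    · linarith
  have hb2 : b = x2 * y2 := by
    have hxy1 : x1 * y1 ≠ 0 := (mul_pos hx1pos hy1pos).ne'
    have h5 : x1 * y1 * b = x1 * y1 * (x2 * y2) := by
      linear_combination (-b)*ha' + hab2 + c*hx2 + (x1*x2)*hy2
    exact mul_left_cancel₀ hxy1 h5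
  have cop_y1x2 : IsCoprime y1 x2 :=
    (cab.of_isCoprime_of_dvd_left ⟨x1, by rw [ha']; ring⟩).of_isCoprime_of_dvd_right ⟨y2, hb2⟩
  have cop_x1y2 : IsCoprime x1 y2 :=
    (cxc.of_isCoprime_of_dvd_left ⟨x2, hx2⟩).of_isCoprime_of_dvd_right ⟨y1, by rw [hy2]; ring⟩
  have hid : y1^2 * (x1^2 - 4*y2^2) = x2^2 * (x1^2 - y2^2) := by
    have e3 := hab_eq
    rw [ha', hb2, hx2, hc, hy2] at e3
    linear_combination e3
  have cop2 : IsCoprime (y1^2) (x2^2) := cop_y1x2.pow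
  obtain ⟨k, hk⟩ := cop2.dvd_of_dvd_mul_left ⟨x1^2 - 4*y2^2, hid.symm⟩
  have hk2 : x1^2 - 4*y2^2 = x2^2 * k := by
    have hy1 : (y1:ℤ)^2 ≠ 0 := pow_ne_zero _ hy1pos.ne'
    apply mul_left_cancel₀ hy1
    linear_combination hid + x2^2 * hk
  have hknz : k ≠ 0 := by
    rintro rfl
    rw [mul_zero] at hk hk2
    have h6 : 0 < y2^2 := pow_pos hy2pos 2
    linarith
  have heq' : (y1*x2*k)^2 = x1^4 - 5*x1^2*y2^2 + 4*y2^4 := by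
    linear_combination (-(x1^2 - 4*y2^2))*hk - y1^2*k*hk2
  have hx1o : x1 % 2 = 1 := by
    have h2 : x1 % 2 = 0 ∨ x1 % 2 = 1 := by omega
    rcases h2 with h2|h2
    · exfalso
      obtain ⟨r, hr⟩ : ∃ r, x1 = 2*r := ⟨x1/2, by omega⟩
      rw [hx2, hr] at hxo
      have he : 2*r*x2 = 2*(r*x2) := by ring
      have := Int.mul_emod_right 2 (r*x2)
      omega
    · exact h2
  rcases lt_trichotomy k 0 with hkneg | hk0 | hkpos
  · have hk1 : k ≤ -1 := by omega
    have c2x1 : IsCoprime (2:ℤ) x1 := by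
      refine (Int.prime_two.coprime_iff_not_dvd).mpr ?_
      rintro ⟨r, hr⟩; omega
    have hpos1 : 0 < 2*(y1*x2*(-k)) := by
      have : 0 < -k := by omega
      have := mul_pos (mul_pos hy1pos hx2pos) this
      linarith
    refine ⟨2*y2, x1, 2*(y1*x2*(-k)), by linarith, hx1pos, hpos1,
      c2x1.mul_left cop_x1y2.symm, ?_, by linear_combination 4*heq', ?_⟩
    · have hy1sq : 1 ≤ y1^2 := one_le_sq hy1pos
      have h7 : y1^2 * k ≤ y1^2 * (-1) := by
        apply mul_le_mul_of_nonneg_left hk1 (pow_nonneg hy1pos.le 2)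
      have h8 : (2*y2)^2 = 4*y2^2 := by ring
      have h9 : 0 < y2^2 := pow_pos hy2pos 2
      linarith [hk]
    · have h10 : y2 ≤ y1 * y2 := le_mul_of_one_le_left hy2pos.le hy1pos
      have h1 : 2*y2 ≤ y := by rw [hc, hy2]; linarith
      exact h1.trans (le_max_right x y)
  · exact absurd hk0 hknz
  · have hk1 : 1 ≤ k := by omega
    refine ⟨x1, y2, y1*x2*k, hx1pos, hy2pos, mul_pos (mul_pos hy1pos hx2pos) hkpos,
      cop_x1y2, ?_, heq', ?_⟩
    · have hx2sq : 1 ≤ x2^2 := one_le_sq hx2pos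
      have h9 : 1 ≤ x2^2 * k := mul_ge_one' hx2sq hk1
      have h10 : 0 < y2^2 := pow_pos hy2pos 2
      linarith [hk2]
    · have h1 : x1 ≤ x := by
        rw [hx2]
        exact le_mul_of_one_le_right hx1pos.le hx2pos
      exact h1.trans (le_max_left x y)

lemma reduce (m n h : ℤ) (hm : 0 < m) (hn : 0 < n) (hh : 0 < h) (hcop : IsCoprime m n)
    (hlt : 2 * n ^ 2 < m ^ 2) (heq : h ^ 2 = m ^ 4 - 5 * m ^ 2 * n ^ 2 + 4 * n ^ 4) :
    ∃ x y w : ℤ, 0 < x ∧ 0 < y ∧ x % 2 = 1 ∧ y % 2 = 0 ∧ IsCoprime x y ∧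
      x^4 + x^2*y^2 + y^4 = w^2 ∧ x < m ∧ y < m := by
  have hn2 : 1 ≤ n^2 := one_le_sq hn
  have hA : 0 < m^2 - n^2 := by linarith
  have hAB : (m^2 - n^2) * (m^2 - 4*n^2) = h^2 := by linear_combination -heq
  have hB : 0 < m^2 - 4*n^2 := by
    have h0 : 0 < (m^2-n^2) * (m^2-4*n^2) := by rw [hAB]; exact pow_pos hh 2
    rcases mul_pos_iff.mp h0 with ⟨_, hB⟩ | ⟨hA', _⟩
    · exact hB
    · linarith
  have cm2n : IsCoprime (m^2) n := hcop.pow_left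
  have cAn : IsCoprime (m^2 - n^2) n := by
    have := cm2n.add_mul_left_left (-n)
    rwa [show m^2 + n*(-n) = m^2 - n^2 from by ring] at this
  have cBn : IsCoprime (m^2 - 4*n^2) n := by
    have := cm2n.add_mul_left_left (-(4*n))
    rwa [show m^2 + n*(-(4*n)) = m^2 - 4*n^2 from by ring] at this
  by_cases h3 : (3:ℤ) ∣ (m^2 - n^2)
  · -- case 3 ∣ m² - n²
    obtain ⟨A1, hA1⟩ := h3
    obtain ⟨B1, hB1⟩ : (3:ℤ) ∣ (m^2 - 4*n^2) := ⟨A1 - n^2, by linarith⟩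
    have hA1pos : 0 < A1 := by linarith
    have hB1pos : 0 < B1 := by linarith
    have hsub : A1 - B1 = n^2 := by linarith
    have cA1n : IsCoprime A1 n := cAn.of_isCoprime_of_dvd_left ⟨3, by rw [hA1]; ring⟩
    have cAB1 : IsCoprime A1 B1 := by
      rw [Int.isCoprime_iff_gcd_eq_one]
      have hd1 : (↑(Int.gcd A1 B1):ℤ) ∣ A1 := Int.gcd_dvd_left _ _
      have hd2 : (↑(Int.gcd A1 B1):ℤ) ∣ B1 := Int.gcd_dvd_right _ _
      have hd3 : (↑(Int.gcd A1 B1):ℤ) ∣ n^2 := by rw [← hsub]; exact dvd_sub hd1 hd2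
      have cdn : IsCoprime (↑(Int.gcd A1 B1):ℤ) (n^2) :=
        (cA1n.pow_right (n := 2)).of_isCoprime_of_dvd_left hd1
      have hu := cdn.isUnit_of_dvd' dvd_rfl hd3
      rw [Int.isUnit_iff] at hu
      omega
    have h9 : h^2 = 9*(A1*B1) := by linear_combination -hAB + (m^2-4*n^2)*hA1 + 3*A1*hB1
    have hd9 : (3:ℤ) ∣ h^2 := ⟨3*(A1*B1), by linarith⟩
    have h3h : (3:ℤ) ∣ h := Int.prime_three.dvd_of_dvd_pow hd9
    obtain ⟨h1', hh1⟩ := h3h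
    have hABk : A1 * B1 = h1'^2 := by
      have e : 9*(A1*B1) = 9*h1'^2 := by rw [← h9, hh1]; ring
      linarith
    obtain ⟨u, hu0⟩ := Int.sq_of_isCoprime cAB1 hABk
    have hu2 : A1 = u^2 := by
      rcases hu0 with h'|h'
      · exact h'
      · exfalso; have := sq_nonneg u; linarith
    obtain ⟨v, hv0⟩ := Int.sq_of_isCoprime cAB1.symm (by rw [mul_comm]; exact hABk)
    have hv2 : B1 = v^2 := by
      rcases hv0 with h'|h'
      · exact h'
      · exfalso; have := sq_nonneg v; linarith
    have hBv : m^2 - 4*n^2 = 3*v^2 := by rw [hB1, hv2]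
    have hAu : m^2 - n^2 = 3*u^2 := by rw [hA1, hu2]
    have hme : m % 2 = 0 := by
      by_contra hmo'
      have hmo : m % 2 = 1 := by omega
      have hm8 := odd_sq_mod8 m hmo
      have hv8 := sq_mod8 v
      rcases (by omega : n % 2 = 0 ∨ n % 2 = 1) with hne | hno
      · have hn4 := even_sq_mod4 n hne
        omega
      · have hn8 := odd_sq_mod8 n hno
        omega
    have hno : n % 2 = 1 := by
      by_contra hne'
      have hne : n % 2 = 0 := by omega
      have d1 : (2:ℤ) ∣ m := ⟨m/2, by omega⟩
      have d2 : (2:ℤ) ∣ n := ⟨n/2, by omega⟩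
      have := hcop.isUnit_of_dvd' d1 d2
      rw [Int.isUnit_iff] at this
      omega
    obtain ⟨m1, hm1def⟩ : ∃ m1, m = 2*m1 := ⟨m/2, by omega⟩
    have hm1pos : 0 < m1 := by omega
    have hve : v % 2 = 0 := by
      by_contra hvo'
      have hvo : v % 2 = 1 := by omega
      have hu4 := sq_mod4 u
      have hv4 := odd_sq_mod4 v hvo
      have hn4 := odd_sq_mod4 n hno
      have e : u^2 = v^2 + n^2 := by
        rw [← hu2, ← hv2]; linarith
      omega
    have cnv : IsCoprime n v := by
      have c1 : IsCoprime (3*B1) n := by rwa [← hB1]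
      have c2 : IsCoprime B1 n := c1.of_mul_left_right
      rw [hv2] at c2
      exact ((IsCoprime.pow_left_iff two_pos).mp c2).symm
    have hvnz : v ≠ 0 := by
      intro h0; rw [h0] at hv2; simp at hv2; omega
    have triple : PythagoreanTriple v n u := by
      have e : v*v + n*n = u*u := by
        have e1 : u^2 - v^2 = n^2 := by rw [← hu2, ← hv2]; linarith
        linear_combination -e1
      exact e
    have gcd1 : Int.gcd v n = 1 := Int.isCoprime_iff_gcd_eq_one.mp cnv.symm
    obtain ⟨p, q, hpq1, hu3, hpqgcd, hpqpar⟩ := PythagoreanTriple.coprime_classification.mp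
      ⟨triple, gcd1⟩
    have hu4 : u^2 = (p^2+q^2)^2 := by
      rcases hu3 with h'|h' <;> rw [h'] <;> ring
    rcases hpq1 with ⟨hv', hn'⟩ | ⟨hv', hn'⟩
    · -- v = p² - q² : impossible since v even, p,q opposite parity
      exfalso
      have s1 := sq_mod2 p
      have s2 := sq_mod2 q
      rcases hpqpar with ⟨h1,h2⟩|⟨h1,h2⟩ <;> omega
    · -- v = 2pq, n = p² - q²
      have hpnz : p ≠ 0 := by
        rintro rfl; rw [hv'] at hvnz; simp at hvnz
      have hqnz : q ≠ 0 := by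
        rintro rfl; rw [hv'] at hvnz; simp at hvnz
      have e4 : m^2 - n^2 = 3*(p^2+q^2)^2 := by rw [hAu, hu4]
      have e6 : m1^2 = p^4 + p^2*q^2 + q^4 := by
        rw [hm1def, hn'] at e4
        have e5 : 4*m1^2 = 4*(p^4+p^2*q^2+q^4) := by linear_combination e4
        linarith
      have hbp : |p| < m := by
        rw [hm1def]; exact abs_lt_aux2 e6 hpnz hqnz hm1pos
      have e6' : m1^2 = q^4 + q^2*p^2 + p^4 := by linear_combination e6
      have hbq : |q| < m := by
        rw [hm1def]
        exact abs_lt_aux2 (p := q) (q := p) e6' hqnz hpnz hm1pos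
      exact orient (w := m1) hpqgcd hpqpar hpnz hqnz (by linear_combination -e6) hbp hbq
  · -- case 3 ∤ m² - n² : both factors coprime squares
    have cAB : IsCoprime (m^2 - n^2) (m^2 - 4*n^2) := by
      rw [Int.isCoprime_iff_gcd_eq_one]
      have hd1 : (↑(Int.gcd (m^2-n^2) (m^2-4*n^2)):ℤ) ∣ (m^2-n^2) := Int.gcd_dvd_left _ _
      have hd2 : (↑(Int.gcd (m^2-n^2) (m^2-4*n^2)):ℤ) ∣ (m^2-4*n^2) := Int.gcd_dvd_right _ _
      have hd3 : (↑(Int.gcd (m^2-n^2) (m^2-4*n^2)):ℤ) ∣ 3*n^2 := by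
        have e : 3*n^2 = (m^2-n^2) - (m^2-4*n^2) := by ring
        rw [e]; exact dvd_sub hd1 hd2
      have cdn : IsCoprime (↑(Int.gcd (m^2-n^2) (m^2-4*n^2)):ℤ) (n^2) :=
        (cAn.pow_right (n := 2)).of_isCoprime_of_dvd_left hd1
      have hd4 : (↑(Int.gcd (m^2-n^2) (m^2-4*n^2)):ℤ) ∣ 3 := cdn.dvd_of_dvd_mul_right hd3
      have hd5 : Int.gcd (m^2-n^2) (m^2-4*n^2) ∣ 3 := by exact_mod_cast hd4
      rcases (Nat.dvd_prime Nat.prime_three).mp hd5 with h1|h1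
      · exact h1
      · exfalso
        apply h3
        rw [show ((3:ℤ)) = ((3:ℕ):ℤ) from rfl, ← h1]
        exact hd1
    obtain ⟨u, hu0⟩ := Int.sq_of_isCoprime cAB hAB
    have hu2 : m^2 - n^2 = u^2 := by
      rcases hu0 with h'|h'
      · exact h'
      · exfalso; have := sq_nonneg u; linarith
    obtain ⟨v, hv0⟩ := Int.sq_of_isCoprime cAB.symm (by rw [mul_comm]; exact hAB)
    have hv2 : m^2 - 4*n^2 = v^2 := by
      rcases hv0 with h'|h'
      · exact h'
      · exfalso; have := sq_nonneg v; linarith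
    have hmo : m % 2 = 1 := by
      by_contra hme'
      have hme : m % 2 = 0 := by omega
      have hno : n % 2 = 1 := by
        by_contra hne'
        have hne : n % 2 = 0 := by omega
        have d1 : (2:ℤ) ∣ m := ⟨m/2, by omega⟩
        have d2 : (2:ℤ) ∣ n := ⟨n/2, by omega⟩
        have := hcop.isUnit_of_dvd' d1 d2
        rw [Int.isUnit_iff] at this
        omega
      have hm4 := even_sq_mod4 m hme
      have hn4 := odd_sq_mod4 n hno
      have hu4 := sq_mod4 u
      omega
    have hvo : v % 2 = 1 := by
      have s1 := sq_mod2 v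
      have s2 := sq_mod2 m
      omega
    have cnv : IsCoprime n v := by
      have c2 := cBn
      rw [hv2] at c2
      exact ((IsCoprime.pow_left_iff two_pos).mp c2).symm
    have c2v : IsCoprime (2:ℤ) v := by
      refine (Int.prime_two.coprime_iff_not_dvd).mpr ?_
      rintro ⟨r, hr⟩; omega
    have gcd1 : Int.gcd (2*n) v = 1 :=
      Int.isCoprime_iff_gcd_eq_one.mp (c2v.mul_left cnv)
    have triple : PythagoreanTriple (2*n) v m := by
      have e : (2*n)*(2*n) + v*v = m*m := by linear_combination -hv2
      exact e
    obtain ⟨p, q, hpq1, hm2, hpqgcd, hpqpar⟩ := PythagoreanTriple.coprime_classification.mp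
      ⟨triple, gcd1⟩
    have hm' : m = p^2 + q^2 := by
      rcases hm2 with h'|h'
      · exact h'
      · exfalso; have := sq_nonneg p; have := sq_nonneg q; linarith
    rcases hpq1 with ⟨hn', hv'⟩ | ⟨hn', hv'⟩
    · -- 2n = p² - q² : impossible by parity
      exfalso
      have s1 := sq_mod2 p
      have s2 := sq_mod2 q
      rcases hpqpar with ⟨h1,h2⟩|⟨h1,h2⟩ <;> omega
    · -- 2n = 2pq, v = p² - q²
      have hnpq : n = p*q := by linarith
      have hpnz : p ≠ 0 := by rintro rfl; rw [hnpq] at hn; simp at hn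
      have hqnz : q ≠ 0 := by rintro rfl; rw [hnpq] at hn; simp at hn
      have hw : p^4 + p^2*q^2 + q^4 = u^2 := by
        rw [hm', hnpq] at hu2
        linear_combination hu2
      have hbp : |p| < m := abs_lt_aux hm' hqnz
      have hbq : |q| < m := abs_lt_aux (p := q) (q := p) (by rw [hm']; ring) hpnz
      exact orient hpqgcd hpqpar hpnz hqnz hw hbp hbq


theorem no_solution_key_equation :
    ¬ ∃ m n h : ℤ, 0 < m ∧ 0 < n ∧ 0 < h ∧ IsCoprime m n ∧ 2 * n ^ 2 < m ^ 2 ∧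
      h ^ 2 = m ^ 4 - 5 * m ^ 2 * n ^ 2 + 4 * n ^ 4 := by
  rintro ⟨m, n, h, hm, hn, hh, hcop, hlt, heq⟩
  suffices H : ∀ M : ℕ, ∀ m n h : ℤ, m.natAbs ≤ M → 0 < m → 0 < n → 0 < h → IsCoprime m n →
      2 * n ^ 2 < m ^ 2 → h ^ 2 = m ^ 4 - 5 * m ^ 2 * n ^ 2 + 4 * n ^ 4 → False by
    exact H m.natAbs m n h le_rfl hm hn hh hcop hlt heq
  intro M
  induction M with
  | zero =>
    intro m n h hM hm hn hh hcop hlt heq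
    omega
  | succ M ih =>
    intro m n h hM hm hn hh hcop hlt heq
    obtain ⟨x, y, w, hx, hy, hxo, hye, hcxy, hquart, hxm, hym⟩ :=
      reduce m n h hm hn hh hcop hlt heq
    obtain ⟨m', n', h', hm', hn', hh', hcop', hlt', heq', hbound⟩ :=
      descent_step x y w hx hy hxo hye hcxy hquart
    have hlt2 : m' < m := lt_of_le_of_lt hbound (max_lt hxm hym)
    exact ih m' n' h' (by omega) hm' hn' hh' hcop' hlt' heq'
end
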